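/- arXiv:1008.4598 — 5 statements merged into one kernel-verified Lean document; each statement's English description precedes it below -/
import Mathlib

section
/- Let ℓ₁, ℓ₂, ℓ₃ be three lines in the real plane, pairwise non-parallel and not all passing through one point. Then the complement of ℓ₁ ∪ ℓ₂ ∪ ℓ₃ has exactly 7 connected components, exactly one of which is bounded, and that bounded component is the interior of the triangle with vertices the three pairwise intersection points. -/
open Set

/-- A line in the real plane `ℝ × ℝ`, given by the equation `a*x + b*y = c`
with `(a, b) ≠ (0, 0)`. -/
structure Line2 where
  a : ℝ
  b : ℝ
  c : ℝ
  nondeg : (a, b) ≠ (0, 0)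

/-- The set of points of a line. -/
def Line2.carrier (ℓ : Line2) : Set (ℝ × ℝ) :=
  {p | ℓ.a * p.1 + ℓ.b * p.2 = ℓ.c}

/-- Two lines are parallel if their normal vectors are proportional
(this includes the case of equal lines). -/
def Line2.Parallel (ℓ₁ ℓ₂ : Line2) : Prop :=
  ℓ₁.a * ℓ₂.b = ℓ₂.a * ℓ₁.b

/-- A simple arrangement: a finite set of lines, pairwise non-parallel,
no point on three (or more) of the lines. -/
def IsSimpleArrangement (L : Finset Line2) : Prop :=
  (∀ ℓ₁ ∈ L, ∀ ℓ₂ ∈ L, ℓ₁ ≠ ℓ₂ → ¬ Line2.Parallel ℓ₁ ℓ₂) ∧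
  (∀ ℓ₁ ∈ L, ∀ ℓ₂ ∈ L, ∀ ℓ₃ ∈ L, ℓ₁ ≠ ℓ₂ → ℓ₁ ≠ ℓ₃ → ℓ₂ ≠ ℓ₃ →
    ∀ p : ℝ × ℝ, ¬(p ∈ ℓ₁.carrier ∧ p ∈ ℓ₂.carrier ∧ p ∈ ℓ₃.carrier))

/-- The union of the lines of an arrangement. -/
def linesUnion (L : Finset Line2) : Set (ℝ × ℝ) := ⋃ ℓ ∈ L, ℓ.carrier

/-- A cell of the arrangement determined by a closed set `S` of "forbidden" points:
a connected component of the complement of `S`. -/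
def IsCellOf (S : Set (ℝ × ℝ)) (C : Set (ℝ × ℝ)) : Prop :=
  ∃ x, x ∉ S ∧ C = connectedComponentIn Sᶜ x

/-- A cell of a line arrangement: a connected component of the complement of the
union of the lines. -/
def IsCell (L : Finset Line2) (C : Set (ℝ × ℝ)) : Prop :=
  IsCellOf (linesUnion L) C

/-- A set is a (closed, nondegenerate) triangle. -/
def IsTriangleSet (T : Set (ℝ × ℝ)) : Prop :=
  ∃ u v w : ℝ × ℝ, ¬ Collinear ℝ ({u, v, w} : Set (ℝ × ℝ)) ∧
    T = convexHull ℝ ({u, v, w} : Set (ℝ × ℝ))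

/-- An edge of (the closure of) a polygonal region `P`: a maximal nondegenerate
segment contained in the frontier of `P`. -/
def IsEdge (P : Set (ℝ × ℝ)) (e : Set (ℝ × ℝ)) : Prop :=
  ∃ x y : ℝ × ℝ, x ≠ y ∧ e = segment ℝ x y ∧ e ⊆ frontier P ∧
    ∀ x' y' : ℝ × ℝ, e ⊆ segment ℝ x' y' → segment ℝ x' y' ⊆ frontier P →
      segment ℝ x' y' = e

lemma Line2.inter_unique {l m : Line2} (h : ¬ l.Parallel m) {p q : ℝ × ℝ}
    (hp : p ∈ l.carrier ∩ m.carrier) (hq : q ∈ l.carrier ∩ m.carrier) : p = q := by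
  have hD : l.a * m.b - m.a * l.b ≠ 0 := sub_ne_zero_of_ne h
  obtain ⟨hp1, hp2⟩ := hp
  obtain ⟨hq1, hq2⟩ := hq
  simp only [Line2.carrier, Set.mem_setOf_eq] at hp1 hp2 hq1 hq2
  have h1 : (l.a * m.b - m.a * l.b) * (p.1 - q.1) = 0 := by
    linear_combination m.b * (hp1 - hq1) - l.b * (hp2 - hq2)
  have h2 : (l.a * m.b - m.a * l.b) * (p.2 - q.2) = 0 := by
    linear_combination l.a * (hp2 - hq2) - m.a * (hp1 - hq1)
  have e1 : p.1 = q.1 := by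
    have := (mul_eq_zero.1 h1).resolve_left hD; linarith
  have e2 : p.2 = q.2 := by
    have := (mul_eq_zero.1 h2).resolve_left hD; linarith
  exact Prod.ext e1 e2

lemma convex_pos_comb {α β gx gy : ℝ} (hα : 0 ≤ α) (hβ : 0 ≤ β) (hs : α + β = 1)
    (hx : 0 < gx) (hy : 0 < gy) : 0 < α * gx + β * gy := by
  rcases hα.eq_or_lt with h | h
  · have : β = 1 := by linarith
    rw [← h, this]; simpa using hy
  · nlinarith [mul_nonneg hβ hy.le]

set_option maxHeartbeats 1000000 in
lemma cells_main (S : Set (ℝ × ℝ)) (f : Fin 3 → (ℝ × ℝ) → ℝ) (P : Fin 3 → ℝ × ℝ)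
    (hcont : ∀ i, Continuous (f i))
    (haff : ∀ i (x y : ℝ × ℝ) (α β : ℝ), α + β = 1 →
      f i (α • x + β • y) = α * f i x + β * f i y)
    (hS : ∀ x, x ∈ S ↔ ∃ i, f i x = 0)
    (hsum : ∀ x, f 0 x + f 1 x + f 2 x = 1)
    (hcomb : ∀ x, f 0 x • P 0 + f 1 x • P 1 + f 2 x • P 2 = x)
    (hind : AffineIndependent ℝ P) :
    ({C : Set (ℝ × ℝ) | IsCellOf S C}.ncard = 7 ∧
     {C : Set (ℝ × ℝ) | IsCellOf S C ∧ Bornology.IsBounded C}.ncard = 1 ∧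
     ∀ C : Set (ℝ × ℝ), IsCellOf S C → Bornology.IsBounded C →
       C = interior (convexHull ℝ ({P 0, P 1, P 2} : Set (ℝ × ℝ)))) := by
  -- the affine basis
  have htot : affineSpan ℝ (Set.range P) = ⊤ := by
    rw [hind.affineSpan_eq_top_iff_card_eq_finrank_add_one]
    simp
  set b : AffineBasis (Fin 3) ℝ (ℝ × ℝ) := ⟨P, hind, htot⟩ with hbdef
  have hb : ⇑b = P := rfl
  -- barycentric coordinates are the f i
  have hwc : ∀ (w : Fin 3 → ℝ), w 0 + w 1 + w 2 = 1 →
      (Finset.univ.affineCombination ℝ (⇑b) w) = w 0 • P 0 + w 1 • P 1 + w 2 • P 2 := by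
    intro w hw
    rw [Finset.affineCombination_eq_linear_combination _ _ _ (by simpa [Fin.sum_univ_three] using hw)]
    simp [Fin.sum_univ_three, hb]
  have hcoord : ∀ i x, b.coord i x = f i x := by
    intro i x
    have hw : (Finset.univ : Finset (Fin 3)).sum (fun j => f j x) = 1 := by
      simpa [Fin.sum_univ_three] using hsum x
    have hxc : (Finset.univ.affineCombination ℝ (⇑b) fun j => f j x) = x := by
      rw [hwc _ (by simpa [Fin.sum_univ_three] using hsum x)]
      exact hcomb x
    conv_lhs => rw [← hxc]
    rw [b.coord_apply_combination_of_mem (Finset.mem_univ i) hw]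
  have hne : ∀ (w : Fin 3 → ℝ), w 0 + w 1 + w 2 = 1 →
      ∀ i, f i (w 0 • P 0 + w 1 • P 1 + w 2 • P 2) = w i := by
    intro w hw i
    rw [← hcoord i, ← hwc w hw,
      b.coord_apply_combination_of_mem (Finset.mem_univ i) (by simpa [Fin.sum_univ_three] using hw)]
  -- cells
  set cell : (Fin 3 → Bool) → Set (ℝ × ℝ) :=
    fun ε => {x | ∀ i, if ε i then 0 < f i x else f i x < 0} with hcell
  have hopen : ∀ ε, IsOpen (cell ε) := by
    intro ε
    have : cell ε = ⋂ i, {x | if ε i then 0 < f i x else f i x < 0} := by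
      ext x; simp [hcell, Set.mem_iInter]
    rw [this]
    refine isOpen_iInter_of_finite fun i => ?_
    cases hε : ε i <;> simp only [hε, if_true, if_false, Bool.false_eq_true]
    · exact isOpen_lt (hcont i) continuous_const
    · exact isOpen_lt continuous_const (hcont i)
  have hconv : ∀ ε, Convex ℝ (cell ε) := by
    intro ε x hx y hy α β hα hβ hαβ
    intro i
    have hfi := haff i x y α β hαβ
    have hxi := hx i
    have hyi := hy i
    cases hε : ε i <;> simp only [hε, if_true, if_false, Bool.false_eq_true] at hxi hyi ⊢
    · rw [hfi]
      have := convex_pos_comb hα hβ hαβ (neg_pos.2 hxi) (neg_pos.2 hyi)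
      nlinarith
    · rw [hfi]
      exact convex_pos_comb hα hβ hαβ hxi hyi
  have hdisj : ∀ ε ε', ε ≠ ε' → ∀ x, x ∈ cell ε → x ∈ cell ε' → False := by
    intro ε ε' hne x hx hx'
    obtain ⟨i, hi⟩ := Function.ne_iff.1 hne
    have h1 := hx i
    have h2 := hx' i
    cases hε : ε i <;> cases hε' : ε' i <;>
      simp only [hε, hε', if_true, if_false, Bool.false_eq_true] at h1 h2 hi
    · exact hi rfl
    · linarith
    · linarith
    · exact hi rfl
  have hclass : ∀ x, x ∉ S → x ∈ cell (fun i => decide (0 < f i x)) := by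
    intro x hx i
    have hfx : f i x ≠ 0 := by
      intro h0; exact hx ((hS x).2 ⟨i, h0⟩)
    by_cases h0 : 0 < f i x
    · simp [h0]
    · have hd : decide (0 < f i x) = false := decide_eq_false h0
      simp only [hd, Bool.false_eq_true, if_false]
      exact lt_of_le_of_ne (not_lt.1 h0) hfx
  have hcellsub : ∀ ε, cell ε ⊆ Sᶜ := by
    intro ε x hx hxS
    obtain ⟨i, hi⟩ := (hS x).1 hxS
    have := hx i
    cases hε : ε i <;> simp only [hε, if_true, if_false, Bool.false_eq_true] at this <;> linarith
  have hcomp : ∀ ε x, x ∈ cell ε → connectedComponentIn Sᶜ x = cell ε := by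
    intro ε x hx
    have hxS : x ∈ Sᶜ := hcellsub ε hx
    apply Subset.antisymm
    · have hV : IsOpen (⋃ (ε') (_ : ε' ≠ ε), cell ε') :=
        isOpen_iUnion fun ε' => isOpen_iUnion fun _ => hopen ε'
      refine IsPreconnected.subset_left_of_subset_union (hopen ε) hV ?_ ?_ ?_
        (isPreconnected_connectedComponentIn)
      · rw [Set.disjoint_left]
        rintro a ha haV
        obtain ⟨ε', hε', ha'⟩ := by simpa using haV
        exact hdisj ε ε' (Ne.symm hε') a ha ha'
      · intro y hy
        have hyS : y ∉ S := (connectedComponentIn_subset _ _) hy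
        have hy' := hclass y hyS
        by_cases hεy : (fun i => decide (0 < f i y)) = ε
        · exact Or.inl (hεy ▸ hy')
        · exact Or.inr (Set.mem_iUnion₂.2 ⟨_, hεy, hy'⟩)
      · exact ⟨x, mem_connectedComponentIn hxS, hx⟩
    · exact ((hconv ε).isPreconnected).subset_connectedComponentIn hx (hcellsub ε)
  -- membership via weights
  have hwmem : ∀ ε (w : Fin 3 → ℝ), w 0 + w 1 + w 2 = 1 →
      (∀ i, if ε i then 0 < w i else w i < 0) →
      (w 0 • P 0 + w 1 • P 1 + w 2 • P 2) ∈ cell ε := by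
    intro ε w hw hsgn i
    have hv := hne w hw i
    have hs := hsgn i
    cases hε : ε i <;> simp only [hε, if_true, Bool.false_eq_true, if_false] at hs ⊢ <;>
      rw [hv] <;> exact hs
  have hwit : ∀ ε : Fin 3 → Bool, ε ≠ (fun _ => false) → ∃ x, x ∈ cell ε := by
    intro ε hε
    by_cases h0 : ε 0 = true <;> by_cases h1 : ε 1 = true <;> by_cases h2 : ε 2 = true
    · exact ⟨_, hwmem ε ![(1:ℝ)/3, 1/3, 1/3] (by norm_num [Matrix.cons_val_two])
        (fun i => by fin_cases i <;> simp [h0, h1, h2] <;> norm_num)⟩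
    · exact ⟨_, hwmem ε ![(1:ℝ), 1, -1] (by norm_num [Matrix.cons_val_two])
        (fun i => by fin_cases i <;>
          simp [h0, h1, Bool.eq_false_iff.2 h2, eq_false_of_ne_true h2] <;> norm_num)⟩
    · exact ⟨_, hwmem ε ![(1:ℝ), -1, 1] (by norm_num [Matrix.cons_val_two])
        (fun i => by fin_cases i <;> simp [h0, eq_false_of_ne_true h1, h2] <;> norm_num)⟩
    · exact ⟨_, hwmem ε ![(3:ℝ), -1, -1] (by norm_num [Matrix.cons_val_two])
        (fun i => by fin_cases i <;>
          simp [h0, eq_false_of_ne_true h1, eq_false_of_ne_true h2] <;> norm_num)⟩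
    · exact ⟨_, hwmem ε ![(-1:ℝ), 1, 1] (by norm_num [Matrix.cons_val_two])
        (fun i => by fin_cases i <;> simp [eq_false_of_ne_true h0, h1, h2] <;> norm_num)⟩
    · exact ⟨_, hwmem ε ![(-1:ℝ), 3, -1] (by norm_num [Matrix.cons_val_two])
        (fun i => by fin_cases i <;>
          simp [eq_false_of_ne_true h0, h1, eq_false_of_ne_true h2] <;> norm_num)⟩
    · exact ⟨_, hwmem ε ![(-1:ℝ), -1, 3] (by norm_num [Matrix.cons_val_two])
        (fun i => by fin_cases i <;>
          simp [eq_false_of_ne_true h0, eq_false_of_ne_true h1, h2] <;> norm_num)⟩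
    · exfalso
      apply hε
      funext i
      fin_cases i <;> simp [eq_false_of_ne_true h0, eq_false_of_ne_true h1,
        eq_false_of_ne_true h2]
  -- characterization of cells
  have hchar : {C : Set (ℝ × ℝ) | IsCellOf S C}
      = cell '' {ε : Fin 3 → Bool | ε ≠ (fun _ => false)} := by
    ext C
    constructor
    · rintro ⟨x, hxS, rfl⟩
      refine ⟨fun i => decide (0 < f i x), ?_, (hcomp _ x (hclass x hxS)).symm⟩
      intro hFF
      have hx' := hclass x hxS
      rw [hFF] at hx'
      have g0 := hx' 0
      have g1 := hx' 1
      have g2 := hx' 2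
      simp only [Bool.false_eq_true, if_false] at g0 g1 g2
      have := hsum x
      linarith
    · rintro ⟨ε, hε, rfl⟩
      obtain ⟨x, hx⟩ := hwit ε hε
      exact ⟨x, fun hxS => (hcellsub ε hx) hxS, (hcomp ε x hx).symm⟩
  have hinj : Set.InjOn cell {ε : Fin 3 → Bool | ε ≠ (fun _ => false)} := by
    intro ε hε ε' _ heq
    by_contra hne'
    obtain ⟨x, hx⟩ := hwit ε hε
    exact hdisj ε ε' hne' x hx (heq ▸ hx)
  have hcard7 : {C : Set (ℝ × ℝ) | IsCellOf S C}.ncard = 7 := by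
    rw [hchar, Set.ncard_image_of_injOn hinj]
    have : {ε : Fin 3 → Bool | ε ≠ (fun _ => false)}
        = ↑((Finset.univ : Finset (Fin 3 → Bool)).erase (fun _ => false)) := by
      ext ε; simp
    rw [this, Set.ncard_coe_finset]
    decide
  -- the bounded triangle cell
  have hrange : Set.range ⇑b = ({P 0, P 1, P 2} : Set (ℝ × ℝ)) := by
    rw [hb]
    ext y
    simp only [Set.mem_range, Set.mem_insert_iff, Set.mem_singleton_iff]
    constructor
    · rintro ⟨i, rfl⟩
      fin_cases i <;> simp
    · rintro (rfl | rfl | rfl)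
      exacts [⟨0, rfl⟩, ⟨1, rfl⟩, ⟨2, rfl⟩]
  have hTri : cell (fun _ => true) = interior (convexHull ℝ ({P 0, P 1, P 2} : Set (ℝ × ℝ))) := by
    rw [← hrange, b.interior_convexHull]
    ext x
    simp only [hcell, Set.mem_setOf_eq, if_true]
    constructor
    · intro h i; rw [hcoord]; exact h i
    · intro h i; rw [← hcoord]; exact h i
  have hTbdd : Bornology.IsBounded (cell (fun _ => true)) := by
    rw [hTri]
    refine Bornology.IsBounded.subset ?_ interior_subset
    rw [isBounded_convexHull]
    exact (Set.toFinite _).isBounded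
  -- unbounded cells
  have hu0 : ∀ d : Fin 3 → ℝ, d 0 + d 1 + d 2 = 0 →
      d 0 • P 0 + d 1 • P 1 + d 2 • P 2 = 0 → ∀ i, d i = 0 := by
    intro d hd hcomb0 i
    have hsum0 : (Finset.univ : Finset (Fin 3)).sum d = 0 := by
      simpa [Fin.sum_univ_three] using hd
    refine hind Finset.univ d hsum0 ?_ i (Finset.mem_univ i)
    rw [Finset.weightedVSub_eq_linear_combination _ hsum0]
    simpa [Fin.sum_univ_three] using hcomb0
  have hunbdd : ∀ ε : Fin 3 → Bool, ∀ w d : Fin 3 → ℝ, w 0 + w 1 + w 2 = 1 →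
      d 0 + d 1 + d 2 = 0 → (∃ j, d j ≠ 0) →
      (∀ t : ℝ, 0 ≤ t → ∀ i, if ε i then 0 < w i + t * d i else w i + t * d i < 0) →
      ¬ Bornology.IsBounded (cell ε) := by
    rintro ε w d hw hd ⟨j, hj⟩ hsgn hB
    set u : ℝ × ℝ := d 0 • P 0 + d 1 • P 1 + d 2 • P 2 with hudef
    have hu : u ≠ 0 := fun h => hj (hu0 d hd h j)
    set x0 : ℝ × ℝ := w 0 • P 0 + w 1 • P 1 + w 2 • P 2 with hx0def
    have hxt : ∀ t : ℝ, 0 ≤ t → (x0 + t • u) ∈ cell ε := by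
      intro t ht
      have hmem := hwmem ε (fun i => w i + t * d i)
        (by beta_reduce; linear_combination hw + t * hd) (fun i => hsgn t ht i)
      have heq : (w 0 + t * d 0) • P 0 + (w 1 + t * d 1) • P 1 + (w 2 + t * d 2) • P 2
          = x0 + t • u := by
        rw [hx0def, hudef]
        simp only [add_smul, mul_smul, smul_add]
        abel
      rw [← heq]
      exact hmem
    obtain ⟨R, hR⟩ := isBounded_iff_forall_norm_le.1 hB
    have hR0 : ‖x0‖ ≤ R := by
      have h00 := hxt 0 le_rfl
      have := hR _ h00
      simpa using this
    have hupos : 0 < ‖u‖ := norm_pos_iff.2 hu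
    set t : ℝ := (R + ‖x0‖ + 1) / ‖u‖ with htdef
    have ht : 0 ≤ t := by
      apply div_nonneg _ hupos.le
      have := norm_nonneg x0
      linarith
    have h1 : ‖x0 + t • u‖ ≤ R := hR _ (hxt t ht)
    have h2 : ‖t • u‖ ≤ ‖x0 + t • u‖ + ‖x0‖ := by
      calc ‖t • u‖ = ‖(x0 + t • u) - x0‖ := by congr 1; abel
      _ ≤ ‖x0 + t • u‖ + ‖x0‖ := norm_sub_le _ _
    have h3 : ‖t • u‖ = t * ‖u‖ := by
      rw [norm_smul, Real.norm_eq_abs, abs_of_nonneg ht]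
    have h4 : t * ‖u‖ = R + ‖x0‖ + 1 := div_mul_cancel₀ _ (ne_of_gt hupos)
    rw [h3, h4] at h2
    linarith
  have hbdd_iff : ∀ ε : Fin 3 → Bool, ε ≠ (fun _ => false) →
      Bornology.IsBounded (cell ε) → ε = (fun _ => true) := by
    intro ε hε hB
    by_contra hεt
    by_cases h0 : ε 0 = true <;> by_cases h1 : ε 1 = true <;> by_cases h2 : ε 2 = true
    · exact hεt (funext fun i => by fin_cases i <;> simp [h0, h1, h2])
    · exact hunbdd ε ![(1:ℝ), 1, -1] ![(1:ℝ), 1, -2] (by norm_num [Matrix.cons_val_two]) (by norm_num [Matrix.cons_val_two])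
        ⟨0, by norm_num⟩ (fun t ht i => by
          fin_cases i <;> simp [h0, h1, eq_false_of_ne_true h2] <;> nlinarith) hB
    · exact hunbdd ε ![(1:ℝ), -1, 1] ![(1:ℝ), -2, 1] (by norm_num [Matrix.cons_val_two]) (by norm_num [Matrix.cons_val_two])
        ⟨0, by norm_num⟩ (fun t ht i => by
          fin_cases i <;> simp [h0, eq_false_of_ne_true h1, h2] <;> nlinarith) hB
    · exact hunbdd ε ![(3:ℝ), -1, -1] ![(2:ℝ), -1, -1] (by norm_num [Matrix.cons_val_two]) (by norm_num [Matrix.cons_val_two])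
        ⟨0, by norm_num⟩ (fun t ht i => by
          fin_cases i <;> simp [h0, eq_false_of_ne_true h1, eq_false_of_ne_true h2] <;>
            nlinarith) hB
    · exact hunbdd ε ![(-1:ℝ), 1, 1] ![(-2:ℝ), 1, 1] (by norm_num [Matrix.cons_val_two]) (by norm_num [Matrix.cons_val_two])
        ⟨0, by norm_num⟩ (fun t ht i => by
          fin_cases i <;> simp [eq_false_of_ne_true h0, h1, h2] <;> nlinarith) hB
    · exact hunbdd ε ![(-1:ℝ), 3, -1] ![(-1:ℝ), 2, -1] (by norm_num [Matrix.cons_val_two]) (by norm_num [Matrix.cons_val_two])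
        ⟨0, by norm_num⟩ (fun t ht i => by
          fin_cases i <;> simp [eq_false_of_ne_true h0, h1, eq_false_of_ne_true h2] <;>
            nlinarith) hB
    · exact hunbdd ε ![(-1:ℝ), -1, 3] ![(-1:ℝ), -1, 2] (by norm_num [Matrix.cons_val_two]) (by norm_num [Matrix.cons_val_two])
        ⟨0, by norm_num⟩ (fun t ht i => by
          fin_cases i <;> simp [eq_false_of_ne_true h0, eq_false_of_ne_true h1, h2] <;>
            nlinarith) hB
    · exact hε (funext fun i => by fin_cases i <;>
        simp [eq_false_of_ne_true h0, eq_false_of_ne_true h1, eq_false_of_ne_true h2])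
  have htne : (fun _ : Fin 3 => true) ≠ (fun _ : Fin 3 => false) := by
    intro h; simpa using congrFun h 0
  have hbddset : {C : Set (ℝ × ℝ) | IsCellOf S C ∧ Bornology.IsBounded C}
      = {cell (fun _ => true)} := by
    ext C
    simp only [Set.mem_setOf_eq, Set.mem_singleton_iff]
    constructor
    · rintro ⟨hC, hCb⟩
      have hC' : C ∈ cell '' {ε : Fin 3 → Bool | ε ≠ (fun _ => false)} := by
        rw [← hchar]; exact hC
      obtain ⟨ε, hε, rfl⟩ := hC'
      rw [hbdd_iff ε hε hCb]
    · rintro rfl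
      refine ⟨?_, hTbdd⟩
      have : cell (fun _ => true) ∈ cell '' {ε : Fin 3 → Bool | ε ≠ (fun _ => false)} :=
        ⟨fun _ => true, htne, rfl⟩
      rw [← hchar] at this
      exact this
  refine ⟨hcard7, ?_, ?_⟩
  · rw [hbddset, Set.ncard_singleton]
  · intro C hC hCb
    have hC' : C ∈ cell '' {ε : Fin 3 → Bool | ε ≠ (fun _ => false)} := by
      rw [← hchar]; exact hC
    obtain ⟨ε, hε, rfl⟩ := hC'
    rw [hbdd_iff ε hε hCb]
    exact hTri

set_option maxHeartbeats 1000000 in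
/-- Three pairwise non-parallel lines with no common point split the plane into
exactly 7 cells, exactly one of which is bounded, and the bounded cell is the
interior of the triangle whose vertices are the three pairwise intersection
points. -/
theorem stmt5 (ℓ₁ ℓ₂ ℓ₃ : Line2)
    (h12 : ¬ Line2.Parallel ℓ₁ ℓ₂) (h13 : ¬ Line2.Parallel ℓ₁ ℓ₃)
    (h23 : ¬ Line2.Parallel ℓ₂ ℓ₃)
    (hconc : ¬ ∃ p : ℝ × ℝ, p ∈ ℓ₁.carrier ∧ p ∈ ℓ₂.carrier ∧ p ∈ ℓ₃.carrier) :
    {C : Set (ℝ × ℝ) |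
        IsCellOf (ℓ₁.carrier ∪ ℓ₂.carrier ∪ ℓ₃.carrier) C}.ncard = 7 ∧
    {C : Set (ℝ × ℝ) | IsCellOf (ℓ₁.carrier ∪ ℓ₂.carrier ∪ ℓ₃.carrier) C ∧
        Bornology.IsBounded C}.ncard = 1 ∧
    ∀ C : Set (ℝ × ℝ),
      IsCellOf (ℓ₁.carrier ∪ ℓ₂.carrier ∪ ℓ₃.carrier) C →
      Bornology.IsBounded C →
      ∀ v₁₂ v₁₃ v₂₃ : ℝ × ℝ,
        v₁₂ ∈ ℓ₁.carrier ∩ ℓ₂.carrier →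
        v₁₃ ∈ ℓ₁.carrier ∩ ℓ₃.carrier →
        v₂₃ ∈ ℓ₂.carrier ∩ ℓ₃.carrier →
        C = interior (convexHull ℝ ({v₁₂, v₁₃, v₂₃} : Set (ℝ × ℝ))) := by
  have hD12 : ℓ₁.a * ℓ₂.b - ℓ₂.a * ℓ₁.b ≠ 0 := sub_ne_zero_of_ne h12
  have hD13 : ℓ₁.a * ℓ₃.b - ℓ₃.a * ℓ₁.b ≠ 0 := sub_ne_zero_of_ne h13
  have hD23 : ℓ₂.a * ℓ₃.b - ℓ₃.a * ℓ₂.b ≠ 0 := sub_ne_zero_of_ne h23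
  set a1 := ℓ₁.a with ha1; set b1 := ℓ₁.b with hb1; set c1 := ℓ₁.c with hc1
  set a2 := ℓ₂.a with ha2; set b2 := ℓ₂.b with hb2; set c2 := ℓ₂.c with hc2
  set a3 := ℓ₃.a with ha3; set b3 := ℓ₃.b with hb3; set c3 := ℓ₃.c with hc3
  set f1 : ℝ × ℝ → ℝ := fun p => a1 * p.1 + b1 * p.2 - c1 with hf1
  set f2 : ℝ × ℝ → ℝ := fun p => a2 * p.1 + b2 * p.2 - c2 with hf2
  set f3 : ℝ × ℝ → ℝ := fun p => a3 * p.1 + b3 * p.2 - c3 with hf3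
  have hmem1 : ∀ p : ℝ × ℝ, p ∈ ℓ₁.carrier ↔ f1 p = 0 := by
    intro p; simp only [Line2.carrier, Set.mem_setOf_eq, hf1, sub_eq_zero]; exact Iff.rfl
  have hmem2 : ∀ p : ℝ × ℝ, p ∈ ℓ₂.carrier ↔ f2 p = 0 := by
    intro p; simp only [Line2.carrier, Set.mem_setOf_eq, hf2, sub_eq_zero]; exact Iff.rfl
  have hmem3 : ∀ p : ℝ × ℝ, p ∈ ℓ₃.carrier ↔ f3 p = 0 := by
    intro p; simp only [Line2.carrier, Set.mem_setOf_eq, hf3, sub_eq_zero]; exact Iff.rfl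
  set P1 : ℝ × ℝ := ((c2*b3 - c3*b2)/(a2*b3 - a3*b2), (a2*c3 - a3*c2)/(a2*b3 - a3*b2)) with hP1
  set P2 : ℝ × ℝ := ((c1*b3 - c3*b1)/(a1*b3 - a3*b1), (a1*c3 - a3*c1)/(a1*b3 - a3*b1)) with hP2
  set P3 : ℝ × ℝ := ((c1*b2 - c2*b1)/(a1*b2 - a2*b1), (a1*c2 - a2*c1)/(a1*b2 - a2*b1)) with hP3
  have hP1f2 : f2 P1 = 0 := by simp only [hf2, hP1]; field_simp (disch := grind); ring
  have hP1f3 : f3 P1 = 0 := by simp only [hf3, hP1]; field_simp (disch := grind); ring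
  have hP2f1 : f1 P2 = 0 := by simp only [hf1, hP2]; field_simp (disch := grind); ring
  have hP2f3 : f3 P2 = 0 := by simp only [hf3, hP2]; field_simp (disch := grind); ring
  have hP3f1 : f1 P3 = 0 := by simp only [hf1, hP3]; field_simp (disch := grind); ring
  have hP3f2 : f2 P3 = 0 := by simp only [hf2, hP3]; field_simp (disch := grind); ring
  set s1 : ℝ := f1 P1 with hs1def
  set s2 : ℝ := f2 P2 with hs2def
  set s3 : ℝ := f3 P3 with hs3def
  have hs1 : s1 ≠ 0 := by
    intro h
    exact hconc ⟨P1, (hmem1 P1).2 (hs1def ▸ h), (hmem2 P1).2 hP1f2, (hmem3 P1).2 hP1f3⟩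
  have hs2 : s2 ≠ 0 := by
    intro h
    exact hconc ⟨P2, (hmem1 P2).2 hP2f1, (hmem2 P2).2 (hs2def ▸ h), (hmem3 P2).2 hP2f3⟩
  have hs3 : s3 ≠ 0 := by
    intro h
    exact hconc ⟨P3, (hmem1 P3).2 hP3f1, (hmem2 P3).2 hP3f2, (hmem3 P3).2 (hs3def ▸ h)⟩
  have hEne : a3*(c1*b2 - c2*b1) + b3*(a1*c2 - a2*c1) - c3*(a1*b2 - a2*b1) ≠ 0 := by
    have h3 : s3 * (a1*b2 - a2*b1)
        = a3*(c1*b2 - c2*b1) + b3*(a1*c2 - a2*c1) - c3*(a1*b2 - a2*b1) := by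
      simp only [hs3def, hf3, hP3]; field_simp (disch := grind)
    rw [← h3]; exact mul_ne_zero hs3 hD12
  have hDet : (P2.1 - P1.1) * (P3.2 - P1.2) - (P3.1 - P1.1) * (P2.2 - P1.2) ≠ 0 := by
    have key : ((P2.1 - P1.1) * (P3.2 - P1.2) - (P3.1 - P1.1) * (P2.2 - P1.2)) *
        ((a1*b2 - a2*b1) * (a1*b3 - a3*b1) * (a2*b3 - a3*b2)) =
        -(a3*(c1*b2 - c2*b1) + b3*(a1*c2 - a2*c1) - c3*(a1*b2 - a2*b1))^2 := by
      simp only [hP1, hP2, hP3]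
      field_simp (disch := grind)
      ring
    intro h
    rw [h, zero_mul] at key
    exact (pow_ne_zero 2 hEne) (by linarith)
  -- affine independence
  have hncol : ¬ Collinear ℝ ({P1, P2, P3} : Set (ℝ × ℝ)) := by
    intro hc
    rw [collinear_iff_of_mem (Set.mem_insert P1 _)] at hc
    obtain ⟨v, hv⟩ := hc
    obtain ⟨r2, hr2⟩ := hv P2 (by simp)
    obtain ⟨r3, hr3⟩ := hv P3 (by simp)
    apply hDet
    have e2a : P2.1 - P1.1 = r2 * v.1 := by rw [hr2]; simp [Prod.fst_add]
    have e2b : P2.2 - P1.2 = r2 * v.2 := by rw [hr2]; simp [Prod.snd_add]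
    have e3a : P3.1 - P1.1 = r3 * v.1 := by rw [hr3]; simp [Prod.fst_add]
    have e3b : P3.2 - P1.2 = r3 * v.2 := by rw [hr3]; simp [Prod.snd_add]
    rw [e2a, e2b, e3a, e3b]; ring
  set Pv : Fin 3 → ℝ × ℝ := ![P1, P2, P3] with hPv
  have hind : AffineIndependent ℝ Pv := affineIndependent_iff_not_collinear_set.2 hncol
  have htot : affineSpan ℝ (Set.range Pv) = ⊤ := by
    rw [hind.affineSpan_eq_top_iff_card_eq_finrank_add_one]
    simp
  set b : AffineBasis (Fin 3) ℝ (ℝ × ℝ) := ⟨Pv, hind, htot⟩ with hbdef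
  have hb : ⇑b = Pv := rfl
  -- coordinates
  have hcsum : ∀ x : ℝ × ℝ, b.coord 0 x + b.coord 1 x + b.coord 2 x = 1 := by
    intro x
    have h := b.sum_coord_apply_eq_one x
    rw [Fin.sum_univ_three] at h
    exact h
  have hcx : ∀ x : ℝ × ℝ, b.coord 0 x • P1 + b.coord 1 x • P2 + b.coord 2 x • P3 = x := by
    intro x
    have h := b.affineCombination_coord_eq_self x
    rw [Finset.affineCombination_eq_linear_combination _ _ _ (b.sum_coord_apply_eq_one x)] at h
    simpa [Fin.sum_univ_three, hb, hPv] using h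
  have hc0 : ∀ x : ℝ × ℝ, b.coord 0 x = f1 x / s1 := by
    intro x
    rw [eq_div_iff hs1]
    have hcomb := hcx x
    have e : f1 (b.coord 0 x • P1 + b.coord 1 x • P2 + b.coord 2 x • P3)
        = b.coord 0 x * s1 := by
      simp only [hf1, hs1def, Prod.fst_add, Prod.snd_add, Prod.smul_fst, Prod.smul_snd,
        smul_eq_mul]
      have u2 : a1 * P2.1 + b1 * P2.2 - c1 = 0 := by
        have := hP2f1; simp only [hf1] at this; exact this
      have u3 : a1 * P3.1 + b1 * P3.2 - c1 = 0 := by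
        have := hP3f1; simp only [hf1] at this; exact this
      linear_combination (b.coord 1 x) * u2 + (b.coord 2 x) * u3 + c1 * (hcsum x)
    rw [hcomb] at e
    linarith [e]
  have hc1 : ∀ x : ℝ × ℝ, b.coord 1 x = f2 x / s2 := by
    intro x
    rw [eq_div_iff hs2]
    have hcomb := hcx x
    have e : f2 (b.coord 0 x • P1 + b.coord 1 x • P2 + b.coord 2 x • P3)
        = b.coord 1 x * s2 := by
      simp only [hf2, hs2def, Prod.fst_add, Prod.snd_add, Prod.smul_fst, Prod.smul_snd,
        smul_eq_mul]
      have u1 : a2 * P1.1 + b2 * P1.2 - c2 = 0 := by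
        have := hP1f2; simp only [hf2] at this; exact this
      have u3 : a2 * P3.1 + b2 * P3.2 - c2 = 0 := by
        have := hP3f2; simp only [hf2] at this; exact this
      linear_combination (b.coord 0 x) * u1 + (b.coord 2 x) * u3 + c2 * (hcsum x)
    rw [hcomb] at e
    linarith [e]
  have hc2 : ∀ x : ℝ × ℝ, b.coord 2 x = f3 x / s3 := by
    intro x
    rw [eq_div_iff hs3]
    have hcomb := hcx x
    have e : f3 (b.coord 0 x • P1 + b.coord 1 x • P2 + b.coord 2 x • P3)
        = b.coord 2 x * s3 := by
      simp only [hf3, hs3def, Prod.fst_add, Prod.snd_add, Prod.smul_fst, Prod.smul_snd,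
        smul_eq_mul]
      have u1 : a3 * P1.1 + b3 * P1.2 - c3 = 0 := by
        have := hP1f3; simp only [hf3] at this; exact this
      have u2 : a3 * P2.1 + b3 * P2.2 - c3 = 0 := by
        have := hP2f3; simp only [hf3] at this; exact this
      linear_combination (b.coord 0 x) * u1 + (b.coord 1 x) * u2 + c3 * (hcsum x)
    rw [hcomb] at e
    linarith [e]
  -- the normalized functionals as a family
  set g : Fin 3 → (ℝ × ℝ) → ℝ :=
    ![fun x => f1 x / s1, fun x => f2 x / s2, fun x => f3 x / s3] with hg
  have hg0 : ∀ x, g 0 x = f1 x / s1 := fun x => rfl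
  have hg1 : ∀ x, g 1 x = f2 x / s2 := fun x => rfl
  have hg2 : ∀ x, g 2 x = f3 x / s3 := fun x => rfl
  have hPv0 : Pv 0 = P1 := rfl
  have hPv1 : Pv 1 = P2 := rfl
  have hPv2 : Pv 2 = P3 := rfl
  have hcont : ∀ i, Continuous (g i) := by
    intro i
    fin_cases i
    · show Continuous (g 0)
      rw [show g 0 = fun x => f1 x / s1 from rfl, hf1]
      fun_prop
    · show Continuous (g 1)
      rw [show g 1 = fun x => f2 x / s2 from rfl, hf2]
      fun_prop
    · show Continuous (g 2)
      rw [show g 2 = fun x => f3 x / s3 from rfl, hf3]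
      fun_prop
  have haff : ∀ i (x y : ℝ × ℝ) (α β : ℝ), α + β = 1 →
      g i (α • x + β • y) = α * g i x + β * g i y := by
    intro i x y α β hαβ
    fin_cases i
    · show g 0 (α • x + β • y) = α * g 0 x + β * g 0 y
      simp only [hg0, hf1, Prod.smul_fst, Prod.smul_snd, Prod.fst_add, Prod.snd_add,
        smul_eq_mul]
      rw [← mul_div_assoc, ← mul_div_assoc, ← add_div]
      congr 1
      linear_combination c1 * hαβ
    · show g 1 (α • x + β • y) = α * g 1 x + β * g 1 y
      simp only [hg1, hf2, Prod.smul_fst, Prod.smul_snd, Prod.fst_add, Prod.snd_add,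
        smul_eq_mul]
      rw [← mul_div_assoc, ← mul_div_assoc, ← add_div]
      congr 1
      linear_combination c2 * hαβ
    · show g 2 (α • x + β • y) = α * g 2 x + β * g 2 y
      simp only [hg2, hf3, Prod.smul_fst, Prod.smul_snd, Prod.fst_add, Prod.snd_add,
        smul_eq_mul]
      rw [← mul_div_assoc, ← mul_div_assoc, ← add_div]
      congr 1
      linear_combination c3 * hαβ
  have hS : ∀ x, x ∈ (ℓ₁.carrier ∪ ℓ₂.carrier ∪ ℓ₃.carrier) ↔ ∃ i, g i x = 0 := by
    intro x
    constructor
    · rintro ((h | h) | h)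
      · refine ⟨0, ?_⟩
        rw [hg0, (hmem1 x).1 h, zero_div]
      · refine ⟨1, ?_⟩
        rw [hg1, (hmem2 x).1 h, zero_div]
      · refine ⟨2, ?_⟩
        rw [hg2, (hmem3 x).1 h, zero_div]
    · rintro ⟨i, hi⟩
      fin_cases i
      · have hi0 : f1 x / s1 = 0 := hi
        exact Or.inl (Or.inl ((hmem1 x).2 ((div_eq_zero_iff.1 hi0).resolve_right hs1)))
      · have hi1 : f2 x / s2 = 0 := hi
        exact Or.inl (Or.inr ((hmem2 x).2 ((div_eq_zero_iff.1 hi1).resolve_right hs2)))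
      · have hi2 : f3 x / s3 = 0 := hi
        exact Or.inr ((hmem3 x).2 ((div_eq_zero_iff.1 hi2).resolve_right hs3))
  have hsum' : ∀ x, g 0 x + g 1 x + g 2 x = 1 := by
    intro x
    rw [hg0, hg1, hg2, ← hc0 x, ← hc1 x, ← hc2 x]
    exact hcsum x
  have hcomb' : ∀ x, g 0 x • Pv 0 + g 1 x • Pv 1 + g 2 x • Pv 2 = x := by
    intro x
    rw [hg0, hg1, hg2, hPv0, hPv1, hPv2, ← hc0 x, ← hc1 x, ← hc2 x]
    exact hcx x
  obtain ⟨H1, H2, H3⟩ := cells_main (ℓ₁.carrier ∪ ℓ₂.carrier ∪ ℓ₃.carrier) g Pv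
    hcont haff hS hsum' hcomb' hind
  refine ⟨H1, H2, ?_⟩
  intro C hC hCb v12 v13 v23 hv12 hv13 hv23
  have hv12e : v12 = P3 :=
    Line2.inter_unique h12 hv12 ⟨(hmem1 P3).2 hP3f1, (hmem2 P3).2 hP3f2⟩
  have hv13e : v13 = P2 :=
    Line2.inter_unique h13 hv13 ⟨(hmem1 P2).2 hP2f1, (hmem3 P2).2 hP2f3⟩
  have hv23e : v23 = P1 :=
    Line2.inter_unique h23 hv23 ⟨(hmem2 P1).2 hP1f2, (hmem3 P1).2 hP1f3⟩
  rw [H3 C hC hCb, hv12e, hv13e, hv23e]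
  have hsets : ({Pv 0, Pv 1, Pv 2} : Set (ℝ × ℝ)) = {P3, P2, P1} := by
    rw [hPv0, hPv1, hPv2]
    ext y
    simp only [Set.mem_insert_iff, Set.mem_singleton_iff]
    tauto
  rw [hsets]
end

section
/- In a simple arrangement of n ≥ 3 lines in the real plane, every line of the arrangement is an edge-supporting line of at least one triangular bounded cell; that is, for every line ℓ in the arrangement there exists a bounded cell of the arrangement whose closure is a triangle having one side contained in ℓ. -/
open Set

namespace Stmt7Aux

/-- The affine functional attached to a line. -/
noncomputable def lf (m : Line2) (p : ℝ × ℝ) : ℝ := m.a * p.1 + m.b * p.2 - m.c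

lemma lf_eq_zero_iff {m : Line2} {p : ℝ × ℝ} : lf m p = 0 ↔ p ∈ m.carrier := by
  simp [lf, Line2.carrier, sub_eq_zero]

/-- Intersection point of two non-parallel lines. -/
noncomputable def ipt (m n : Line2) : ℝ × ℝ :=
  ((m.c * n.b - n.c * m.b) / (m.a * n.b - n.a * m.b),
   (m.a * n.c - n.a * m.c) / (m.a * n.b - n.a * m.b))

lemma ipt_mem_left {m n : Line2} (h : m.a * n.b - n.a * m.b ≠ 0) :
    ipt m n ∈ m.carrier := by
  show m.a * _ + m.b * _ = m.c
  simp only [ipt]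
  rw [mul_div_assoc', mul_div_assoc', ← add_div, div_eq_iff h]
  ring

lemma ipt_mem_right {m n : Line2} (h : m.a * n.b - n.a * m.b ≠ 0) :
    ipt m n ∈ n.carrier := by
  show n.a * _ + n.b * _ = n.c
  simp only [ipt]
  rw [mul_div_assoc', mul_div_assoc', ← add_div, div_eq_iff h]
  ring

lemma inter_unique {m n : Line2} (h : m.a * n.b - n.a * m.b ≠ 0) {p q : ℝ × ℝ}
    (hpm : p ∈ m.carrier) (hpn : p ∈ n.carrier)
    (hqm : q ∈ m.carrier) (hqn : q ∈ n.carrier) : p = q := by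
  have hpm' : m.a * p.1 + m.b * p.2 = m.c := hpm
  have hpn' : n.a * p.1 + n.b * p.2 = n.c := hpn
  have hqm' : m.a * q.1 + m.b * q.2 = m.c := hqm
  have hqn' : n.a * q.1 + n.b * q.2 = n.c := hqn
  have h1 : (p.1 - q.1) * (m.a * n.b - n.a * m.b) = 0 := by
    linear_combination n.b * hpm' - n.b * hqm' - m.b * hpn' + m.b * hqn'
  have h2 : (p.2 - q.2) * (m.a * n.b - n.a * m.b) = 0 := by
    linear_combination m.a * hpn' - m.a * hqn' - n.a * hpm' + n.a * hqm'
  have e1 : p.1 = q.1 := by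
    rcases mul_eq_zero.mp h1 with h' | h'
    · linarith [sub_eq_zero.mp h']
    · exact absurd h' h
  have e2 : p.2 = q.2 := by
    rcases mul_eq_zero.mp h2 with h' | h'
    · linarith [sub_eq_zero.mp h']
    · exact absurd h' h
  exact Prod.ext e1 e2

lemma lf_combo (m : Line2) (c₀ c₁ c₂ : ℝ) (u x y : ℝ × ℝ) (hsum : c₀ + c₁ + c₂ = 1) :
    lf m (c₀ • u + c₁ • x + c₂ • y) = c₀ * lf m u + c₁ * lf m x + c₂ * lf m y := by
  simp only [lf, Prod.fst_add, Prod.snd_add, Prod.smul_fst, Prod.smul_snd, smul_eq_mul]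
  linear_combination m.c * hsum

lemma lf_add_smul (m : Line2) (r : ℝ) (d x : ℝ × ℝ) :
    lf m (r • d + x) = r * (m.a * d.1 + m.b * d.2) + lf m x := by
  simp only [lf, Prod.fst_add, Prod.snd_add, Prod.smul_fst, Prod.smul_snd, smul_eq_mul]
  ring

lemma t_bounds {A B : ℝ} (h : A * B < 0) : 0 < B / (B - A) ∧ B / (B - A) < 1 := by
  rcases lt_trichotomy A 0 with hA | hA | hA
  · have hB : 0 < B := by nlinarith
    have hden : 0 < B - A := by linarith
    exact ⟨div_pos hB hden, (div_lt_one hden).mpr (by linarith)⟩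
  · rw [hA] at h; simp at h
  · have hB : B < 0 := by nlinarith
    have hden : (0:ℝ) < -(B - A) := by linarith
    constructor
    · have := div_pos (show (0:ℝ) < -B by linarith) hden
      rwa [neg_div_neg_eq] at this
    · have h2 : -B / -(B - A) < 1 := (div_lt_one hden).mpr (by linarith)
      rwa [neg_div_neg_eq] at h2

lemma cross_zero {A B : ℝ} (h : A * B < 0) :
    (B / (B - A)) * A + (1 - B / (B - A)) * B = 0 := by
  have hden : B - A ≠ 0 := by
    intro h0
    rw [sub_eq_zero] at h0
    subst h0
    nlinarith
  field_simp
  ring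

end Stmt7Aux

open Stmt7Aux in
set_option maxHeartbeats 2000000 in
/-- In a simple arrangement of `n ≥ 3` lines, every line of the arrangement is
adjacent to at least one triangular bounded cell. -/
theorem stmt7 (L : Finset Line2) (hL : IsSimpleArrangement L) (hn : 3 ≤ L.card) :
    ∀ ℓ ∈ L, ∃ C : Set (ℝ × ℝ), IsCell L C ∧ Bornology.IsBounded C ∧
      IsTriangleSet (closure C) ∧
      ∃ x y : ℝ × ℝ, x ≠ y ∧ segment ℝ x y ⊆ closure C ∧
        segment ℝ x y ⊆ ℓ.carrier := by
  classical
  intro ℓ hl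
  obtain ⟨hpar, htriple⟩ := hL
  -- non-parallel lines have nonzero "determinant"
  have np : ∀ m n : Line2, m ∈ L → n ∈ L → m ≠ n → m.a * n.b - n.a * m.b ≠ 0 := by
    intro m n hm hn hmn
    have := hpar m hm n hn hmn
    simpa [Line2.Parallel, sub_ne_zero] using this
  set E : Finset Line2 := L.erase ℓ with hE
  have hE2 : 1 < E.card := by
    have h' : E.card = L.card - 1 := by rw [hE]; exact Finset.card_erase_of_mem hl
    omega
  obtain ⟨m₁, hm₁, m₂, hm₂, hm₁₂⟩ := Finset.one_lt_card.mp hE2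
  set S : Finset (Line2 × Line2) := (E ×ˢ E).filter (fun pr => pr.1 ≠ pr.2) with hSdef
  have hS : S.Nonempty := by
    refine ⟨(m₁, m₂), ?_⟩
    simp only [hSdef, Finset.mem_filter, Finset.mem_product]
    exact ⟨⟨hm₁, hm₂⟩, hm₁₂⟩
  obtain ⟨⟨ℓ₁, ℓ₂⟩, hprS, hprmin⟩ :=
    Finset.exists_min_image S (fun pr => |lf ℓ (ipt pr.1 pr.2)|) hS
  simp only [hSdef, Finset.mem_filter, Finset.mem_product] at hprS
  obtain ⟨⟨hℓ₁E, hℓ₂E⟩, hℓ₁₂⟩ := hprS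
  have hℓ₁L : ℓ₁ ∈ L := Finset.mem_of_mem_erase hℓ₁E
  have hℓ₂L : ℓ₂ ∈ L := Finset.mem_of_mem_erase hℓ₂E
  have hℓ₁ℓ : ℓ₁ ≠ ℓ := Finset.ne_of_mem_erase hℓ₁E
  have hℓ₂ℓ : ℓ₂ ≠ ℓ := Finset.ne_of_mem_erase hℓ₂E
  set v : ℝ × ℝ := ipt ℓ₁ ℓ₂ with hvdef
  set x : ℝ × ℝ := ipt ℓ ℓ₁ with hxdef
  set y : ℝ × ℝ := ipt ℓ ℓ₂ with hydef
  have hd12 := np ℓ₁ ℓ₂ hℓ₁L hℓ₂L hℓ₁₂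
  have hd01 := np ℓ ℓ₁ hl hℓ₁L hℓ₁ℓ.symm
  have hd02 := np ℓ ℓ₂ hl hℓ₂L hℓ₂ℓ.symm
  have hvl1 : v ∈ ℓ₁.carrier := ipt_mem_left hd12
  have hvl2 : v ∈ ℓ₂.carrier := ipt_mem_right hd12
  have hxl : x ∈ ℓ.carrier := ipt_mem_left hd01
  have hxl1 : x ∈ ℓ₁.carrier := ipt_mem_right hd01
  have hyl : y ∈ ℓ.carrier := ipt_mem_left hd02
  have hyl2 : y ∈ ℓ₂.carrier := ipt_mem_right hd02
  -- the minimality property of `v`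
  have hmin : ∀ n₁ n₂ : Line2, n₁ ∈ E → n₂ ∈ E → n₁ ≠ n₂ → ∀ q : ℝ × ℝ,
      q ∈ n₁.carrier → q ∈ n₂.carrier → |lf ℓ v| ≤ |lf ℓ q| := by
    intro n₁ n₂ hn₁ hn₂ hne q hq₁ hq₂
    have hd := np n₁ n₂ (Finset.mem_of_mem_erase hn₁) (Finset.mem_of_mem_erase hn₂) hne
    have hq : q = ipt n₁ n₂ :=
      inter_unique hd hq₁ hq₂ (ipt_mem_left hd) (ipt_mem_right hd)
    rw [hq]
    refine hprmin (n₁, n₂) ?_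
    simp only [hSdef, Finset.mem_filter, Finset.mem_product]
    exact ⟨⟨hn₁, hn₂⟩, hne⟩
  -- key nonvanishing facts
  have hA : lf ℓ v ≠ 0 := by
    intro h
    exact htriple ℓ hl ℓ₁ hℓ₁L ℓ₂ hℓ₂L hℓ₁ℓ.symm hℓ₂ℓ.symm hℓ₁₂ v
      ⟨lf_eq_zero_iff.mp h, hvl1, hvl2⟩
  have hD1 : lf ℓ₁ y ≠ 0 := by
    intro h
    exact htriple ℓ hl ℓ₁ hℓ₁L ℓ₂ hℓ₂L hℓ₁ℓ.symm hℓ₂ℓ.symm hℓ₁₂ y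
      ⟨hyl, lf_eq_zero_iff.mp h, hyl2⟩
  have hD2 : lf ℓ₂ x ≠ 0 := by
    intro h
    exact htriple ℓ hl ℓ₁ hℓ₁L ℓ₂ hℓ₂L hℓ₁ℓ.symm hℓ₂ℓ.symm hℓ₁₂ x
      ⟨hxl, hxl1, lf_eq_zero_iff.mp h⟩
  have hxy : x ≠ y := by
    intro h
    exact htriple ℓ hl ℓ₁ hℓ₁L ℓ₂ hℓ₂L hℓ₁ℓ.symm hℓ₂ℓ.symm hℓ₁₂ x
      ⟨hxl, hxl1, h ▸ hyl2⟩
  have hlfx : lf ℓ x = 0 := lf_eq_zero_iff.mpr hxl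
  have hlfy : lf ℓ y = 0 := lf_eq_zero_iff.mpr hyl
  have hlf1v : lf ℓ₁ v = 0 := lf_eq_zero_iff.mpr hvl1
  have hlf1x : lf ℓ₁ x = 0 := lf_eq_zero_iff.mpr hxl1
  have hlf2v : lf ℓ₂ v = 0 := lf_eq_zero_iff.mpr hvl2
  have hlf2y : lf ℓ₂ y = 0 := lf_eq_zero_iff.mpr hyl2
  -- non-collinearity of the three vertices
  have hns : ¬ Collinear ℝ ({v, x, y} : Set (ℝ × ℝ)) := by
    intro hcol
    rw [collinear_iff_of_mem (show x ∈ ({v, x, y} : Set (ℝ × ℝ)) by simp)] at hcol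
    obtain ⟨d, hd⟩ := hcol
    obtain ⟨r, hr⟩ := hd v (by simp)
    obtain ⟨s, hs⟩ := hd y (by simp)
    rw [vadd_eq_add] at hr hs
    have hsne : s ≠ 0 := by
      intro h0
      rw [h0] at hs
      simp at hs
      exact hxy hs.symm
    have hy0 : s * (ℓ.a * d.1 + ℓ.b * d.2) + lf ℓ x = lf ℓ y := by rw [hs, lf_add_smul]
    have hk : ℓ.a * d.1 + ℓ.b * d.2 = 0 := by
      rw [hlfx, hlfy] at hy0
      rcases mul_eq_zero.mp (by linarith : s * (ℓ.a * d.1 + ℓ.b * d.2) = 0) with h' | h'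
      · exact absurd h' hsne
      · exact h'
    have hv0 : lf ℓ v = r * (ℓ.a * d.1 + ℓ.b * d.2) + lf ℓ x := by rw [hr, lf_add_smul]
    rw [hk, hlfx] at hv0
    simp at hv0
    exact hA hv0
  have hind : AffineIndependent ℝ ![v, x, y] := affineIndependent_iff_not_collinear_set.mpr hns
  have htot : affineSpan ℝ (Set.range ![v, x, y]) = ⊤ :=
    hind.affineSpan_eq_top_iff_card_eq_finrank_add_one.mpr (by simp)
  set bb : AffineBasis (Fin 3) ℝ (ℝ × ℝ) := ⟨![v, x, y], hind, htot⟩ with hbbdef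
  have hbb0 : bb 0 = v := rfl
  have hbb1 : bb 1 = x := rfl
  have hbb2 : bb 2 = y := rfl
  set T : Set (ℝ × ℝ) := convexHull ℝ (Set.range ⇑bb) with hTdef
  have hrange : Set.range ⇑bb = ({v, x, y} : Set (ℝ × ℝ)) := by
    show Set.range ![v, x, y] = _
    ext p
    simp [Matrix.range_cons, Matrix.range_empty]
    tauto
  -- barycentric representation
  have hsum : ∀ p : ℝ × ℝ, bb.coord 0 p + bb.coord 1 p + bb.coord 2 p = 1 := by
    intro p
    have := bb.sum_coord_apply_eq_one p
    rwa [Fin.sum_univ_three] at this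
  have hrep : ∀ p : ℝ × ℝ,
      (bb.coord 0 p) • v + (bb.coord 1 p) • x + (bb.coord 2 p) • y = p := by
    intro p
    have := bb.linear_combination_coord_eq_self p
    rwa [Fin.sum_univ_three, hbb0, hbb1, hbb2] at this
  have heval : ∀ m : Line2, ∀ p : ℝ × ℝ,
      lf m p = bb.coord 0 p * lf m v + bb.coord 1 p * lf m x + bb.coord 2 p * lf m y := by
    intro m p
    conv_lhs => rw [← hrep p]
    exact lf_combo m _ _ _ v x y (hsum p)
  have hflv : ∀ p : ℝ × ℝ, lf ℓ p = bb.coord 0 p * lf ℓ v := by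
    intro p; rw [heval ℓ p, hlfx, hlfy]; ring
  have hfl1 : ∀ p : ℝ × ℝ, lf ℓ₁ p = bb.coord 2 p * lf ℓ₁ y := by
    intro p; rw [heval ℓ₁ p, hlf1v, hlf1x]; ring
  have hfl2 : ∀ p : ℝ × ℝ, lf ℓ₂ p = bb.coord 1 p * lf ℓ₂ x := by
    intro p; rw [heval ℓ₂ p, hlf2v, hlf2y]; ring
  have hTint : interior T = {p | ∀ i, 0 < bb.coord i p} := bb.interior_convexHull
  have hTmem : T = {p | ∀ i, 0 ≤ bb.coord i p} := bb.convexHull_eq_nonneg_coord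
  -- the open triangle misses all the lines
  have hCsub : interior T ⊆ (linesUnion L)ᶜ := by
    intro p hp hpU
    have hp' : ∀ i, 0 < bb.coord i p := by rwa [hTint] at hp
    simp only [linesUnion, mem_iUnion] at hpU
    obtain ⟨m, hmL, hpm⟩ := hpU
    have h0 : lf m p = 0 := lf_eq_zero_iff.mpr hpm
    by_cases hmℓ : m = ℓ
    · subst hmℓ
      rw [hflv p] at h0
      rcases mul_eq_zero.mp h0 with h' | h'
      · exact (hp' 0).ne' h'
      · exact hA h'
    by_cases hm1 : m = ℓ₁
    · subst hm1
      rw [hfl1 p] at h0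
      rcases mul_eq_zero.mp h0 with h' | h'
      · exact (hp' 2).ne' h'
      · exact hD1 h'
    by_cases hm2 : m = ℓ₂
    · subst hm2
      rw [hfl2 p] at h0
      rcases mul_eq_zero.mp h0 with h' | h'
      · exact (hp' 1).ne' h'
      · exact hD2 h'
    -- the generic case: a fourth line through the open triangle
    have hmE : m ∈ E := Finset.mem_erase.mpr ⟨hmℓ, hmL⟩
    have hA' : lf m v ≠ 0 := by
      intro h
      exact htriple m hmL ℓ₁ hℓ₁L ℓ₂ hℓ₂L hm1 hm2 hℓ₁₂ v ⟨lf_eq_zero_iff.mp h, hvl1, hvl2⟩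
    have hB' : lf m x ≠ 0 := by
      intro h
      exact htriple m hmL ℓ hl ℓ₁ hℓ₁L hmℓ hm1 hℓ₁ℓ.symm x ⟨lf_eq_zero_iff.mp h, hxl, hxl1⟩
    have hC' : lf m y ≠ 0 := by
      intro h
      exact htriple m hmL ℓ hl ℓ₂ hℓ₂L hmℓ hm2 hℓ₂ℓ.symm y ⟨lf_eq_zero_iff.mp h, hyl, hyl2⟩
    have h0' : bb.coord 0 p * lf m v + bb.coord 1 p * lf m x + bb.coord 2 p * lf m y = 0 := by
      rw [← heval m p]; exact h0
    have hmix : lf m v * lf m x < 0 ∨ lf m v * lf m y < 0 := by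
      by_contra hcon
      push_neg at hcon
      obtain ⟨h1, h2⟩ := hcon
      have h3 : bb.coord 0 p * (lf m v * lf m v) + bb.coord 1 p * (lf m v * lf m x)
          + bb.coord 2 p * (lf m v * lf m y) = 0 := by linear_combination (lf m v) * h0'
      nlinarith [mul_pos (hp' 0) (mul_self_pos.mpr hA'), mul_nonneg (hp' 1).le h1,
        mul_nonneg (hp' 2).le h2]
    have habs : 0 < |lf ℓ v| := abs_pos.mpr hA
    rcases hmix with hm' | hm'
    · -- m crosses the segment from v to x (on ℓ₁)
      set t : ℝ := lf m x / (lf m x - lf m v) with htdef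
      obtain ⟨ht0, ht1⟩ := t_bounds hm'
      set q : ℝ × ℝ := t • v + (1 - t) • x + (0:ℝ) • y with hqdef
      have hsumq : t + (1 - t) + 0 = 1 := by ring
      have hqm : q ∈ m.carrier := by
        rw [← lf_eq_zero_iff, hqdef, lf_combo m _ _ _ v x y hsumq]
        have := cross_zero hm'
        rw [← htdef] at this
        linarith [this]
      have hql1 : q ∈ ℓ₁.carrier := by
        rw [← lf_eq_zero_iff, hqdef, lf_combo ℓ₁ _ _ _ v x y hsumq, hlf1v, hlf1x]
        ring
      have hle := hmin m ℓ₁ hmE hℓ₁E hm1 q hqm hql1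
      have hq_val : lf ℓ q = t * lf ℓ v := by
        rw [hqdef, lf_combo ℓ _ _ _ v x y hsumq, hlfx, hlfy]
        ring
      rw [hq_val, abs_mul, abs_of_pos ht0] at hle
      nlinarith
    · -- m crosses the segment from v to y (on ℓ₂)
      set t : ℝ := lf m y / (lf m y - lf m v) with htdef
      obtain ⟨ht0, ht1⟩ := t_bounds hm'
      set q : ℝ × ℝ := t • v + (0:ℝ) • x + (1 - t) • y with hqdef
      have hsumq : t + 0 + (1 - t) = 1 := by ring
      have hqm : q ∈ m.carrier := by
        rw [← lf_eq_zero_iff, hqdef, lf_combo m _ _ _ v x y hsumq]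
        have := cross_zero hm'
        rw [← htdef] at this
        linarith [this]
      have hql2 : q ∈ ℓ₂.carrier := by
        rw [← lf_eq_zero_iff, hqdef, lf_combo ℓ₂ _ _ _ v x y hsumq, hlf2v, hlf2y]
        ring
      have hle := hmin m ℓ₂ hmE hℓ₂E hm2 q hqm hql2
      have hq_val : lf ℓ q = t * lf ℓ v := by
        rw [hqdef, lf_combo ℓ _ _ _ v x y hsumq, hlfx, hlfy]
        ring
      rw [hq_val, abs_mul, abs_of_pos ht0] at hle
      nlinarith
  -- topology of the triangle
  have hTclosed : IsClosed T := (Set.finite_range _).isClosed_convexHull ℝ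
  have hTconv : Convex ℝ T := convex_convexHull ℝ _
  set q₀ : ℝ × ℝ := Finset.univ.centroid ℝ ⇑bb with hq₀def
  have hq₀ : q₀ ∈ interior T := bb.centroid_mem_interior_convexHull
  have hq₀' : q₀ ∈ (linesUnion L)ᶜ := hCsub hq₀
  -- closure of the open triangle is the closed triangle
  have hclosure : closure (interior T) = T := by
    apply Subset.antisymm
    · exact (closure_mono interior_subset).trans hTclosed.closure_eq.subset
    · intro p hp
      have htend : Filter.Tendsto (fun t : ℝ => (1 - t) • q₀ + t • p) (nhdsWithin 1 (Iio 1))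
          (nhds p) := by
        have hc : Continuous (fun t : ℝ => (1 - t) • q₀ + t • p) :=
          ((continuous_const.sub continuous_id).smul continuous_const).add
            (continuous_id.smul continuous_const)
        have := hc.tendsto 1
        simp only [sub_self, zero_smul, one_smul, zero_add] at this
        exact this.mono_left nhdsWithin_le_nhds
      refine mem_closure_of_tendsto htend ?_
      filter_upwards [Ioo_mem_nhdsLT_of_mem (show (1:ℝ) ∈ Ioc (0:ℝ) 1 from ⟨one_pos, le_rfl⟩)]
        with t ht
      exact hTconv.combo_interior_closure_mem_interior hq₀ (subset_closure hp)
        (by linarith [ht.2]) ht.1.le (by ring)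
  -- points of the closed triangle not in the interior lie on one of the three lines
  have hfr : ∀ p : ℝ × ℝ, p ∈ T → p ∉ interior T → p ∈ linesUnion L := by
    intro p hpT hpI
    have hnn : ∀ i, 0 ≤ bb.coord i p := by rwa [hTmem] at hpT
    rw [hTint] at hpI
    simp only [mem_setOf_eq, not_forall, not_lt] at hpI
    obtain ⟨i, hi⟩ := hpI
    have hi0 : bb.coord i p = 0 := le_antisymm hi (hnn i)
    have hmem : ∀ m : Line2, m ∈ L → p ∈ m.carrier → p ∈ linesUnion L := by
      intro m hm hpm
      simp only [linesUnion, mem_iUnion]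
      exact ⟨m, hm, hpm⟩
    fin_cases i
    · have hz : bb.coord 0 p = 0 := hi0
      exact hmem ℓ hl (lf_eq_zero_iff.mp (by rw [hflv p, hz, zero_mul]))
    · have hz : bb.coord 1 p = 0 := hi0
      exact hmem ℓ₂ hℓ₂L (lf_eq_zero_iff.mp (by rw [hfl2 p, hz, zero_mul]))
    · have hz : bb.coord 2 p = 0 := hi0
      exact hmem ℓ₁ hℓ₁L (lf_eq_zero_iff.mp (by rw [hfl1 p, hz, zero_mul]))
  -- the open triangle is a connected component of the complement
  have h1 : interior T ⊆ connectedComponentIn (linesUnion L)ᶜ q₀ :=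
    (hTconv.interior.isPreconnected).subset_connectedComponentIn hq₀ hCsub
  have h2 : connectedComponentIn (linesUnion L)ᶜ q₀ ⊆ interior T := by
    have hK := isPreconnected_connectedComponentIn
      (x := q₀) (F := (linesUnion L)ᶜ)
    refine IsPreconnected.subset_left_of_subset_union isOpen_interior
      hTclosed.isOpen_compl (disjoint_compl_right.mono_left interior_subset) ?_ ?_ hK
    · intro p hpK
      by_cases hpT : p ∈ T
      · by_cases hpI : p ∈ interior T
        · exact Or.inl hpI
        · exact absurd (hfr p hpT hpI) (connectedComponentIn_subset _ _ hpK)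
      · exact Or.inr hpT
    · exact ⟨q₀, mem_connectedComponentIn hq₀', hq₀⟩
  refine ⟨interior T, ⟨q₀, hq₀', Subset.antisymm h1 h2⟩, ?_, ?_, ?_⟩
  · exact (((Set.finite_range _).isCompact_convexHull ℝ).isBounded).subset interior_subset
  · refine ⟨v, x, y, hns, ?_⟩
    rw [hclosure, hTdef, hrange]
  · refine ⟨x, y, hxy, ?_, ?_⟩
    · rw [hclosure]
      exact hTconv.segment_subset (subset_convexHull ℝ _ (by rw [hrange]; simp))
        (subset_convexHull ℝ _ (by rw [hrange]; simp))
    · rintro p ⟨a, b2, ha, hb, hab, rfl⟩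
      have hxl' : ℓ.a * x.1 + ℓ.b * x.2 = ℓ.c := hxl
      have hyl' : ℓ.a * y.1 + ℓ.b * y.2 = ℓ.c := hyl
      show ℓ.a * (a • x + b2 • y).1 + ℓ.b * (a • x + b2 • y).2 = ℓ.c
      simp only [Prod.fst_add, Prod.snd_add, Prod.smul_fst, Prod.smul_snd, smul_eq_mul]
      linear_combination a * hxl' + b2 * hyl' + ℓ.c * hab
end

section
/- In a simple arrangement of lines in the real plane, no two triangular bounded cells share a common edge; that is, there do not exist two distinct bounded cells, both triangles, whose closures intersect in a nondegenerate segment. -/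
open Set

noncomputable section
namespace ArrAux

abbrev E2 := ℝ × ℝ

/-- affine function -/
def af (α β γ : ℝ) (p : E2) : ℝ := α * p.1 + β * p.2 + γ

lemma af_cont (α β γ : ℝ) : Continuous (af α β γ) := by
  unfold af; fun_prop

lemma af_line (α β γ t : ℝ) (x y : E2) :
    af α β γ (x + t • (y - x)) = af α β γ x + t * (af α β γ y - af α β γ x) := by
  simp only [af, Prod.fst_add, Prod.snd_add, Prod.smul_fst, Prod.smul_snd, Prod.fst_sub,
    Prod.snd_sub, smul_eq_mul]
  ring

lemma af_combo {a b : ℝ} (hab : a + b = 1) (α β γ : ℝ) (x y : E2) :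
    af α β γ (a • x + b • y) = a * af α β γ x + b * af α β γ y := by
  have hb : b = 1 - a := by linarith
  subst hb
  simp only [af, Prod.fst_add, Prod.snd_add, Prod.smul_fst, Prod.smul_snd, smul_eq_mul]
  ring

def lf (ℓ : Line2) : E2 → ℝ := af ℓ.a ℓ.b (-ℓ.c)

lemma mem_carrier_iff (ℓ : Line2) (p : E2) : p ∈ ℓ.carrier ↔ lf ℓ p = 0 := by
  simp only [Line2.carrier, lf, af, Set.mem_setOf_eq]
  constructor <;> intro h <;> linarith

lemma nondeg_sq {α β : ℝ} (h : (α, β) ≠ (0, 0)) : 0 < α ^ 2 + β ^ 2 := by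
  rcases lt_or_eq_of_le (by positivity : (0:ℝ) ≤ α ^ 2 + β ^ 2) with h' | h'
  · exact h'
  · exfalso; apply h
    have hα : α = 0 := by nlinarith
    have hβ : β = 0 := by nlinarith
    simp [hα, hβ]

/-- Two distinct common points force parallelism. -/
lemma parallel_of_two {ℓ₁ ℓ₂ : Line2} {p q : E2} (hpq : p ≠ q)
    (h1p : p ∈ ℓ₁.carrier) (h1q : q ∈ ℓ₁.carrier)
    (h2p : p ∈ ℓ₂.carrier) (h2q : q ∈ ℓ₂.carrier) : ℓ₁.Parallel ℓ₂ := by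
  simp only [Line2.carrier, Set.mem_setOf_eq] at h1p h1q h2p h2q
  have e1 : ℓ₁.a * (p.1 - q.1) + ℓ₁.b * (p.2 - q.2) = 0 := by linarith
  have e2 : ℓ₂.a * (p.1 - q.1) + ℓ₂.b * (p.2 - q.2) = 0 := by linarith
  have hd : p.1 - q.1 ≠ 0 ∨ p.2 - q.2 ≠ 0 := by
    by_contra h
    push_neg at h
    exact hpq (Prod.ext (by linarith [h.1]) (by linarith [h.2]))
  have c1 : (ℓ₁.a * ℓ₂.b - ℓ₂.a * ℓ₁.b) * (p.1 - q.1) = 0 := by linear_combination ℓ₂.b * e1 - ℓ₁.b * e2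
  have c2 : (ℓ₁.a * ℓ₂.b - ℓ₂.a * ℓ₁.b) * (p.2 - q.2) = 0 := by linear_combination (-ℓ₂.a) * e1 + ℓ₁.a * e2
  have : ℓ₁.a * ℓ₂.b - ℓ₂.a * ℓ₁.b = 0 := by
    rcases hd with hd | hd
    · exact (mul_eq_zero.1 c1).resolve_right hd
    · exact (mul_eq_zero.1 c2).resolve_right hd
  unfold Line2.Parallel
  linarith

lemma lines_eq_of_two {L : Finset Line2} (hL : IsSimpleArrangement L)
    {ℓ₁ ℓ₂ : Line2} (h1 : ℓ₁ ∈ L) (h2 : ℓ₂ ∈ L) {p q : E2} (hpq : p ≠ q)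
    (h1p : p ∈ ℓ₁.carrier) (h1q : q ∈ ℓ₁.carrier)
    (h2p : p ∈ ℓ₂.carrier) (h2q : q ∈ ℓ₂.carrier) : ℓ₁ = ℓ₂ := by
  by_contra hne
  exact hL.1 ℓ₁ h1 ℓ₂ h2 hne (parallel_of_two hpq h1p h1q h2p h2q)

/-- Points on the zero set of a nondegenerate affine map lie on a parametrized line. -/
lemma af_param {α β γ : ℝ} (hαβ : (α, β) ≠ (0, 0)) {x y w : E2} (hxy : x ≠ y)
    (hx : af α β γ x = 0) (hy : af α β γ y = 0) (hw : af α β γ w = 0) :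
    ∃ t : ℝ, w = x + t • (y - x) := by
  have hdnz : y.1 - x.1 ≠ 0 ∨ y.2 - x.2 ≠ 0 := by
    by_contra h
    push_neg at h
    exact hxy (Prod.ext (by linarith [h.1]) (by linarith [h.2])).symm
  have hD : 0 < (y.1 - x.1) ^ 2 + (y.2 - x.2) ^ 2 := by
    rcases hdnz with h | h
    · positivity
    · positivity
  have ed : α * (y.1 - x.1) + β * (y.2 - x.2) = 0 := by simp only [af] at hx hy; linarith
  have ee : α * (w.1 - x.1) + β * (w.2 - x.2) = 0 := by simp only [af] at hx hw; linarith
  have hcross : (w.1 - x.1) * (y.2 - x.2) - (w.2 - x.2) * (y.1 - x.1) = 0 := by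
    have hα : α * ((w.1 - x.1) * (y.2 - x.2) - (w.2 - x.2) * (y.1 - x.1)) = 0 := by
      linear_combination (y.2 - x.2) * ee - (w.2 - x.2) * ed
    have hβ : β * ((w.1 - x.1) * (y.2 - x.2) - (w.2 - x.2) * (y.1 - x.1)) = 0 := by
      linear_combination (-(y.1 - x.1)) * ee + (w.1 - x.1) * ed
    by_contra h
    have hα0 : α = 0 := (mul_eq_zero.1 hα).resolve_right h
    have hβ0 : β = 0 := (mul_eq_zero.1 hβ).resolve_right h
    exact hαβ (by simp [hα0, hβ0])
  refine ⟨((w.1 - x.1) * (y.1 - x.1) + (w.2 - x.2) * (y.2 - x.2)) / ((y.1 - x.1) ^ 2 + (y.2 - x.2) ^ 2), ?_⟩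
  have h1 : w.1 = x.1 + ((w.1 - x.1) * (y.1 - x.1) + (w.2 - x.2) * (y.2 - x.2)) / ((y.1 - x.1) ^ 2 + (y.2 - x.2) ^ 2) * (y.1 - x.1) := by
    field_simp
    linear_combination (y.2 - x.2) * hcross
  have h2 : w.2 = x.2 + ((w.1 - x.1) * (y.1 - x.1) + (w.2 - x.2) * (y.2 - x.2)) / ((y.1 - x.1) ^ 2 + (y.2 - x.2) ^ 2) * (y.2 - x.2) := by
    field_simp
    linear_combination (-(y.1 - x.1)) * hcross
  exact Prod.ext (by simpa using h1) (by simpa using h2)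

/-- Three points on the zero set of a nondegenerate affine map are collinear. -/
lemma af_collinear {α β γ : ℝ} (hαβ : (α, β) ≠ (0, 0)) {u v w : E2}
    (hu : af α β γ u = 0) (hv : af α β γ v = 0) (hw : af α β γ w = 0) :
    Collinear ℝ ({u, v, w} : Set E2) := by
  by_cases huv : u = v
  · subst huv
    have : ({u, u, w} : Set E2) = {u, w} := by
      ext z; simp only [Set.mem_insert_iff, Set.mem_singleton_iff]; tauto
    rw [this]
    exact collinear_pair ℝ u w
  · rw [collinear_iff_exists_forall_eq_smul_vadd]
    refine ⟨u, v - u, ?_⟩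
    intro p hp
    rcases hp with rfl | rfl | hp
    · exact ⟨0, by simp⟩
    · exact ⟨1, by simp⟩
    · rw [Set.mem_singleton_iff] at hp
      subst hp
      obtain ⟨t, ht⟩ := af_param hαβ huv hu hv hw
      exact ⟨t, by rw [ht]; simp [vadd_eq_add]; abel⟩

lemma cross_zero_collinear {u v w : E2}
    (h : (v.1 - u.1) * (w.2 - u.2) - (v.2 - u.2) * (w.1 - u.1) = 0) :
    Collinear ℝ ({u, v, w} : Set E2) := by
  by_cases huv : v = u
  · have he : ({u, v, w} : Set E2) = {u, w} := by
      rw [huv]; ext z; simp only [Set.mem_insert_iff, Set.mem_singleton_iff]; tauto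
    rw [he]
    exact collinear_pair ℝ u w
  · rw [collinear_iff_exists_forall_eq_smul_vadd]
    refine ⟨u, v - u, ?_⟩
    have hdnz : v.1 - u.1 ≠ 0 ∨ v.2 - u.2 ≠ 0 := by
      by_contra hc
      push_neg at hc
      exact huv (Prod.ext (by linarith [hc.1]) (by linarith [hc.2]))
    intro p hp
    rcases hp with rfl | rfl | hp
    · exact ⟨0, by simp⟩
    · refine ⟨1, ?_⟩
      have : (1 : ℝ) • (p - u) +ᵥ u = p := by simp [vadd_eq_add]
      exact this.symm
    · rw [Set.mem_singleton_iff] at hp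
      subst hp
      rcases hdnz with hd | hd
      · refine ⟨(p.1 - u.1) / (v.1 - u.1), ?_⟩
        have h1 : p.1 = (p.1 - u.1) / (v.1 - u.1) * (v.1 - u.1) + u.1 := by field_simp; ring
        have h2 : p.2 = (p.1 - u.1) / (v.1 - u.1) * (v.2 - u.2) + u.2 := by
          field_simp
          linear_combination h
        exact Prod.ext (by simpa using h1) (by simpa using h2)
      · refine ⟨(p.2 - u.2) / (v.2 - u.2), ?_⟩
        have h1 : p.1 = (p.2 - u.2) / (v.2 - u.2) * (v.1 - u.1) + u.1 := by
          field_simp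
          linear_combination -h
        have h2 : p.2 = (p.2 - u.2) / (v.2 - u.2) * (v.2 - u.2) + u.2 := by field_simp; ring
        exact Prod.ext (by simpa using h1) (by simpa using h2)

lemma noncollinear_ne {u v w : E2} (h : ¬ Collinear ℝ ({u, v, w} : Set E2)) : u ≠ v := by
  intro he
  subst he
  apply h
  have : ({u, u, w} : Set E2) = {u, w} := by
    ext z; simp only [Set.mem_insert_iff, Set.mem_singleton_iff]; tauto
  rw [this]
  exact collinear_pair ℝ u w

lemma noncollinear_cross {u v w : E2} (h : ¬ Collinear ℝ ({u, v, w} : Set E2)) :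
    (v.1 - u.1) * (w.2 - u.2) - (v.2 - u.2) * (w.1 - u.1) ≠ 0 :=
  fun hc => h (cross_zero_collinear hc)

lemma mem_triangle_iff {u v w z : E2} :
    z ∈ convexHull ℝ ({u, v, w} : Set E2) ↔ ∃ m ∈ segment ℝ v w, z ∈ segment ℝ u m := by
  have h1 : ({u, v, w} : Set E2) = insert u {v, w} := rfl
  rw [h1, convexHull_insert ⟨v, by simp⟩, convexHull_pair]
  simp [mem_convexJoin]

lemma mem_segment_iff' {x y z : E2} :
    z ∈ segment ℝ x y ↔ ∃ a b : ℝ, 0 ≤ a ∧ 0 ≤ b ∧ a + b = 1 ∧ a • x + b • y = z := by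
  rfl

lemma combo_pos {a b s t : ℝ} (ha : 0 ≤ a) (hb : 0 ≤ b) (hab : a + b = 1)
    (hs : 0 < s) (ht : 0 < t) : 0 < a * s + b * t := by
  have h1 : a * min s t ≤ a * s := mul_le_mul_of_nonneg_left (min_le_left _ _) ha
  have h2 : b * min s t ≤ b * t := mul_le_mul_of_nonneg_left (min_le_right _ _) hb
  have h3 : 0 < min s t := lt_min hs ht
  have h4 : a * min s t + b * min s t = min s t := by linear_combination (min s t) * hab
  linarith

/-- all vertices strictly positive: positive on the triangle -/
lemma tri_pos {α β γ : ℝ} {u v w : E2} (hu : 0 < af α β γ u) (hv : 0 < af α β γ v)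
    (hw : 0 < af α β γ w) {z : E2} (hz : z ∈ convexHull ℝ ({u, v, w} : Set E2)) :
    0 < af α β γ z := by
  rcases mem_triangle_iff.1 hz with ⟨m, hm, hzm⟩
  rcases hm with ⟨c, d, hc, hd, hcd, hm⟩
  rcases hzm with ⟨a, b, ha, hb, hab, hz'⟩
  have hfm : af α β γ m = c * af α β γ v + d * af α β γ w := by
    rw [← hm]; exact af_combo hcd α β γ v w
  have hfz : af α β γ z = a * af α β γ u + b * af α β γ m := by
    rw [← hz']; exact af_combo hab α β γ u m
  have hmpos : 0 < af α β γ m := by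
    rw [hfm]; exact combo_pos hc hd hcd hv hw
  rw [hfz]; exact combo_pos ha hb hab hu hmpos

/-- two positive vertices: zero only at the third -/
lemma tri_two_pos {α β γ : ℝ} {u v w : E2} (hu : 0 < af α β γ u) (hv : 0 < af α β γ v)
    (hw : af α β γ w = 0) {z : E2} (hz : z ∈ convexHull ℝ ({u, v, w} : Set E2))
    (hz0 : af α β γ z = 0) (hnn : ∀ p ∈ convexHull ℝ ({u, v, w} : Set E2), 0 ≤ af α β γ p) :
    z = w := by
  rcases mem_triangle_iff.1 hz with ⟨m, hm, hzm⟩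
  rcases hm with ⟨c, d, hc, hd, hcd, hmeq⟩
  rcases hzm with ⟨a, b, ha, hb, hab, hz'⟩
  have hfm : af α β γ m = c * af α β γ v + d * af α β γ w := by
    rw [← hmeq]; exact af_combo hcd α β γ v w
  have hfz : af α β γ z = a * af α β γ u + b * af α β γ m := by
    rw [← hz']; exact af_combo hab α β γ u m
  have hfm' : af α β γ m = c * af α β γ v := by rw [hfm, hw]; ring
  have hmnn : 0 ≤ af α β γ m := by nlinarith
  have ha0 : a = 0 := by nlinarith
  have hb1 : b = 1 := by linarith
  have hzm' : z = m := by rw [← hz', ha0, hb1]; simp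
  have hc0 : c = 0 := by
    subst hzm'
    nlinarith
  have hd1 : d = 1 := by linarith
  rw [hzm', ← hmeq, hc0, hd1]
  simp

/-- one positive vertex: zero set is the opposite edge -/
lemma tri_one_pos {α β γ : ℝ} {u v w : E2} (hu : 0 < af α β γ u) (hv : af α β γ v = 0)
    (hw : af α β γ w = 0) {z : E2} (hz : z ∈ convexHull ℝ ({u, v, w} : Set E2))
    (hz0 : af α β γ z = 0) : z ∈ segment ℝ v w := by
  rcases mem_triangle_iff.1 hz with ⟨m, hm, hzm⟩
  rcases hm with ⟨c, d, hc, hd, hcd, hmeq⟩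
  rcases hzm with ⟨a, b, ha, hb, hab, hz'⟩
  have hfm : af α β γ m = c * af α β γ v + d * af α β γ w := by
    rw [← hmeq]; exact af_combo hcd α β γ v w
  have hfm' : af α β γ m = 0 := by rw [hfm, hv, hw]; ring
  have hfz : af α β γ z = a * af α β γ u + b * af α β γ m := by
    rw [← hz']; exact af_combo hab α β γ u m
  have ha0 : a = 0 := by nlinarith
  have hb1 : b = 1 := by linarith
  have : z = m := by rw [← hz', ha0, hb1]; simp
  rw [this, ← hmeq]
  exact ⟨c, d, hc, hd, hcd, rfl⟩

lemma triple_perm_rot (u v w : E2) : ({u, v, w} : Set E2) = {v, w, u} := by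
  ext z; simp only [Set.mem_insert_iff, Set.mem_singleton_iff]; tauto

lemma triple_perm_swap (u v w : E2) : ({u, v, w} : Set E2) = {u, w, v} := by
  ext z; simp only [Set.mem_insert_iff, Set.mem_singleton_iff]; tauto

lemma triple_perm_swap12 (u v w : E2) : ({u, v, w} : Set E2) = {v, u, w} := by
  ext z; simp only [Set.mem_insert_iff, Set.mem_singleton_iff]; tauto

/-- Face extraction lemma. -/
lemma face_lemma {α β γ : ℝ} (hαβ : (α, β) ≠ (0, 0)) {u v w x y : E2}
    (hnc : ¬ Collinear ℝ ({u, v, w} : Set E2))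
    (hpos : ∀ z ∈ convexHull ℝ ({u, v, w} : Set E2), 0 ≤ af α β γ z)
    (hx : x ∈ convexHull ℝ ({u, v, w} : Set E2)) (hy : y ∈ convexHull ℝ ({u, v, w} : Set E2))
    (hxy : x ≠ y) (hfx : af α β γ x = 0) (hfy : af α β γ y = 0) :
    ∃ A B P : E2, ({u, v, w} : Set E2) = {A, B, P} ∧ af α β γ A = 0 ∧ af α β γ B = 0 ∧
      0 < af α β γ P ∧
      ∀ z ∈ convexHull ℝ ({u, v, w} : Set E2), af α β γ z = 0 → z ∈ segment ℝ A B := by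
  have hmemu : u ∈ convexHull ℝ ({u, v, w} : Set E2) := subset_convexHull ℝ _ (by simp)
  have hmemv : v ∈ convexHull ℝ ({u, v, w} : Set E2) := subset_convexHull ℝ _ (by simp)
  have hmemw : w ∈ convexHull ℝ ({u, v, w} : Set E2) := subset_convexHull ℝ _ (by simp)
  rcases (hpos u hmemu).eq_or_lt with hu | hu <;>
    rcases (hpos v hmemv).eq_or_lt with hv | hv <;>
    rcases (hpos w hmemw).eq_or_lt with hw | hw
  · exact absurd (af_collinear hαβ hu.symm hv.symm hw.symm) hnc
  · -- u=0, v=0, w>0 : A=u, B=v, P=w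
    have hp1 : ({u, v, w} : Set E2) = {w, u, v} := by
      ext z; simp only [Set.mem_insert_iff, Set.mem_singleton_iff]; tauto
    refine ⟨u, v, w, rfl, hu.symm, hv.symm, hw, fun z hz hz0 => ?_⟩
    rw [hp1] at hz
    exact tri_one_pos hw hu.symm hv.symm hz hz0
  · -- u=0, v>0, w=0 : A=u, B=w, P=v
    have hp1 : ({u, v, w} : Set E2) = {v, u, w} := by
      ext z; simp only [Set.mem_insert_iff, Set.mem_singleton_iff]; tauto
    have hp2 : ({u, v, w} : Set E2) = {u, w, v} := by
      ext z; simp only [Set.mem_insert_iff, Set.mem_singleton_iff]; tauto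
    refine ⟨u, w, v, hp2, hu.symm, hw.symm, hv, fun z hz hz0 => ?_⟩
    rw [hp1] at hz
    exact tri_one_pos hv hu.symm hw.symm hz hz0
  · -- u=0, v>0, w>0 : zero set is {u}
    exfalso
    have hp1 : ({u, v, w} : Set E2) = {v, w, u} := by
      ext z; simp only [Set.mem_insert_iff, Set.mem_singleton_iff]; tauto
    have hnn : ∀ p ∈ convexHull ℝ ({v, w, u} : Set E2), 0 ≤ af α β γ p := by
      intro p hp
      exact hpos p (by rw [hp1]; exact hp)
    have hxu : x = u := tri_two_pos hv hw hu.symm (by rw [← hp1]; exact hx) hfx hnn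
    have hyu : y = u := tri_two_pos hv hw hu.symm (by rw [← hp1]; exact hy) hfy hnn
    exact hxy (hxu.trans hyu.symm)
  · -- u>0, v=0, w=0 : A=v, B=w, P=u
    have hp1 : ({u, v, w} : Set E2) = {v, w, u} := by
      ext z; simp only [Set.mem_insert_iff, Set.mem_singleton_iff]; tauto
    exact ⟨v, w, u, hp1, hv.symm, hw.symm, hu, fun z hz hz0 => tri_one_pos hu hv.symm hw.symm hz hz0⟩
  · -- u>0, v=0, w>0 : zero set is {v}
    exfalso
    have hp1 : ({u, v, w} : Set E2) = {w, u, v} := by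
      ext z; simp only [Set.mem_insert_iff, Set.mem_singleton_iff]; tauto
    have hnn : ∀ p ∈ convexHull ℝ ({w, u, v} : Set E2), 0 ≤ af α β γ p := by
      intro p hp
      exact hpos p (by rw [hp1]; exact hp)
    have hxu : x = v := tri_two_pos hw hu hv.symm (by rw [← hp1]; exact hx) hfx hnn
    have hyu : y = v := tri_two_pos hw hu hv.symm (by rw [← hp1]; exact hy) hfy hnn
    exact hxy (hxu.trans hyu.symm)
  · -- u>0, v>0, w=0 : zero set is {w}
    exfalso
    have hxu : x = w := tri_two_pos hu hv hw.symm hx hfx hpos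
    have hyu : y = w := tri_two_pos hu hv hw.symm hy hfy hpos
    exact hxy (hxu.trans hyu.symm)
  · exact absurd (tri_pos hu hv hw hx) (by rw [hfx]; exact lt_irrefl 0)

/-! ### Cells -/

lemma linesUnion_closed (L : Finset Line2) : IsClosed (linesUnion L) := by
  apply Set.Finite.isClosed_biUnion (L.finite_toSet)
  intro ℓ _
  have hcar : ℓ.carrier = {p : E2 | ℓ.a * p.1 + ℓ.b * p.2 = ℓ.c} := rfl
  rw [hcar]
  exact isClosed_eq (by fun_prop) continuous_const

lemma cell_open {L : Finset Line2} {C : Set E2} (hC : IsCell L C) : IsOpen C := by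
  obtain ⟨x, hx, rfl⟩ := hC
  exact (linesUnion_closed L).isOpen_compl.connectedComponentIn

lemma cell_sub {L : Finset Line2} {C : Set E2} (hC : IsCell L C) : C ⊆ (linesUnion L)ᶜ := by
  obtain ⟨x, hx, rfl⟩ := hC
  exact connectedComponentIn_subset _ _

lemma cell_nonempty {L : Finset Line2} {C : Set E2} (hC : IsCell L C) : C.Nonempty := by
  obtain ⟨x, hx, rfl⟩ := hC
  exact ⟨x, mem_connectedComponentIn hx⟩

lemma cell_preconn {L : Finset Line2} {C : Set E2} (hC : IsCell L C) : IsPreconnected C := by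
  obtain ⟨x, hx, rfl⟩ := hC
  exact isPreconnected_connectedComponentIn

lemma cell_eq_of_mem {L : Finset Line2} {C₁ C₂ : Set E2} {z : E2} (h1 : IsCell L C₁)
    (h2 : IsCell L C₂) (hz1 : z ∈ C₁) (hz2 : z ∈ C₂) : C₁ = C₂ := by
  obtain ⟨x, hx, rfl⟩ := h1
  obtain ⟨y, hy, rfl⟩ := h2
  rw [connectedComponentIn_eq hz1, ← connectedComponentIn_eq hz2]

lemma mem_cell_of_closure {L : Finset Line2} {C : Set E2} (hC : IsCell L C) {z : E2}
    (hz : z ∈ closure C) (hzU : z ∉ linesUnion L) : z ∈ C := by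
  obtain ⟨x, hx, hCe⟩ := hC
  have hU : IsOpen (linesUnion L)ᶜ := (linesUnion_closed L).isOpen_compl
  have hzo : IsOpen (connectedComponentIn (linesUnion L)ᶜ z) := hU.connectedComponentIn
  have hzm : z ∈ connectedComponentIn (linesUnion L)ᶜ z := mem_connectedComponentIn hzU
  obtain ⟨w, hw1, hw2⟩ := mem_closure_iff.1 hz _ hzo hzm
  have heq : connectedComponentIn (linesUnion L)ᶜ z = C := by
    rw [hCe] at hw2 ⊢
    rw [connectedComponentIn_eq hw1]
    exact (connectedComponentIn_eq hw2).symm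
  rw [← heq]
  exact hzm

/-! ### Sign of a line on a cell -/

lemma cell_sign {L : Finset Line2} {C : Set E2} (hC : IsCell L C) {ℓ : Line2} (hℓ : ℓ ∈ L) :
    (∀ z ∈ C, 0 < lf ℓ z) ∨ (∀ z ∈ C, lf ℓ z < 0) := by
  have hne0 : ∀ z ∈ C, lf ℓ z ≠ 0 := by
    intro z hz h0
    have hmem : z ∈ linesUnion L := Set.mem_biUnion hℓ ((mem_carrier_iff ℓ z).2 h0)
    exact (cell_sub hC hz) hmem
  by_cases hall : ∀ z ∈ C, 0 < lf ℓ z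
  · exact Or.inl hall
  · push_neg at hall
    obtain ⟨p, hp, hple⟩ := hall
    right
    intro z hz
    rcases lt_or_ge (lf ℓ z) 0 with h | h
    · exact h
    · exfalso
      obtain ⟨r, hr, hr0⟩ := (cell_preconn hC).intermediate_value₂ hp hz
        ((af_cont ℓ.a ℓ.b (-ℓ.c)).continuousOn) continuousOn_const hple h
      exact hne0 r hr hr0

lemma sign_closure_nonneg {C : Set E2} {α β γ : ℝ}
    (h : ∀ z ∈ C, 0 < af α β γ z) : ∀ z ∈ closure C, 0 ≤ af α β γ z := by
  intro z hz
  have hcl : closure C ⊆ {p | 0 ≤ af α β γ p} :=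
    closure_minimal (fun p hp => (h p hp).le) (isClosed_le continuous_const (af_cont α β γ))
  exact hcl hz

/-! ### Pigeonhole: a segment inside the union of lines lies on one line -/

lemma segment_line {L : Finset Line2} {x y : E2} (hxy : x ≠ y)
    (hseg : segment ℝ x y ⊆ linesUnion L) :
    ∃ ℓ ∈ L, lf ℓ x = 0 ∧ lf ℓ y = 0 := by
  have hyx : y - x ≠ 0 := sub_ne_zero.mpr (Ne.symm hxy)
  have hmem : ∀ n : ℕ, x + ((1:ℝ) / (n + 2)) • (y - x) ∈ segment ℝ x y := by
    intro n
    have h0 : (0:ℝ) < (n:ℝ) + 2 := by positivity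
    have hb0 : (0:ℝ) ≤ 1/((n:ℝ)+2) := by positivity
    have hb1 : (1:ℝ)/((n:ℝ)+2) ≤ 1 := by
      rw [div_le_one h0]
      have : (0:ℝ) ≤ (n:ℝ) := Nat.cast_nonneg n
      linarith
    refine ⟨1 - 1/((n:ℝ)+2), 1/((n:ℝ)+2), by linarith, hb0, by ring, ?_⟩
    apply Prod.ext <;>
      simp only [Prod.fst_add, Prod.snd_add, Prod.smul_fst, Prod.smul_snd, Prod.fst_sub,
        Prod.snd_sub, smul_eq_mul] <;> ring
  have hch : ∀ n : ℕ, ∃ ℓ ∈ L, x + ((1:ℝ) / (n + 2)) • (y - x) ∈ ℓ.carrier := by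
    intro n
    have hin := hseg (hmem n)
    simpa [linesUnion, Set.mem_iUnion] using hin
  choose F hF1 hF2 using hch
  obtain ⟨n, -, m, -, hnm, hFnm⟩ := Finset.exists_ne_map_eq_of_card_lt_of_maps_to
      (s := Finset.range (L.card + 1)) (t := L) (by simp) (fun n _ => hF1 n)
  refine ⟨F n, hF1 n, ?_⟩
  have e1 : lf (F n) x + ((1:ℝ)/(n+2)) * (lf (F n) y - lf (F n) x) = 0 := by
    have h := (mem_carrier_iff (F n) _).1 (hF2 n)
    rwa [show lf (F n) (x + ((1:ℝ) / (n + 2)) • (y - x))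
        = lf (F n) x + ((1:ℝ)/(n+2)) * (lf (F n) y - lf (F n) x) from af_line _ _ _ _ x y] at h
  have e2 : lf (F n) x + ((1:ℝ)/(m+2)) * (lf (F n) y - lf (F n) x) = 0 := by
    have h := (mem_carrier_iff (F m) _).1 (hF2 m)
    rw [← hFnm] at h
    rwa [show lf (F n) (x + ((1:ℝ) / (m + 2)) • (y - x))
        = lf (F n) x + ((1:ℝ)/(m+2)) * (lf (F n) y - lf (F n) x) from af_line _ _ _ _ x y] at h
  have hb : ((1:ℝ)/(n+2)) ≠ ((1:ℝ)/(m+2)) := by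
    intro he
    apply hnm
    have hn0 : ((n:ℝ)+2) ≠ 0 := by positivity
    have hm0 : ((m:ℝ)+2) ≠ 0 := by positivity
    field_simp at he
    exact_mod_cast (show (n:ℝ) = m by linarith)
  have hfe : lf (F n) y = lf (F n) x := by
    by_contra hne
    apply hb
    have h3 : (((1:ℝ)/(n+2)) - ((1:ℝ)/(m+2))) * (lf (F n) y - lf (F n) x) = 0 := by
      linarith
    rcases mul_eq_zero.1 h3 with h4 | h4
    · linarith
    · exact absurd (by linarith : lf (F n) y = lf (F n) x) hne
  have hx0 : lf (F n) x = 0 := by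
    rw [hfe] at e1
    linarith
  exact ⟨hx0, by rw [hfe, hx0]⟩

/-! ### Edges of a triangular cell lie on lines -/

lemma convex_af_nonneg (α β γ : ℝ) : Convex ℝ {z : E2 | 0 ≤ af α β γ z} := by
  intro p hp q hq a b ha hb hab
  simp only [Set.mem_setOf_eq] at hp hq ⊢
  rw [af_combo hab]
  nlinarith [mul_nonneg ha hp, mul_nonneg hb hq]

lemma af_smul (c α β γ : ℝ) (p : E2) : af (c*α) (c*β) (c*γ) p = c * af α β γ p := by
  simp only [af]; ring

lemma not_in_cell_of_zero {L : Finset Line2} {C : Set E2} (hC : IsCell L C)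
    {α β γ : ℝ} (hαβ : (α, β) ≠ (0, 0))
    (hsub : C ⊆ {z : E2 | 0 ≤ af α β γ z}) {z : E2} (hz0 : af α β γ z = 0) : z ∉ C := by
  intro hzC
  obtain ⟨ε, hε, hball⟩ := Metric.isOpen_iff.1 (cell_open hC) z hzC
  have hnn : (0:ℝ) < ‖((α, β) : E2)‖ := by
    rw [norm_pos_iff]
    exact hαβ
  set t : ℝ := ε / (2 * ‖((α, β) : E2)‖) with ht_def
  have ht : 0 < t := by positivity
  have hmem : z - t • ((α, β) : E2) ∈ Metric.ball z ε := by
    rw [Metric.mem_ball, dist_eq_norm]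
    have he : z - t • ((α, β) : E2) - z = -(t • ((α, β) : E2)) := by abel
    rw [he, norm_neg, norm_smul]
    have : ‖t‖ = t := abs_of_pos ht
    rw [this]
    have : t * ‖((α, β) : E2)‖ = ε / 2 := by
      rw [ht_def]
      field_simp
    rw [this]
    linarith
  have h2 := hsub (hball hmem)
  simp only [Set.mem_setOf_eq] at h2
  have he2 : af α β γ (z - t • ((α, β) : E2)) = af α β γ z - t * (α^2 + β^2) := by
    simp only [af, Prod.fst_sub, Prod.snd_sub, Prod.smul_fst, Prod.smul_snd, smul_eq_mul]
    ring
  rw [he2, hz0] at h2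
  nlinarith [nondeg_sq hαβ]

lemma edge_subset_lines {L : Finset Line2} {C : Set E2} (hC : IsCell L C) {u v w : E2}
    (hnc : ¬ Collinear ℝ ({u, v, w} : Set E2))
    (hT : closure C = convexHull ℝ ({u, v, w} : Set E2)) :
    segment ℝ u v ⊆ linesUnion L := by
  have hcr := noncollinear_cross hnc
  have huv := noncollinear_ne hnc
  set α₀ := v.2 - u.2 with hα₀
  set β₀ := u.1 - v.1 with hβ₀
  set γ₀ := u.2 * v.1 - u.1 * v.2 with hγ₀
  have hKval : af α₀ β₀ γ₀ w = -((v.1 - u.1) * (w.2 - u.2) - (v.2 - u.2) * (w.1 - u.1)) := by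
    simp only [af, hα₀, hβ₀, hγ₀]; ring
  have hK : af α₀ β₀ γ₀ w ≠ 0 := by
    rw [hKval]; exact neg_ne_zero.mpr hcr
  set K := af α₀ β₀ γ₀ w with hKdef
  have hαβ : (K * α₀, K * β₀) ≠ ((0:ℝ), (0:ℝ)) := by
    intro h
    rw [Prod.mk.injEq] at h
    have h1 : α₀ = 0 := by
      rcases mul_eq_zero.1 h.1 with h' | h'
      · exact absurd h' hK
      · exact h'
    have h2 : β₀ = 0 := by
      rcases mul_eq_zero.1 h.2 with h' | h'
      · exact absurd h' hK
      · exact h'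
    apply huv
    rw [hα₀] at h1
    rw [hβ₀] at h2
    exact Prod.ext (by linarith) (by linarith)
  have hu0 : af (K*α₀) (K*β₀) (K*γ₀) u = 0 := by
    rw [af_smul]
    have : af α₀ β₀ γ₀ u = 0 := by simp only [af, hα₀, hβ₀, hγ₀]; ring
    rw [this, mul_zero]
  have hv0 : af (K*α₀) (K*β₀) (K*γ₀) v = 0 := by
    rw [af_smul]
    have : af α₀ β₀ γ₀ v = 0 := by simp only [af, hα₀, hβ₀, hγ₀]; ring
    rw [this, mul_zero]
  have hw0 : 0 ≤ af (K*α₀) (K*β₀) (K*γ₀) w := by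
    rw [af_smul, ← hKdef]
    exact mul_self_nonneg K
  have hhull : convexHull ℝ ({u, v, w} : Set E2) ⊆ {z : E2 | 0 ≤ af (K*α₀) (K*β₀) (K*γ₀) z} := by
    apply convexHull_min
    · rintro p (rfl | rfl | rfl)
      · exact le_of_eq hu0.symm
      · exact le_of_eq hv0.symm
      · exact hw0
    · exact convex_af_nonneg _ _ _
  have hmemu : u ∈ convexHull ℝ ({u, v, w} : Set E2) := subset_convexHull ℝ _ (by simp)
  have hmemv : v ∈ convexHull ℝ ({u, v, w} : Set E2) := subset_convexHull ℝ _ (by simp)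
  have hsegT : segment ℝ u v ⊆ closure C := by
    rw [hT]
    exact (convex_convexHull ℝ _).segment_subset hmemu hmemv
  intro z hz
  have hz0 : af (K*α₀) (K*β₀) (K*γ₀) z = 0 := by
    obtain ⟨a, b, ha, hb, hab, hzc⟩ := hz
    rw [← hzc, af_combo hab, hu0, hv0]
    ring
  have hzC : z ∉ C := by
    apply not_in_cell_of_zero hC hαβ _ hz0
    intro p hp
    exact hhull (by rw [← hT]; exact subset_closure hp)
  by_contra hzL
  exact hzC (mem_cell_of_closure hC (hsegT hz) hzL)

/-! ### Pushing off the line into the interior -/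

lemma af_mid (α β γ : ℝ) (x y : E2) :
    af α β γ ((1/2 : ℝ) • (x + y)) = (af α β γ x + af α β γ y) / 2 := by
  simp only [af, Prod.smul_fst, Prod.smul_snd, Prod.fst_add, Prod.snd_add, smul_eq_mul]
  ring

lemma near_mid {α β γ : ℝ} (hαβ : (α, β) ≠ (0, 0)) {x y w : E2} (hxy : x ≠ y)
    (hgx : af α β γ x = 0) (hgy : af α β γ y = 0) (hgw : af α β γ w = 0)
    (hd : dist w ((1/2 : ℝ) • (x + y)) < dist x y / 2) : w ∈ segment ℝ x y := by
  obtain ⟨t, rfl⟩ := af_param hαβ hxy hgx hgy hgw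
  have he : x + t • (y - x) - (1/2 : ℝ) • (x + y) = (t - 1/2) • (y - x) := by
    apply Prod.ext <;>
      simp only [Prod.fst_add, Prod.snd_add, Prod.fst_sub, Prod.snd_sub, Prod.smul_fst,
        Prod.smul_snd, smul_eq_mul] <;> ring
  rw [dist_eq_norm, he, norm_smul] at hd
  have hyx : dist x y = ‖y - x‖ := by rw [dist_eq_norm, norm_sub_rev]
  rw [hyx] at hd
  have hnz : 0 < ‖y - x‖ := by
    rw [norm_pos_iff]
    exact sub_ne_zero.mpr (Ne.symm hxy)
  have habs : |t - 1/2| < 1/2 := by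
    by_contra h
    push_neg at h
    have h2 : (1/2) * ‖y - x‖ ≤ ‖t - 1/2‖ * ‖y - x‖ :=
      mul_le_mul_of_nonneg_right (by rwa [Real.norm_eq_abs]) hnz.le
    linarith
  obtain ⟨hl, hr⟩ := abs_lt.1 habs
  refine ⟨1 - t, t, by linarith, by linarith, by ring, ?_⟩
  apply Prod.ext <;>
    simp only [Prod.fst_add, Prod.snd_add, Prod.fst_sub, Prod.snd_sub, Prod.smul_fst,
      Prod.smul_snd, smul_eq_mul] <;> ring

lemma af_z_zero {α β γ : ℝ} {r q : E2} (hq : af α β γ q ≠ 0)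
    (h2 : 1 - af α β γ r / af α β γ q ≠ 0) :
    af α β γ ((1 - af α β γ r / af α β γ q)⁻¹ • (r - (af α β γ r / af α β γ q) • q)) = 0 := by
  set μ := af α β γ r / af α β γ q with hμ
  set Z := (1 - μ)⁻¹ • (r - μ • q) with hZdef
  have hcombo : (1 - μ) • Z + μ • q = r := by
    rw [hZdef, smul_smul, mul_inv_cancel₀ h2, one_smul]
    abel
  have h3 : af α β γ ((1 - μ) • Z + μ • q) = (1 - μ) * af α β γ Z + μ * af α β γ q :=
    af_combo (by ring) α β γ Z q
  rw [hcombo] at h3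
  have h4 : μ * af α β γ q = af α β γ r := by
    rw [hμ]
    exact div_mul_cancel₀ _ hq
  have h5 : (1 - μ) * af α β γ Z = 0 := by linarith
  exact (mul_eq_zero.1 h5).resolve_left h2

lemma push_interior {α β γ : ℝ} (hαβ : (α, β) ≠ (0, 0)) {T : Set E2} (hconv : Convex ℝ T)
    {x y q : E2} (hxT : x ∈ T) (hyT : y ∈ T) (hqT : q ∈ T) (hxy : x ≠ y)
    (hgx : af α β γ x = 0) (hgy : af α β γ y = 0) (hq : 0 < af α β γ q) :
    ∃ ε > 0, ∀ r : E2, dist r ((1/2 : ℝ) • (x + y)) < ε → 0 < af α β γ r → r ∈ interior T := by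
  have hgp : af α β γ ((1/2 : ℝ) • (x + y)) = 0 := by
    rw [af_mid, hgx, hgy]
    ring
  have hdxy : 0 < dist x y := dist_pos.2 hxy
  set Z : E2 → E2 :=
    fun r => (1 - af α β γ r / af α β γ q)⁻¹ • (r - (af α β γ r / af α β γ q) • q) with hZ
  have hWopen : IsOpen {r : E2 | af α β γ r < af α β γ q} :=
    isOpen_lt (af_cont α β γ) continuous_const
  have hcont : ContinuousOn Z {r : E2 | af α β γ r < af α β γ q} := by
    rw [hZ]
    apply ContinuousOn.fun_smul
    · apply ContinuousOn.inv₀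
      · exact continuousOn_const.sub ((af_cont α β γ).continuousOn.div_const _)
      · intro r hr
        simp only [Set.mem_setOf_eq] at hr
        have hlt : af α β γ r / af α β γ q < 1 := (div_lt_one hq).2 hr
        intro h0
        rw [sub_eq_zero] at h0
        exact absurd h0.symm (ne_of_lt hlt)
    · exact continuousOn_id.sub (((af_cont α β γ).continuousOn.div_const _).smul continuousOn_const)
  set O : Set E2 := {r : E2 | af α β γ r < af α β γ q} ∩
      Z ⁻¹' (Metric.ball ((1/2 : ℝ) • (x + y)) (dist x y / 2)) with hO
  have hOopen : IsOpen O := hcont.isOpen_inter_preimage hWopen Metric.isOpen_ball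
  have hpO : ((1/2 : ℝ) • (x + y)) ∈ O := by
    constructor
    · simp only [Set.mem_setOf_eq, hgp]
      exact hq
    · simp only [Set.mem_preimage, hZ, hgp]
      norm_num
      exact hxy
  obtain ⟨ε, hε, hball⟩ := Metric.isOpen_iff.1 hOopen _ hpO
  refine ⟨ε, hε, fun r hrd hr0 => ?_⟩
  have hsub : O ∩ {r : E2 | 0 < af α β γ r} ⊆ T := by
    rintro s ⟨⟨hs1, hs2⟩, hs3⟩
    simp only [Set.mem_setOf_eq] at hs1 hs3
    have hμ0 : 0 < af α β γ s / af α β γ q := div_pos hs3 hq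
    have hμ1 : af α β γ s / af α β γ q < 1 := (div_lt_one hq).2 hs1
    have h1μ : 1 - af α β γ s / af α β γ q ≠ 0 := by
      intro h0
      rw [sub_eq_zero] at h0
      exact absurd h0.symm (ne_of_lt hμ1)
    have hZ0 : af α β γ (Z s) = 0 := af_z_zero hq.ne' h1μ
    have hZseg : Z s ∈ segment ℝ x y := by
      apply near_mid hαβ hxy hgx hgy hZ0
      simpa [Metric.mem_ball] using hs2
    have hZT : Z s ∈ T := hconv.segment_subset hxT hyT hZseg
    have hcombo : (1 - af α β γ s / af α β γ q) • (Z s) + (af α β γ s / af α β γ q) • q = s := by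
      rw [hZ]
      simp only
      rw [smul_smul, mul_inv_cancel₀ h1μ, one_smul]
      abel
    rw [← hcombo]
    exact hconv hZT hqT (by linarith) (by linarith) (by ring)
  have hrO : r ∈ O := hball hrd
  exact interior_maximal hsub (hOopen.inter (isOpen_lt continuous_const (af_cont α β γ)))
    ⟨hrO, hr0⟩

/-! ### Case of triangles on the same side -/

lemma same_sign_case {L : Finset Line2} {C₁ C₂ : Set E2} (h1 : IsCell L C₁) (h2 : IsCell L C₂)
    (hne : C₁ ≠ C₂) (hcv1 : Convex ℝ (closure C₁)) (hcv2 : Convex ℝ (closure C₂))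
    {α β γ : ℝ} (hαβ : (α, β) ≠ (0, 0)) {x y : E2} (hxy : x ≠ y)
    (hx1 : x ∈ closure C₁) (hy1 : y ∈ closure C₁) (hx2 : x ∈ closure C₂) (hy2 : y ∈ closure C₂)
    (hgx : af α β γ x = 0) (hgy : af α β γ y = 0)
    (hs1 : ∀ z ∈ C₁, 0 < af α β γ z) (hs2 : ∀ z ∈ C₂, 0 < af α β γ z) : False := by
  obtain ⟨q₁, hq₁⟩ := cell_nonempty h1
  obtain ⟨q₂, hq₂⟩ := cell_nonempty h2
  obtain ⟨ε₁, hε₁, hp1⟩ :=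
    push_interior hαβ hcv1 hx1 hy1 (subset_closure hq₁) hxy hgx hgy (hs1 q₁ hq₁)
  obtain ⟨ε₂, hε₂, hp2⟩ :=
    push_interior hαβ hcv2 hx2 hy2 (subset_closure hq₂) hxy hgx hgy (hs2 q₂ hq₂)
  have hnn : (0:ℝ) < ‖((α, β) : E2)‖ := by
    rw [norm_pos_iff]
    exact hαβ
  have hgp : af α β γ ((1/2 : ℝ) • (x + y)) = 0 := by
    rw [af_mid, hgx, hgy]
    ring
  set t := min ε₁ ε₂ / (2 * ‖((α, β) : E2)‖) with htdef
  have hminpos : 0 < min ε₁ ε₂ := lt_min hε₁ hε₂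
  have ht : 0 < t := by positivity
  set r₀ := ((1/2 : ℝ) • (x + y)) + t • ((α, β) : E2) with hr₀
  have hdist : dist r₀ ((1/2 : ℝ) • (x + y)) < min ε₁ ε₂ := by
    rw [dist_eq_norm]
    have he : r₀ - ((1/2 : ℝ) • (x + y)) = t • ((α, β) : E2) := by
      rw [hr₀]
      abel
    rw [he, norm_smul, Real.norm_eq_abs, abs_of_pos ht]
    have he2 : t * ‖((α, β) : E2)‖ = min ε₁ ε₂ / 2 := by
      rw [htdef]
      field_simp
    rw [he2]
    linarith
  have hg0 : 0 < af α β γ r₀ := by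
    have he : af α β γ r₀ = af α β γ ((1/2 : ℝ) • (x + y)) + t * (α^2 + β^2) := by
      simp only [hr₀, af, Prod.fst_add, Prod.snd_add, Prod.smul_fst, Prod.smul_snd, smul_eq_mul]
      ring
    rw [he, hgp]
    have := nondeg_sq hαβ
    nlinarith
  have hr01 : r₀ ∈ interior (closure C₁) :=
    hp1 r₀ (lt_of_lt_of_le hdist (min_le_left _ _)) hg0
  have hr02 : r₀ ∈ interior (closure C₂) :=
    hp2 r₀ (lt_of_lt_of_le hdist (min_le_right _ _)) hg0
  obtain ⟨s, hs, hsC2⟩ := mem_closure_iff.1 (interior_subset hr02) _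
    (isOpen_interior.inter isOpen_interior) ⟨hr01, hr02⟩
  have hsU : s ∉ linesUnion L := fun h => (cell_sub h2 hsC2) h
  have hsC1 : s ∈ C₁ := mem_cell_of_closure h1 (interior_subset hs.1) hsU
  exact hne (cell_eq_of_mem h1 h2 hsC1 hsC2)

/-! ### Opposite sides -/

lemma lf_line (ℓ : Line2) (t : ℝ) (x y : E2) :
    lf ℓ (x + t • (y - x)) = lf ℓ x + t * (lf ℓ y - lf ℓ x) := af_line _ _ _ _ x y

lemma lf_neg (ℓ : Line2) (z : E2) : af (-ℓ.a) (-ℓ.b) (ℓ.c) z = - lf ℓ z := by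
  simp only [af, lf]
  ring

lemma sign_closure_nonpos {C : Set E2} {α β γ : ℝ}
    (h : ∀ z ∈ C, af α β γ z < 0) : ∀ z ∈ closure C, af α β γ z ≤ 0 := by
  intro z hz
  have hcl : closure C ⊆ {p | af α β γ p ≤ 0} :=
    closure_minimal (fun p hp => (h p hp).le) (isClosed_le (af_cont α β γ) continuous_const)
  exact hcl hz

lemma pt_inj {x y : E2} (hxy : x ≠ y) {s t : ℝ}
    (h : x + s • (y - x) = x + t • (y - x)) : s = t := by
  have h1 : (s - t) * (y.1 - x.1) = 0 := by
    have := congrArg Prod.fst h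
    simp only [Prod.fst_add, Prod.smul_fst, Prod.fst_sub, smul_eq_mul] at this
    linarith
  have h2 : (s - t) * (y.2 - x.2) = 0 := by
    have := congrArg Prod.snd h
    simp only [Prod.snd_add, Prod.smul_snd, Prod.snd_sub, smul_eq_mul] at this
    linarith
  have hd : y.1 - x.1 ≠ 0 ∨ y.2 - x.2 ≠ 0 := by
    by_contra hc
    push_neg at hc
    exact hxy (Prod.ext (by linarith [hc.1]) (by linarith [hc.2])).symm
  rcases hd with hd | hd
  · have := (mul_eq_zero.1 h1).resolve_right hd
    linarith
  · have := (mul_eq_zero.1 h2).resolve_right hd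
    linarith

lemma combo_bounds {a b s t : ℝ} (ha : 0 ≤ a) (hb : 0 ≤ b) (hab : a + b = 1) :
    min s t ≤ a * s + b * t ∧ a * s + b * t ≤ max s t := by
  have h1 : a * min s t ≤ a * s := mul_le_mul_of_nonneg_left (min_le_left _ _) ha
  have h2 : b * min s t ≤ b * t := mul_le_mul_of_nonneg_left (min_le_right _ _) hb
  have h3 : a * min s t + b * min s t = min s t := by linear_combination (min s t) * hab
  have h4 : a * s ≤ a * max s t := mul_le_mul_of_nonneg_left (le_max_left _ _) ha
  have h5 : b * t ≤ b * max s t := mul_le_mul_of_nonneg_left (le_max_right _ _) hb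
  have h6 : a * max s t + b * max s t = max s t := by linear_combination (max s t) * hab
  constructor <;> linarith

lemma param_segment {x y : E2} (hxy : x ≠ y) {s t τ : ℝ}
    (h : x + τ • (y - x) ∈ segment ℝ (x + s • (y - x)) (x + t • (y - x))) :
    min s t ≤ τ ∧ τ ≤ max s t := by
  obtain ⟨a, b, ha, hb, hab, hc⟩ := h
  have hb' : b = 1 - a := by linarith
  have hkey : a • (x + s • (y - x)) + b • (x + t • (y - x)) = x + (a*s + b*t) • (y - x) := by
    subst hb'
    apply Prod.ext <;>
      simp only [Prod.fst_add, Prod.snd_add, Prod.smul_fst, Prod.smul_snd, Prod.fst_sub,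
        Prod.snd_sub, smul_eq_mul] <;> ring
  rw [hkey] at hc
  have hτ : a * s + b * t = τ := pt_inj hxy hc
  have := combo_bounds ha hb hab (s := s) (t := t)
  constructor <;> linarith

/-- A vertex of one triangular cell cannot lie strictly inside the face segment
of another cell on the same line. -/
lemma vertex_mid_case {L : Finset Line2} (hL : IsSimpleArrangement L) {ℓ : Line2} (hℓ : ℓ ∈ L)
    {Cs C : Set E2} (hCs : IsCell L Cs) (hC : IsCell L C)
    {x y : E2} (hxy : x ≠ y) (hx : lf ℓ x = 0) (hy : lf ℓ y = 0)
    {V V' Q : E2} (hnc : ¬ Collinear ℝ ({V, Q, V'} : Set E2))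
    (hT : closure C = convexHull ℝ ({V, Q, V'} : Set E2))
    (hQ : lf ℓ Q ≠ 0)
    {t₁ τ t₂ : ℝ} (h1 : t₁ < τ) (h2 : τ < t₂)
    (hV : V = x + τ • (y - x))
    (hz1 : x + t₁ • (y - x) ∈ closure Cs) (hz2 : x + t₂ • (y - x) ∈ closure Cs) : False := by
  have hVQsub : segment ℝ V Q ⊆ linesUnion L := edge_subset_lines hC hnc hT
  have hfV : lf ℓ V = 0 := by
    rw [hV, lf_line, hx, hy]
    ring
  have hVQ : V ≠ Q := by
    intro h
    rw [h] at hfV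
    exact hQ hfV
  obtain ⟨m, hm, hmV, hmQ⟩ := segment_line hVQ hVQsub
  have hmℓ : m ≠ ℓ := by
    intro h
    rw [h] at hmQ
    exact hQ hmQ
  rcases eq_or_ne (lf m y - lf m x) 0 with hB | hB
  · have hmx : lf m x = 0 := by
      have h3 : lf m V = lf m x + τ * (lf m y - lf m x) := by rw [hV, lf_line]
      rw [hB] at h3
      rw [hmV] at h3
      linarith
    have hmy : lf m y = 0 := by linarith
    exact hmℓ (lines_eq_of_two hL hm hℓ hxy ((mem_carrier_iff m x).2 hmx)
      ((mem_carrier_iff m y).2 hmy) ((mem_carrier_iff ℓ x).2 hx) ((mem_carrier_iff ℓ y).2 hy))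
  · have hφV : lf m x + τ * (lf m y - lf m x) = 0 := by
      rw [← lf_line, ← hV]
      exact hmV
    have hv1 : lf m (x + t₁ • (y - x)) = (t₁ - τ) * (lf m y - lf m x) := by
      rw [lf_line]
      linear_combination hφV
    have hv2 : lf m (x + t₂ • (y - x)) = (t₂ - τ) * (lf m y - lf m x) := by
      rw [lf_line]
      linear_combination hφV
    have hprod : lf m (x + t₁ • (y - x)) * lf m (x + t₂ • (y - x)) < 0 := by
      rw [hv1, hv2]
      have h3 : (t₁ - τ) * (t₂ - τ) < 0 := mul_neg_of_neg_of_pos (by linarith) (by linarith)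
      have hB2 : 0 < (lf m y - lf m x)^2 := by positivity
      nlinarith
    rcases cell_sign hCs hm with hsgn | hsgn
    · have hcl := sign_closure_nonneg (α := m.a) (β := m.b) (γ := -m.c) hsgn
      have q1 : 0 ≤ lf m (x + t₁ • (y - x)) := hcl _ hz1
      have q2 : 0 ≤ lf m (x + t₂ • (y - x)) := hcl _ hz2
      exact absurd hprod (not_lt.2 (mul_nonneg q1 q2))
    · have hcl := sign_closure_nonpos (α := m.a) (β := m.b) (γ := -m.c) hsgn
      have q1 : lf m (x + t₁ • (y - x)) ≤ 0 := hcl _ hz1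
      have q2 : lf m (x + t₂ • (y - x)) ≤ 0 := hcl _ hz2
      exact absurd hprod (not_lt.2 (by nlinarith : (0:ℝ) ≤ lf m (x + t₁ • (y - x)) * lf m (x + t₂ • (y - x))))

lemma vertex_mid_case' {L : Finset Line2} (hL : IsSimpleArrangement L) {ℓ : Line2} (hℓ : ℓ ∈ L)
    {Cs C : Set E2} (hCs : IsCell L Cs) (hC : IsCell L C)
    {x y : E2} (hxy : x ≠ y) (hx : lf ℓ x = 0) (hy : lf ℓ y = 0)
    {A B Q : E2} (hnc : ¬ Collinear ℝ ({A, B, Q} : Set E2))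
    (hT : closure C = convexHull ℝ ({A, B, Q} : Set E2))
    (hQ : lf ℓ Q ≠ 0) {a b τ t₁ t₂ : ℝ}
    (hA : A = x + a • (y - x)) (hB : B = x + b • (y - x))
    (hτ : τ = a ∨ τ = b)
    (h1 : t₁ < τ) (h2 : τ < t₂)
    (hz1 : x + t₁ • (y - x) ∈ closure Cs) (hz2 : x + t₂ • (y - x) ∈ closure Cs) : False := by
  rcases hτ with rfl | rfl
  · have hperm : ({A, B, Q} : Set E2) = {A, Q, B} := by
      ext z; simp only [Set.mem_insert_iff, Set.mem_singleton_iff]; tauto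
    rw [hperm] at hnc hT
    exact vertex_mid_case hL hℓ hCs hC hxy hx hy hnc hT hQ h1 h2 hA hz1 hz2
  · have hperm : ({A, B, Q} : Set E2) = {B, Q, A} := by
      ext z; simp only [Set.mem_insert_iff, Set.mem_singleton_iff]; tauto
    rw [hperm] at hnc hT
    exact vertex_mid_case hL hℓ hCs hC hxy hx hy hnc hT hQ h1 h2 hB hz1 hz2

set_option maxHeartbeats 2000000 in
lemma opp_sign_case {L : Finset Line2} (hL : IsSimpleArrangement L) {ℓ : Line2} (hℓ : ℓ ∈ L)
    {C₁ C₂ : Set E2} (h1 : IsCell L C₁) (h2 : IsCell L C₂)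
    {u₁ v₁ w₁ u₂ v₂ w₂ : E2}
    (hnc1 : ¬ Collinear ℝ ({u₁, v₁, w₁} : Set E2))
    (hT1 : closure C₁ = convexHull ℝ ({u₁, v₁, w₁} : Set E2))
    (hnc2 : ¬ Collinear ℝ ({u₂, v₂, w₂} : Set E2))
    (hT2 : closure C₂ = convexHull ℝ ({u₂, v₂, w₂} : Set E2))
    {x y : E2} (hxy : x ≠ y)
    (hx1 : x ∈ closure C₁) (hy1 : y ∈ closure C₁) (hx2 : x ∈ closure C₂) (hy2 : y ∈ closure C₂)
    (hfx : lf ℓ x = 0) (hfy : lf ℓ y = 0)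
    (hs1 : ∀ z ∈ closure C₁, 0 ≤ lf ℓ z) (hs2 : ∀ z ∈ closure C₂, lf ℓ z ≤ 0) : False := by
  obtain ⟨A₁, B₁, P, hset1, hfA₁, hfB₁, hfP, hface1⟩ :=
    face_lemma (α := ℓ.a) (β := ℓ.b) (γ := -ℓ.c) ℓ.nondeg hnc1
      (fun z hz => hs1 z (by rw [hT1]; exact hz))
      (by rw [← hT1]; exact hx1) (by rw [← hT1]; exact hy1) hxy hfx hfy
  have hnab : ((-ℓ.a, -ℓ.b) : ℝ × ℝ) ≠ (0, 0) := by
    intro h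
    rw [Prod.mk.injEq] at h
    exact ℓ.nondeg (by rw [Prod.mk.injEq]; constructor <;> linarith [h.1, h.2])
  obtain ⟨A₂, B₂, Q, hset2, hfA₂', hfB₂', hfQ', hface2⟩ :=
    face_lemma (α := -ℓ.a) (β := -ℓ.b) (γ := ℓ.c) hnab hnc2
      (fun z hz => by rw [lf_neg]; have := hs2 z (by rw [hT2]; exact hz); linarith)
      (by rw [← hT2]; exact hx2) (by rw [← hT2]; exact hy2) hxy
      (by rw [lf_neg, hfx]; ring) (by rw [lf_neg, hfy]; ring)
  have hfPl : 0 < lf ℓ P := hfP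
  have hfA₂ : lf ℓ A₂ = 0 := by rw [lf_neg] at hfA₂'; linarith
  have hfB₂ : lf ℓ B₂ = 0 := by rw [lf_neg] at hfB₂'; linarith
  have hfQ : lf ℓ Q < 0 := by rw [lf_neg] at hfQ'; linarith
  obtain ⟨a₁, hA₁p⟩ := af_param ℓ.nondeg hxy hfx hfy hfA₁
  obtain ⟨b₁, hB₁p⟩ := af_param ℓ.nondeg hxy hfx hfy hfB₁
  obtain ⟨a₂, hA₂p⟩ := af_param ℓ.nondeg hxy hfx hfy hfA₂
  obtain ⟨b₂, hB₂p⟩ := af_param ℓ.nondeg hxy hfx hfy hfB₂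
  have hxs1 : x ∈ segment ℝ A₁ B₁ := hface1 x (by rw [← hT1]; exact hx1) hfx
  have hys1 : y ∈ segment ℝ A₁ B₁ := hface1 y (by rw [← hT1]; exact hy1) hfy
  have hxs2 : x ∈ segment ℝ A₂ B₂ :=
    hface2 x (by rw [← hT2]; exact hx2) (by rw [lf_neg, hfx]; ring)
  have hys2 : y ∈ segment ℝ A₂ B₂ :=
    hface2 y (by rw [← hT2]; exact hy2) (by rw [lf_neg, hfy]; ring)
  have hx0 : (x : E2) = x + (0:ℝ) • (y - x) := by simp
  have hy1' : (y : E2) = x + (1:ℝ) • (y - x) := by rw [one_smul]; abel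
  have hI1_0 := param_segment hxy (show x + (0:ℝ) • (y - x) ∈
      segment ℝ (x + a₁ • (y - x)) (x + b₁ • (y - x)) by rw [← hx0, ← hA₁p, ← hB₁p]; exact hxs1)
  have hI1_1 := param_segment hxy (show x + (1:ℝ) • (y - x) ∈
      segment ℝ (x + a₁ • (y - x)) (x + b₁ • (y - x)) by rw [← hy1', ← hA₁p, ← hB₁p]; exact hys1)
  have hI2_0 := param_segment hxy (show x + (0:ℝ) • (y - x) ∈
      segment ℝ (x + a₂ • (y - x)) (x + b₂ • (y - x)) by rw [← hx0, ← hA₂p, ← hB₂p]; exact hxs2)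
  have hI2_1 := param_segment hxy (show x + (1:ℝ) • (y - x) ∈
      segment ℝ (x + a₂ • (y - x)) (x + b₂ • (y - x)) by rw [← hy1', ← hA₂p, ← hB₂p]; exact hys2)
  have hσ₁ : min a₁ b₁ ≤ 0 := hI1_0.1
  have hρ₁ : (1:ℝ) ≤ max a₁ b₁ := hI1_1.2
  have hσ₂ : min a₂ b₂ ≤ 0 := hI2_0.1
  have hρ₂ : (1:ℝ) ≤ max a₂ b₂ := hI2_1.2
  have hA₁mem : A₁ ∈ closure C₁ := by
    rw [hT1, hset1]; exact subset_convexHull ℝ _ (by simp)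
  have hB₁mem : B₁ ∈ closure C₁ := by
    rw [hT1, hset1]; exact subset_convexHull ℝ _ (by simp)
  have hA₂mem : A₂ ∈ closure C₂ := by
    rw [hT2, hset2]; exact subset_convexHull ℝ _ (by simp)
  have hB₂mem : B₂ ∈ closure C₂ := by
    rw [hT2, hset2]; exact subset_convexHull ℝ _ (by simp)
  have hmem1 : ∀ t : ℝ, t = a₁ ∨ t = b₁ → x + t • (y - x) ∈ closure C₁ := by
    rintro t (rfl | rfl)
    · rw [← hA₁p]; exact hA₁mem
    · rw [← hB₁p]; exact hB₁mem
  have hmem2 : ∀ t : ℝ, t = a₂ ∨ t = b₂ → x + t • (y - x) ∈ closure C₂ := by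
    rintro t (rfl | rfl)
    · rw [← hA₂p]; exact hA₂mem
    · rw [← hB₂p]; exact hB₂mem
  have hnc1' : ¬ Collinear ℝ ({A₁, B₁, P} : Set E2) := by rw [← hset1]; exact hnc1
  have hT1' : closure C₁ = convexHull ℝ ({A₁, B₁, P} : Set E2) := by rw [hT1, hset1]
  have hnc2' : ¬ Collinear ℝ ({A₂, B₂, Q} : Set E2) := by rw [← hset2]; exact hnc2
  have hT2' : closure C₂ = convexHull ℝ ({A₂, B₂, Q} : Set E2) := by rw [hT2, hset2]
  have hfP' : lf ℓ P ≠ 0 := ne_of_gt hfPl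
  have hfQ'' : lf ℓ Q ≠ 0 := ne_of_lt hfQ
  have hmin : min a₁ b₁ = min a₂ b₂ := by
    rcases lt_trichotomy (min a₁ b₁) (min a₂ b₂) with h | h | h
    · exact absurd (vertex_mid_case' hL hℓ h1 h2 hxy hfx hfy hnc2' hT2' hfQ'' hA₂p hB₂p
        (min_choice a₂ b₂) h (by linarith) (hmem1 _ (min_choice a₁ b₁))
        (hmem1 _ (max_choice a₁ b₁))) (by simp)
    · exact h
    · exact absurd (vertex_mid_case' hL hℓ h2 h1 hxy hfx hfy hnc1' hT1' hfP' hA₁p hB₁p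
        (min_choice a₁ b₁) h (by linarith) (hmem2 _ (min_choice a₂ b₂))
        (hmem2 _ (max_choice a₂ b₂))) (by simp)
  have hmax : max a₁ b₁ = max a₂ b₂ := by
    rcases lt_trichotomy (max a₁ b₁) (max a₂ b₂) with h | h | h
    · exact absurd (vertex_mid_case' hL hℓ h2 h1 hxy hfx hfy hnc1' hT1' hfP' hA₁p hB₁p
        (max_choice a₁ b₁) (by linarith) h (hmem2 _ (min_choice a₂ b₂))
        (hmem2 _ (max_choice a₂ b₂))) (by simp)
    · exact h
    · exact absurd (vertex_mid_case' hL hℓ h1 h2 hxy hfx hfy hnc2' hT2' hfQ'' hA₂p hB₂p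
        (max_choice a₂ b₂) (by linarith) h (hmem1 _ (min_choice a₁ b₁))
        (hmem1 _ (max_choice a₁ b₁))) (by simp)
  -- The two faces coincide; call the endpoints A = pt (min), B = pt (max).
  have hAB1 : ({A₁, B₁, P} : Set E2)
      = {x + min a₁ b₁ • (y - x), x + max a₁ b₁ • (y - x), P} := by
    rcases le_total a₁ b₁ with h | h
    · rw [min_eq_left h, max_eq_right h, ← hA₁p, ← hB₁p]
    · rw [min_eq_right h, max_eq_left h, ← hA₁p, ← hB₁p]
      ext z; simp only [Set.mem_insert_iff, Set.mem_singleton_iff]; tauto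
  have hAB2 : ({A₂, B₂, Q} : Set E2)
      = {x + min a₁ b₁ • (y - x), x + max a₁ b₁ • (y - x), Q} := by
    rw [hmin, hmax]
    rcases le_total a₂ b₂ with h | h
    · rw [min_eq_left h, max_eq_right h, ← hA₂p, ← hB₂p]
    · rw [min_eq_right h, max_eq_left h, ← hA₂p, ← hB₂p]
      ext z; simp only [Set.mem_insert_iff, Set.mem_singleton_iff]; tauto
  have hT1'' : closure C₁ =
      convexHull ℝ ({x + min a₁ b₁ • (y - x), x + max a₁ b₁ • (y - x), P} : Set E2) := by
    rw [hT1', hAB1]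
  have hnc1'' : ¬ Collinear ℝ
      ({x + min a₁ b₁ • (y - x), x + max a₁ b₁ • (y - x), P} : Set E2) := by
    rw [← hAB1]; exact hnc1'
  have hT2'' : closure C₂ =
      convexHull ℝ ({x + min a₁ b₁ • (y - x), x + max a₁ b₁ • (y - x), Q} : Set E2) := by
    rw [hT2', hAB2]
  have hnc2'' : ¬ Collinear ℝ
      ({x + min a₁ b₁ • (y - x), x + max a₁ b₁ • (y - x), Q} : Set E2) := by
    rw [← hAB2]; exact hnc2'
  have hfA : lf ℓ (x + min a₁ b₁ • (y - x)) = 0 := by rw [lf_line, hfx, hfy]; ring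
  have hfB : lf ℓ (x + max a₁ b₁ • (y - x)) = 0 := by rw [lf_line, hfx, hfy]; ring
  have hABne : x + min a₁ b₁ • (y - x) ≠ x + max a₁ b₁ • (y - x) := by
    intro h
    have := pt_inj hxy h
    linarith
  have hAP : x + min a₁ b₁ • (y - x) ≠ P := by
    intro h
    rw [h] at hfA
    linarith
  have hBP : x + max a₁ b₁ • (y - x) ≠ P := by
    intro h
    rw [h] at hfB
    linarith
  have hAQ : x + min a₁ b₁ • (y - x) ≠ Q := by
    intro h
    rw [h] at hfA
    linarith
  have hBQ : x + max a₁ b₁ • (y - x) ≠ Q := by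
    intro h
    rw [h] at hfB
    linarith
  -- the four edges each lie on a line of the arrangement
  have hperm1 : ({x + min a₁ b₁ • (y - x), P, x + max a₁ b₁ • (y - x)} : Set E2)
      = {x + min a₁ b₁ • (y - x), x + max a₁ b₁ • (y - x), P} := by
    ext z; simp only [Set.mem_insert_iff, Set.mem_singleton_iff]; tauto
  have hperm2 : ({x + max a₁ b₁ • (y - x), P, x + min a₁ b₁ • (y - x)} : Set E2)
      = {x + min a₁ b₁ • (y - x), x + max a₁ b₁ • (y - x), P} := by
    ext z; simp only [Set.mem_insert_iff, Set.mem_singleton_iff]; tauto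
  have hperm3 : ({x + min a₁ b₁ • (y - x), Q, x + max a₁ b₁ • (y - x)} : Set E2)
      = {x + min a₁ b₁ • (y - x), x + max a₁ b₁ • (y - x), Q} := by
    ext z; simp only [Set.mem_insert_iff, Set.mem_singleton_iff]; tauto
  have hperm4 : ({x + max a₁ b₁ • (y - x), Q, x + min a₁ b₁ • (y - x)} : Set E2)
      = {x + min a₁ b₁ • (y - x), x + max a₁ b₁ • (y - x), Q} := by
    ext z; simp only [Set.mem_insert_iff, Set.mem_singleton_iff]; tauto
  have e1 : segment ℝ (x + min a₁ b₁ • (y - x)) P ⊆ linesUnion L :=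
    edge_subset_lines h1 (by rw [hperm1]; exact hnc1'') (by rw [hperm1]; exact hT1'')
  have e2 : segment ℝ (x + max a₁ b₁ • (y - x)) P ⊆ linesUnion L :=
    edge_subset_lines h1 (by rw [hperm2]; exact hnc1'') (by rw [hperm2]; exact hT1'')
  have e3 : segment ℝ (x + min a₁ b₁ • (y - x)) Q ⊆ linesUnion L :=
    edge_subset_lines h2 (by rw [hperm3]; exact hnc2'') (by rw [hperm3]; exact hT2'')
  have e4 : segment ℝ (x + max a₁ b₁ • (y - x)) Q ⊆ linesUnion L :=
    edge_subset_lines h2 (by rw [hperm4]; exact hnc2'') (by rw [hperm4]; exact hT2'')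
  obtain ⟨mAP, hmAP, hmAPA, hmAPP⟩ := segment_line hAP e1
  obtain ⟨mBP, hmBP, hmBPB, hmBPP⟩ := segment_line hBP e2
  obtain ⟨mAQ, hmAQ, hmAQA, hmAQQ⟩ := segment_line hAQ e3
  obtain ⟨mBQ, hmBQ, hmBQB, hmBQQ⟩ := segment_line hBQ e4
  have hmAPℓ : mAP ≠ ℓ := by
    intro h
    rw [h] at hmAPP
    linarith
  have hmAQℓ : mAQ ≠ ℓ := by
    intro h
    rw [h] at hmAQQ
    linarith
  have hmBPℓ : mBP ≠ ℓ := by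
    intro h
    rw [h] at hmBPP
    linarith
  have hmBQℓ : mBQ ≠ ℓ := by
    intro h
    rw [h] at hmBQQ
    linarith
  have hAPQ : mAP = mAQ := by
    by_contra hne'
    exact hL.2 ℓ hℓ mAP hmAP mAQ hmAQ (Ne.symm hmAPℓ) (Ne.symm hmAQℓ) hne' _
      ⟨(mem_carrier_iff _ _).2 hfA, (mem_carrier_iff _ _).2 hmAPA, (mem_carrier_iff _ _).2 hmAQA⟩
  have hBPQ : mBP = mBQ := by
    by_contra hne'
    exact hL.2 ℓ hℓ mBP hmBP mBQ hmBQ (Ne.symm hmBPℓ) (Ne.symm hmBQℓ) hne' _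
      ⟨(mem_carrier_iff _ _).2 hfB, (mem_carrier_iff _ _).2 hmBPB, (mem_carrier_iff _ _).2 hmBQB⟩
  have hPQ : P ≠ Q := by
    intro h
    rw [h] at hfPl
    linarith
  have hQmAP : lf mAP Q = 0 := by rw [hAPQ]; exact hmAQQ
  have hQmBP : lf mBP Q = 0 := by rw [hBPQ]; exact hmBQQ
  have hnn : mAP = mBP := lines_eq_of_two hL hmAP hmBP hPQ ((mem_carrier_iff _ _).2 hmAPP)
    ((mem_carrier_iff _ _).2 hQmAP) ((mem_carrier_iff _ _).2 hmBPP)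
    ((mem_carrier_iff _ _).2 hQmBP)
  have hBmAP : lf mAP (x + max a₁ b₁ • (y - x)) = 0 := by rw [hnn]; exact hmBPB
  have hfinal : mAP = ℓ := lines_eq_of_two hL hmAP hℓ hABne ((mem_carrier_iff _ _).2 hmAPA)
    ((mem_carrier_iff _ _).2 hBmAP) ((mem_carrier_iff _ _).2 hfA)
    ((mem_carrier_iff _ _).2 hfB)
  exact hmAPℓ hfinal

end ArrAux

end

/-- In a simple arrangement of lines, no two distinct triangular bounded cells
share a common edge: their closures cannot intersect in a nondegenerate
segment. -/
theorem stmt9 (L : Finset Line2) (hL : IsSimpleArrangement L) :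
    ¬ ∃ C₁ C₂ : Set (ℝ × ℝ), IsCell L C₁ ∧ IsCell L C₂ ∧ C₁ ≠ C₂ ∧
      Bornology.IsBounded C₁ ∧ Bornology.IsBounded C₂ ∧
      IsTriangleSet (closure C₁) ∧ IsTriangleSet (closure C₂) ∧
      ∃ x y : ℝ × ℝ, x ≠ y ∧ segment ℝ x y ⊆ closure C₁ ∩ closure C₂ := by
  rintro ⟨C₁, C₂, h1, h2, hne, -, -, ⟨u₁, v₁, w₁, hnc1, hT1⟩, ⟨u₂, v₂, w₂, hnc2, hT2⟩,
    x, y, hxy, hseg⟩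
  have hsegL : segment ℝ x y ⊆ linesUnion L := by
    intro z hz
    by_contra hzL
    have hz1 : z ∈ C₁ := ArrAux.mem_cell_of_closure h1 ((hseg hz).1) hzL
    have hz2 : z ∈ C₂ := ArrAux.mem_cell_of_closure h2 ((hseg hz).2) hzL
    exact hne (ArrAux.cell_eq_of_mem h1 h2 hz1 hz2)
  obtain ⟨ℓ, hℓ, hfx, hfy⟩ := ArrAux.segment_line hxy hsegL
  have hx1 : x ∈ closure C₁ := (hseg (left_mem_segment ℝ x y)).1
  have hy1 : y ∈ closure C₁ := (hseg (right_mem_segment ℝ x y)).1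
  have hx2 : x ∈ closure C₂ := (hseg (left_mem_segment ℝ x y)).2
  have hy2 : y ∈ closure C₂ := (hseg (right_mem_segment ℝ x y)).2
  have hcv1 : Convex ℝ (closure C₁) := by rw [hT1]; exact convex_convexHull ℝ _
  have hcv2 : Convex ℝ (closure C₂) := by rw [hT2]; exact convex_convexHull ℝ _
  have hnab : ((-ℓ.a, -ℓ.b) : ℝ × ℝ) ≠ (0, 0) := by
    intro h
    rw [Prod.mk.injEq] at h
    exact ℓ.nondeg (by rw [Prod.mk.injEq]; constructor <;> linarith [h.1, h.2])
  rcases ArrAux.cell_sign h1 hℓ with hs1 | hs1 <;> rcases ArrAux.cell_sign h2 hℓ with hs2 | hs2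
  · exact ArrAux.same_sign_case (α := ℓ.a) (β := ℓ.b) (γ := -ℓ.c) h1 h2 hne hcv1 hcv2
      ℓ.nondeg hxy hx1 hy1 hx2 hy2 hfx hfy hs1 hs2
  · exact ArrAux.opp_sign_case hL hℓ h1 h2 hnc1 hT1 hnc2 hT2 hxy hx1 hy1 hx2 hy2 hfx hfy
      (ArrAux.sign_closure_nonneg hs1) (ArrAux.sign_closure_nonpos hs2)
  · exact ArrAux.opp_sign_case hL hℓ h2 h1 hnc2 hT2 hnc1 hT1 hxy hx2 hy2 hx1 hy1 hfx hfy
      (ArrAux.sign_closure_nonneg hs2) (ArrAux.sign_closure_nonpos hs1)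
  · refine ArrAux.same_sign_case (α := -ℓ.a) (β := -ℓ.b) (γ := ℓ.c) h1 h2 hne hcv1 hcv2
      hnab hxy hx1 hy1 hx2 hy2 ?_ ?_ ?_ ?_
    · rw [ArrAux.lf_neg, hfx]
      ring
    · rw [ArrAux.lf_neg, hfy]
      ring
    · intro z hz
      rw [ArrAux.lf_neg]
      have := hs1 z hz
      linarith
    · intro z hz
      rw [ArrAux.lf_neg]
      have := hs2 z hz
      linarith
end

section
/- Let a and c be two non-parallel directed lines in the real plane, and let ℓ₁, ..., ℓ_j be further lines, each crossing both a and c, such that all pairwise intersection points among the ℓ_i and their intersections with a and c lie in the closed region R₁ = a⁻ ∩ c⁻ (the intersection of the left half-planes of a and c). Suppose the ℓ_i are indexed by the order in which they cross a. If two of these lines ℓ_{i₁} and ℓ_{i₂} with i₁ < i₂ also cross c at points that are ordered along c's direction, then the order of their crossings with c agrees with the order of their crossings with a (i.e., ℓ_{i₁} crosses c before ℓ_{i₂}). -/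
/-- A directed line in the real plane: a base point together with a nonzero
direction vector. -/
structure DLine where
  pt : ℝ × ℝ
  dir : ℝ × ℝ
  dir_ne : dir ≠ 0

/-- The set of points of a directed line. -/
def DLine.carrier (d : DLine) : Set (ℝ × ℝ) :=
  {q | ∃ t : ℝ, q = d.pt + t • d.dir}

/-- The closed left half-plane of a directed line (the closure of the open
half-plane to the left of the line). -/
def DLine.leftClosed (d : DLine) (q : ℝ × ℝ) : Prop :=
  0 ≤ d.dir.1 * (q.2 - d.pt.2) - d.dir.2 * (q.1 - d.pt.1)


/-- signed cross product functional -/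
def cr (e p q : ℝ × ℝ) : ℝ := e.1 * (q.2 - p.2) - e.2 * (q.1 - p.1)

lemma cr_param (e p p' d' : ℝ × ℝ) (t : ℝ) :
    cr e p (p' + t • d') = cr e p p' + t * (e.1 * d'.2 - e.2 * d'.1) := by
  simp [cr, Prod.fst_add, Prod.snd_add, Prod.smul_fst, Prod.smul_snd, smul_eq_mul]
  ring

lemma cr_affine (e p x y : ℝ × ℝ) (l : ℝ) :
    cr e p (x + l • (y - x)) = cr e p x + l * (cr e p y - cr e p x) := by
  simp [cr, Prod.fst_add, Prod.snd_add, Prod.fst_sub, Prod.snd_sub,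
    Prod.smul_fst, Prod.smul_snd, smul_eq_mul]
  ring

lemma cr_mem {d : DLine} {q : ℝ × ℝ} (h : q ∈ d.carrier) : cr d.dir d.pt q = 0 := by
  obtain ⟨t, rfl⟩ := h
  simp only [cr, Prod.fst_add, Prod.snd_add, Prod.smul_fst, Prod.smul_snd, smul_eq_mul]
  ring

lemma mem_of_cr {d : DLine} {q : ℝ × ℝ} (h : cr d.dir d.pt q = 0) : q ∈ d.carrier := by
  have hn : d.dir.1 ^ 2 + d.dir.2 ^ 2 ≠ 0 := by
    intro h0
    apply d.dir_ne
    have h1 : d.dir.1 = 0 := by nlinarith [sq_nonneg d.dir.1, sq_nonneg d.dir.2]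
    have h2 : d.dir.2 = 0 := by nlinarith [sq_nonneg d.dir.1, sq_nonneg d.dir.2]
    exact Prod.ext h1 h2
  refine ⟨((q.1 - d.pt.1) * d.dir.1 + (q.2 - d.pt.2) * d.dir.2) / (d.dir.1 ^ 2 + d.dir.2 ^ 2), ?_⟩
  have hcr : d.dir.1 * (q.2 - d.pt.2) - d.dir.2 * (q.1 - d.pt.1) = 0 := h
  apply Prod.ext
  · show q.1 = d.pt.1 + _ * d.dir.1
    field_simp
    linear_combination (-d.dir.2) * hcr
  · show q.2 = d.pt.2 + _ * d.dir.2
    field_simp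
    linear_combination d.dir.1 * hcr

/-- three collinear points: the third is an affine combination of two distinct ones -/
lemma exists_lambda (ℓ : DLine) {x y w : ℝ × ℝ} (hx : x ∈ ℓ.carrier) (hy : y ∈ ℓ.carrier)
    (hw : w ∈ ℓ.carrier) (hxy : x ≠ y) : ∃ l : ℝ, w = x + l • (y - x) := by
  obtain ⟨p, rfl⟩ := hx
  obtain ⟨q, rfl⟩ := hy
  obtain ⟨r, rfl⟩ := hw
  have hpq : q - p ≠ 0 := by
    intro h
    apply hxy
    have : p = q := by linarith [sub_eq_zero.mp h]
    rw [this]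
  refine ⟨(r - p) / (q - p), ?_⟩
  have : (ℓ.pt + q • ℓ.dir) - (ℓ.pt + p • ℓ.dir) = (q - p) • ℓ.dir := by
    rw [sub_smul]; abel
  rw [this, smul_smul, div_mul_cancel₀ _ hpq]
  rw [add_assoc, ← add_smul]
  have hpr : p + (r - p) = r := by ring
  rw [hpr]

/-- Let `a` and `c` be two non-parallel directed lines and `ℓ₁, ℓ₂` two further
lines, each crossing both `a` and `c`, such that the crossing of `ℓ₁` with `ℓ₂`
and all their crossings with `a` and `c` lie in the closed region
`R₁ = a⁻ ∩ c⁻` (intersection of the closed left half-planes), and no three of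
the lines `a, c, ℓ₁, ℓ₂` pass through a common point.  If `ℓ₁` crosses `a`
before `ℓ₂` (in the direction of `a`), then `ℓ₁` also crosses `c` before `ℓ₂`
(in the direction of `c`). -/
theorem stmt14 (a c ℓ₁ ℓ₂ : DLine)
    (hac : ∃ O : ℝ × ℝ, O ∈ a.carrier ∧ O ∈ c.carrier)
    (hne : ℓ₁.carrier ≠ ℓ₂.carrier)
    (hna : ℓ₁.carrier ≠ a.carrier ∧ ℓ₂.carrier ≠ a.carrier)
    (hnc : ℓ₁.carrier ≠ c.carrier ∧ ℓ₂.carrier ≠ c.carrier)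
    (t₁ t₂ s₁ s₂ : ℝ) (v : ℝ × ℝ)
    -- crossings with `a` and `c`
    (ha₁ : a.pt + t₁ • a.dir ∈ ℓ₁.carrier) (ha₂ : a.pt + t₂ • a.dir ∈ ℓ₂.carrier)
    (hc₁ : c.pt + s₁ • c.dir ∈ ℓ₁.carrier) (hc₂ : c.pt + s₂ • c.dir ∈ ℓ₂.carrier)
    -- the crossing of `ℓ₁` and `ℓ₂`
    (hv : v ∈ ℓ₁.carrier ∧ v ∈ ℓ₂.carrier)
    -- all these crossings lie in the closed region `R₁ = a⁻ ∩ c⁻`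
    (hvR : a.leftClosed v ∧ c.leftClosed v)
    (haR : c.leftClosed (a.pt + t₁ • a.dir) ∧ c.leftClosed (a.pt + t₂ • a.dir))
    (hcR : a.leftClosed (c.pt + s₁ • c.dir) ∧ a.leftClosed (c.pt + s₂ • c.dir))
    -- no three of the four lines are concurrent (simplicity)
    (hv_not : v ∉ a.carrier ∧ v ∉ c.carrier)
    (ha_not : a.pt + t₁ • a.dir ∉ c.carrier ∧ a.pt + t₂ • a.dir ∉ c.carrier)
    (hc_not : c.pt + s₁ • c.dir ∉ a.carrier ∧ c.pt + s₂ • c.dir ∉ a.carrier)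
    (hlt : t₁ < t₂) :
    s₁ < s₂ := by
  obtain ⟨O, hOa, hOc⟩ := hac
  set A₁ := a.pt + t₁ • a.dir with hA₁def
  set A₂ := a.pt + t₂ • a.dir with hA₂def
  set C₁ := c.pt + s₁ • c.dir with hC₁def
  set C₂ := c.pt + s₂ • c.dir with hC₂def
  set D : ℝ := a.dir.1 * c.dir.2 - a.dir.2 * c.dir.1 with hDdef
  -- F := cr a.dir a.pt, G := cr c.dir c.pt
  -- strict positivity at non-incident points
  have hstrict : ∀ (d : DLine) (q : ℝ × ℝ), d.leftClosed q → q ∉ d.carrier →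
      0 < cr d.dir d.pt q := by
    intro d q hle hnm
    rcases lt_or_eq_of_le (hle : 0 ≤ cr d.dir d.pt q) with h | h
    · exact h
    · exact absurd (mem_of_cr h.symm) hnm
  have hα₁ : 0 < cr c.dir c.pt A₁ := hstrict c A₁ haR.1 ha_not.1
  have hα₂ : 0 < cr c.dir c.pt A₂ := hstrict c A₂ haR.2 ha_not.2
  have hγ₁ : 0 < cr a.dir a.pt C₁ := hstrict a C₁ hcR.1 hc_not.1
  have hγ₂ : 0 < cr a.dir a.pt C₂ := hstrict a C₂ hcR.2 hc_not.2
  have hP : 0 < cr a.dir a.pt v := hstrict a v hvR.1 hv_not.1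
  have hQ : 0 < cr c.dir c.pt v := hstrict c v hvR.2 hv_not.2
  -- zero values on the lines themselves
  have hFA₁ : cr a.dir a.pt A₁ = 0 := cr_mem ⟨t₁, rfl⟩
  have hFA₂ : cr a.dir a.pt A₂ = 0 := cr_mem ⟨t₂, rfl⟩
  have hGC₁ : cr c.dir c.pt C₁ = 0 := cr_mem ⟨s₁, rfl⟩
  have hGC₂ : cr c.dir c.pt C₂ = 0 := cr_mem ⟨s₂, rfl⟩
  -- D ≠ 0
  have hD : D ≠ 0 := by
    intro hD0
    obtain ⟨s₀, rfl⟩ := hOc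
    have h1 : cr a.dir a.pt (c.pt + s₀ • c.dir) = 0 := cr_mem hOa
    rw [cr_param] at h1
    have h2 : cr a.dir a.pt c.pt = 0 := by
      have : a.dir.1 * c.dir.2 - a.dir.2 * c.dir.1 = 0 := hD0
      rw [this] at h1; linarith
    have h3 : cr a.dir a.pt C₁ = 0 := by
      rw [hC₁def, cr_param, h2]
      have : a.dir.1 * c.dir.2 - a.dir.2 * c.dir.1 = 0 := hD0
      rw [this]; ring
    linarith
  -- convex-combination parameters along ℓ₁ and ℓ₂
  have hAC₁ : A₁ ≠ C₁ := by
    intro h; rw [h] at hFA₁; linarith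
  have hAC₂ : A₂ ≠ C₂ := by
    intro h; rw [h] at hFA₂; linarith
  obtain ⟨l₁, hl₁⟩ := exists_lambda ℓ₁ ha₁ hc₁ hv.1 hAC₁
  obtain ⟨l₂, hl₂⟩ := exists_lambda ℓ₂ ha₂ hc₂ hv.2 hAC₂
  have e1 : cr a.dir a.pt v = l₁ * cr a.dir a.pt C₁ := by
    rw [hl₁, cr_affine, hFA₁]; ring
  have e2 : cr a.dir a.pt v = l₂ * cr a.dir a.pt C₂ := by
    rw [hl₂, cr_affine, hFA₂]; ring
  have e3 : cr c.dir c.pt v = (1 - l₁) * cr c.dir c.pt A₁ := by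
    rw [hl₁, cr_affine, hGC₁]; ring
  have e4 : cr c.dir c.pt v = (1 - l₂) * cr c.dir c.pt A₂ := by
    rw [hl₂, cr_affine, hGC₂]; ring
  -- parameter formulas
  have fα₁ : cr c.dir c.pt A₁ = cr c.dir c.pt a.pt - t₁ * D := by
    rw [hA₁def, cr_param]; ring
  have fα₂ : cr c.dir c.pt A₂ = cr c.dir c.pt a.pt - t₂ * D := by
    rw [hA₂def, cr_param]; ring
  have fγ₁ : cr a.dir a.pt C₁ = cr a.dir a.pt c.pt + s₁ * D := by
    rw [hC₁def, cr_param]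
  have fγ₂ : cr a.dir a.pt C₂ = cr a.dir a.pt c.pt + s₂ * D := by
    rw [hC₂def, cr_param]
  -- key identity
  set P := cr a.dir a.pt v
  set Q := cr c.dir c.pt v
  set α₁ := cr c.dir c.pt A₁
  set α₂ := cr c.dir c.pt A₂
  set γ₁ := cr a.dir a.pt C₁
  set γ₂ := cr a.dir a.pt C₂
  have key : P * (γ₂ - γ₁) * α₁ * α₂ = Q * (α₁ - α₂) * γ₁ * γ₂ := by
    linear_combination (γ₂ * α₁ * α₂) * e1 - (γ₁ * α₁ * α₂) * e2 +
      (α₂ * γ₁ * γ₂) * e3 - (α₁ * γ₁ * γ₂) * e4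
  have key2 : D * (P * (s₂ - s₁) * α₁ * α₂) = D * (Q * (t₂ - t₁) * γ₁ * γ₂) := by
    have h5 : γ₂ - γ₁ = (s₂ - s₁) * D := by rw [fγ₁, fγ₂]; ring
    have h6 : α₁ - α₂ = (t₂ - t₁) * D := by rw [fα₁, fα₂]; ring
    rw [h5, h6] at key
    linear_combination key
  have key3 : P * (s₂ - s₁) * α₁ * α₂ = Q * (t₂ - t₁) * γ₁ * γ₂ :=
    mul_left_cancel₀ hD key2
  nlinarith [mul_pos (mul_pos (mul_pos hQ (sub_pos.mpr hlt)) hγ₁) hγ₂,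
    mul_pos (mul_pos hP hα₁) hα₂]
end

section
/- Let P be a convex polygon in ℝ² with at least 4 edges, arising as a bounded cell of a simple arrangement of lines. Then at most 2 edges of P are 'critical', where an edge is critical if it is adjacent to an unbounded cell of the subarrangement formed by the lines supporting the edges of P. Equivalently: in the arrangement of the k ≥ 4 lines supporting the edges of a convex k-gon cell, at most 2 of the polygon's edges border unbounded cells. -/
open Set

/-- An edge `e` of a cell `P` of the arrangement `L` is critical if the cell on
the other side of `e` (an unbounded cell having `e` in its closure) is
unbounded. -/
def CriticalEdge (L : Finset Line2) (P e : Set (ℝ × ℝ)) : Prop :=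
  IsEdge (closure P) e ∧
    ∃ C : Set (ℝ × ℝ), IsCell L C ∧ ¬ Bornology.IsBounded C ∧ e ⊆ closure C

/-! ### auxiliary algebra -/

/-- dot product in the plane -/
def dot2 (u v : ℝ × ℝ) : ℝ := u.1 * v.1 + u.2 * v.2

/-- cross product in the plane -/
def cr2 (u v : ℝ × ℝ) : ℝ := u.1 * v.2 - u.2 * v.1

/-- normal vector of a line -/
def nvec (ℓ : Line2) : ℝ × ℝ := (ℓ.a, ℓ.b)

lemma nvec_ne_zero (ℓ : Line2) : nvec ℓ ≠ 0 := by
  have := ℓ.nondeg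
  simpa [nvec, Prod.ext_iff] using this

/-- affine functional of a line -/
def fL (ℓ : Line2) (p : ℝ × ℝ) : ℝ := ℓ.a * p.1 + ℓ.b * p.2 - ℓ.c

lemma mem_carrier_iff (ℓ : Line2) (p : ℝ × ℝ) : p ∈ ℓ.carrier ↔ fL ℓ p = 0 := by
  simp [Line2.carrier, fL, sub_eq_zero]

lemma fL_cont (ℓ : Line2) : Continuous (fL ℓ) := by
  unfold fL; fun_prop

lemma fL_add_smul (ℓ : Line2) (p d : ℝ × ℝ) (t : ℝ) :
    fL ℓ (p + t • d) = fL ℓ p + t * dot2 (nvec ℓ) d := by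
  simp [fL, dot2, nvec, Prod.fst_add, Prod.snd_add, Prod.smul_fst, Prod.smul_snd, smul_eq_mul]
  ring

lemma fL_combo (ℓ : Line2) (p q : ℝ × ℝ) (a b : ℝ) (hab : a + b = 1) :
    fL ℓ (a • p + b • q) = a * fL ℓ p + b * fL ℓ q := by
  simp only [fL, Prod.fst_add, Prod.snd_add, Prod.smul_fst, Prod.smul_snd, smul_eq_mul]
  linear_combination ℓ.c * hab

lemma mem_linesUnion {L : Finset Line2} {p : ℝ × ℝ} :
    p ∈ linesUnion L ↔ ∃ ℓ ∈ L, fL ℓ p = 0 := by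
  simp [linesUnion, mem_carrier_iff]

/-- two vectors perpendicular to the same nonzero vector have zero cross product -/
lemma perp_perp {u v d : ℝ × ℝ} (hd : d ≠ 0) (h1 : dot2 u d = 0) (h2 : dot2 v d = 0) :
    cr2 u v = 0 := by
  have hc1 : cr2 u v * d.1 = v.2 * dot2 u d - u.2 * dot2 v d := by unfold cr2 dot2; ring
  have hc2 : cr2 u v * d.2 = u.1 * dot2 v d - v.1 * dot2 u d := by unfold cr2 dot2; ring
  rw [h1, h2] at hc1 hc2
  simp at hc1 hc2
  rcases hc1 with h | h
  · exact h
  · rcases hc2 with h' | h'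
    · exact h'
    · exact absurd (Prod.ext h h') hd

/-- a vector perpendicular to two non-parallel vectors is zero -/
lemma perp_two_zero {d1 d2 n : ℝ × ℝ} (h12 : cr2 d1 d2 ≠ 0)
    (h1 : dot2 n d1 = 0) (h2 : dot2 n d2 = 0) : n = 0 := by
  have hc1 : cr2 d1 d2 * n.1 = d2.2 * dot2 n d1 - d1.2 * dot2 n d2 := by unfold cr2 dot2; ring
  have hc2 : cr2 d1 d2 * n.2 = d1.1 * dot2 n d2 - d2.1 * dot2 n d1 := by unfold cr2 dot2; ring
  rw [h1, h2] at hc1 hc2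
  simp [h12] at hc1 hc2
  exact Prod.ext hc1 hc2

lemma cr2_zero_iff {u v : ℝ × ℝ} (hu : u ≠ 0) (h : cr2 u v = 0) : ∃ t : ℝ, v = t • u := by
  have hu' : u.1 ≠ 0 ∨ u.2 ≠ 0 := by
    by_contra hc
    push_neg at hc
    exact hu (Prod.ext hc.1 hc.2)
  rcases hu' with h1 | h2
  · refine ⟨v.1 / u.1, ?_⟩
    have : v.2 = v.1 / u.1 * u.2 := by
      field_simp
      unfold cr2 at h; linarith [h]
    exact Prod.ext (by rw [Prod.smul_fst, smul_eq_mul]; field_simp) (by simpa [Prod.smul_snd, smul_eq_mul] using this)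
  · refine ⟨v.2 / u.2, ?_⟩
    have : v.1 = v.2 / u.2 * u.1 := by
      field_simp
      unfold cr2 at h; linarith [h]
    exact Prod.ext (by simpa [Prod.smul_fst, smul_eq_mul] using this) (by rw [Prod.smul_snd, smul_eq_mul]; field_simp)

lemma dot2_smul_right (u : ℝ × ℝ) (t : ℝ) (v : ℝ × ℝ) :
    dot2 u (t • v) = t * dot2 u v := by
  simp [dot2, Prod.smul_fst, Prod.smul_snd, smul_eq_mul]; ring

/-! ### cells -/

def cellSet (L : Finset Line2) (x : ℝ × ℝ) : Set (ℝ × ℝ) :=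
  {p | ∀ ℓ ∈ L, 0 < fL ℓ x * fL ℓ p}

lemma cellSet_open (L : Finset Line2) (x : ℝ × ℝ) : IsOpen (cellSet L x) := by
  have : cellSet L x = ⋂ ℓ ∈ L, {p | 0 < fL ℓ x * fL ℓ p} := by
    ext p; simp [cellSet]
  rw [this]
  exact isOpen_biInter_finset fun ℓ _ =>
    isOpen_lt continuous_const (continuous_const.mul (fL_cont ℓ))

lemma cellSet_convex (L : Finset Line2) (x : ℝ × ℝ) : Convex ℝ (cellSet L x) := by
  intro p hp q hq a b ha hb hab
  intro ℓ hℓ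
  have h1 := hp ℓ hℓ
  have h2 := hq ℓ hℓ
  rw [fL_combo ℓ p q a b hab]
  have hr : fL ℓ x * (a * fL ℓ p + b * fL ℓ q)
      = a * (fL ℓ x * fL ℓ p) + b * (fL ℓ x * fL ℓ q) := by ring
  rw [hr]
  rcases lt_or_ge 0 a with hpa | hpa
  · nlinarith [mul_pos hpa h1, mul_nonneg hb (le_of_lt h2)]
  · have ha0 : a = 0 := le_antisymm hpa ha
    have hb1 : b = 1 := by linarith
    rw [ha0, hb1]; linarith

lemma mem_cellSet_self {L : Finset Line2} {x : ℝ × ℝ} (hx : x ∉ linesUnion L) :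
    x ∈ cellSet L x := by
  intro ℓ hℓ
  have : fL ℓ x ≠ 0 := by
    intro h; exact hx (mem_linesUnion.2 ⟨ℓ, hℓ, h⟩)
  exact mul_self_pos.2 this

lemma cellSet_subset_compl (L : Finset Line2) (x : ℝ × ℝ) :
    cellSet L x ⊆ (linesUnion L)ᶜ := by
  intro p hp hmem
  obtain ⟨ℓ, hℓ, h0⟩ := mem_linesUnion.1 hmem
  have := hp ℓ hℓ
  rw [h0, mul_zero] at this
  exact lt_irrefl 0 this

lemma cell_eq {L : Finset Line2} {x : ℝ × ℝ} (hx : x ∉ linesUnion L) :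
    connectedComponentIn (linesUnion L)ᶜ x = cellSet L x := by
  apply Subset.antisymm
  · intro p hp
    intro ℓ hℓ
    by_contra hle
    push_neg at hle
    have hpc : p ∈ (linesUnion L)ᶜ := connectedComponentIn_subset _ _ hp
    have hfp : fL ℓ p ≠ 0 := fun h => hpc (mem_linesUnion.2 ⟨ℓ, hℓ, h⟩)
    have hfx : fL ℓ x ≠ 0 := fun h => hx (mem_linesUnion.2 ⟨ℓ, hℓ, h⟩)
    have hprod : fL ℓ x * fL ℓ p < 0 :=
      lt_of_le_of_ne hle (by
        intro h
        rcases mul_eq_zero.1 h with h' | h'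
        exacts [hfx h', hfp h'])
    -- intermediate value on the connected component
    have hxmem : x ∈ connectedComponentIn (linesUnion L)ᶜ x :=
      mem_connectedComponentIn hx
    have hcont : ContinuousOn (fun q => fL ℓ x * fL ℓ q)
        (connectedComponentIn (linesUnion L)ᶜ x) :=
      (continuous_const.mul (fL_cont ℓ)).continuousOn
    have hpos : (0:ℝ) < fL ℓ x * fL ℓ x := mul_self_pos.2 hfx
    have hIcc : (0:ℝ) ∈ Icc (fL ℓ x * fL ℓ p) (fL ℓ x * fL ℓ x) :=
      ⟨le_of_lt hprod, le_of_lt hpos⟩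
    obtain ⟨z, hz, hz0⟩ := isPreconnected_connectedComponentIn.intermediate_value hp hxmem hcont hIcc
    have hzc : z ∈ (linesUnion L)ᶜ := connectedComponentIn_subset _ _ hz
    have : fL ℓ z = 0 := by
      rcases mul_eq_zero.1 hz0 with h' | h'
      · exact absurd h' hfx
      · exact h'
    exact hzc (mem_linesUnion.2 ⟨ℓ, hℓ, this⟩)
  · exact (cellSet_convex L x).isPreconnected.subset_connectedComponentIn
      (mem_cellSet_self hx) (cellSet_subset_compl L x)

lemma closure_cellSet_subset (L : Finset Line2) (x : ℝ × ℝ) :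
    closure (cellSet L x) ⊆ {p | ∀ ℓ ∈ L, 0 ≤ fL ℓ x * fL ℓ p} := by
  have hcl : IsClosed {p : ℝ × ℝ | ∀ ℓ ∈ L, 0 ≤ fL ℓ x * fL ℓ p} := by
    have : {p : ℝ × ℝ | ∀ ℓ ∈ L, 0 ≤ fL ℓ x * fL ℓ p}
        = ⋂ ℓ ∈ L, {p | 0 ≤ fL ℓ x * fL ℓ p} := by ext p; simp
    rw [this]
    exact isClosed_biInter fun ℓ _ =>
      isClosed_le continuous_const (continuous_const.mul (fL_cont ℓ))
  exact closure_minimal (fun p hp ℓ hℓ => le_of_lt (hp ℓ hℓ)) hcl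

example : ProperSpace (ℝ × ℝ) := inferInstance

/-! ### directions -/

lemma bounded_no_dir {L : Finset Line2} {x : ℝ × ℝ} (hx : x ∉ linesUnion L)
    (hb : Bornology.IsBounded (cellSet L x)) {d : ℝ × ℝ} (hd : d ≠ 0) :
    ∃ ℓ ∈ L, fL ℓ x * dot2 (nvec ℓ) d < 0 := by
  by_contra h
  push_neg at h
  have hray : ∀ t : ℝ, 0 ≤ t → x + t • d ∈ cellSet L x := by
    intro t ht ℓ hℓ
    rw [fL_add_smul]
    have h1 := mem_cellSet_self hx ℓ hℓ
    have h2 := h ℓ hℓ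
    nlinarith [mul_nonneg ht h2]
  obtain ⟨C, hC⟩ := isBounded_iff_forall_norm_le.1 hb
  have hdpos : 0 < ‖d‖ := norm_pos_iff.2 hd
  set t : ℝ := (|C| + ‖x‖ + 1) / ‖d‖ with ht
  have htpos : 0 ≤ t := by positivity
  have hmem := hray t htpos
  have hnorm := hC _ hmem
  have h1 : ‖t • d‖ ≤ ‖x + t • d‖ + ‖x‖ := by
    have := norm_sub_le (x + t • d) x
    simpa using this
  have h2 : ‖t • d‖ = t * ‖d‖ := by
    rw [norm_smul, Real.norm_eq_abs, abs_of_nonneg htpos]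
  have h3 : t * ‖d‖ = |C| + ‖x‖ + 1 := by
    rw [ht]; field_simp
  have : |C| + 1 ≤ C := by
    rw [h2, h3] at h1
    linarith
  have := le_abs_self C
  linarith

lemma unbounded_dir {L : Finset Line2} {x : ℝ × ℝ}
    (hub : ¬ Bornology.IsBounded (cellSet L x)) :
    ∃ d : ℝ × ℝ, d ≠ 0 ∧ ∀ ℓ ∈ L, 0 ≤ fL ℓ x * dot2 (nvec ℓ) d := by
  have hseq : ∀ n : ℕ, ∃ p, p ∈ cellSet L x ∧ (n : ℝ) + ‖x‖ + 1 ≤ ‖p‖ := by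
    intro n
    by_contra h
    push_neg at h
    exact hub (isBounded_iff_forall_norm_le.2
      ⟨(n : ℝ) + ‖x‖ + 1, fun p hp => (h p hp).le⟩)
  choose p hp hpn using hseq
  set v : ℕ → ℝ × ℝ := fun n => p n - x with hv
  have hvn : ∀ n : ℕ, (n : ℝ) + 1 ≤ ‖v n‖ := by
    intro n
    have h1 : ‖p n‖ ≤ ‖v n‖ + ‖x‖ := by
      have := norm_add_le (v n) x
      simpa [hv] using this
    have := hpn n
    linarith
  have hvpos : ∀ n, 0 < ‖v n‖ := fun n => lt_of_lt_of_le (by positivity) (hvn n)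
  set u : ℕ → ℝ × ℝ := fun n => ‖v n‖⁻¹ • v n with hu
  have husph : ∀ n, u n ∈ Metric.sphere (0 : ℝ × ℝ) 1 := by
    intro n
    simp only [Metric.mem_sphere, dist_zero_right, hu, norm_smul, Real.norm_eq_abs,
      abs_of_nonneg (inv_nonneg.2 (hvpos n).le)]
    exact inv_mul_cancel₀ (hvpos n).ne'
  obtain ⟨d, hdsph, φ, hφ, htend⟩ :=
    (isCompact_sphere (0 : ℝ × ℝ) 1).tendsto_subseq husph
  have hdne : d ≠ 0 := by
    intro h
    rw [h] at hdsph
    simp at hdsph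
  refine ⟨d, hdne, fun ℓ hℓ => ?_⟩
  set s : ℝ := fL ℓ x with hs
  set g : ℝ × ℝ → ℝ := fun q => s * dot2 (nvec ℓ) q with hg
  have hgcont : Continuous g := by
    have : g = fun q : ℝ × ℝ => s * ((nvec ℓ).1 * q.1 + (nvec ℓ).2 * q.2) := rfl
    rw [this]
    fun_prop
  have hglb : ∀ n, -(s^2) * ‖v n‖⁻¹ ≤ g (u n) := by
    intro n
    have hdotv : s * dot2 (nvec ℓ) (v n) ≥ -(s^2) := by
      have h1 : fL ℓ (p n) = fL ℓ x + dot2 (nvec ℓ) (v n) := by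
        have := fL_add_smul ℓ x (v n) 1
        simpa [hv] using this
      have h2 := hp n ℓ hℓ
      rw [h1] at h2
      nlinarith
    have : g (u n) = ‖v n‖⁻¹ * (s * dot2 (nvec ℓ) (v n)) := by
      simp only [hg, hu, dot2_smul_right]
      ring
    rw [this]
    have := inv_nonneg.2 (hvpos n).le
    nlinarith
  have h1 : Filter.Tendsto (fun k => g (u (φ k))) Filter.atTop (nhds (g d)) :=
    (hgcont.tendsto d).comp htend
  have h2 : Filter.Tendsto (fun k => -(s^2) * ‖v (φ k)‖⁻¹) Filter.atTop (nhds 0) := by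
    have hnt : Filter.Tendsto (fun k => ‖v (φ k)‖) Filter.atTop Filter.atTop := by
      rw [Filter.tendsto_atTop]
      intro b
      filter_upwards [Filter.eventually_ge_atTop ⌈b⌉₊] with k hk
      have hb : b ≤ (k : ℝ) := (Nat.ceil_le.1 hk)
      have h2 : (k : ℝ) ≤ (φ k : ℝ) := Nat.cast_le.2 hφ.le_apply
      have := hvn (φ k)
      linarith
    have := hnt.inv_tendsto_atTop
    have h3 := this.const_mul (-(s^2))
    simpa using h3
  have := le_of_tendsto_of_tendsto' h2 h1 (fun k => hglb (φ k))
  -- this : 0 ≤ g d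
  simpa [hg] using this

/-! ### the combinatorial core -/

/-- If two "bad directions" were parallel, two of the other normals would be
perpendicular to the same direction, contradicting non-parallelism. -/
lemma dpair {ni nj p q di dj : ℝ × ℝ}
    (hii : 0 < dot2 ni di) (hij : dot2 ni dj ≤ 0) (hjj : 0 < dot2 nj dj)
    (hpdi : dot2 p di ≤ 0) (hpdj : dot2 p dj ≤ 0)
    (hqdi : dot2 q di ≤ 0) (hqdj : dot2 q dj ≤ 0)
    (hpq : cr2 p q ≠ 0) : cr2 di dj ≠ 0 := by
  intro hpar
  have hdi : di ≠ 0 := by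
    intro h
    rw [h] at hii
    simp [dot2] at hii
  obtain ⟨t, htj⟩ := cr2_zero_iff hdi hpar
  have hij' : dot2 ni dj = t * dot2 ni di := by rw [htj, dot2_smul_right]
  have ht0 : t ≤ 0 := by nlinarith
  have hjj' : dot2 nj dj = t * dot2 nj di := by rw [htj, dot2_smul_right]
  have htneg : t < 0 := by
    rcases ht0.lt_or_eq with h | h
    · exact h
    · subst h; simp at hjj'; linarith
  have hpd0 : dot2 p di = 0 := by
    have : dot2 p dj = t * dot2 p di := by rw [htj, dot2_smul_right]
    nlinarith
  have hqd0 : dot2 q di = 0 := by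
    have : dot2 q dj = t * dot2 q di := by rw [htj, dot2_smul_right]
    nlinarith
  exact hpq (perp_perp hdi hpd0 hqd0)

/-- The core impossibility: three directions each "positive" against its own
normal and nonpositive against the three others, with pairwise nonparallel
normals, is impossible in the plane. -/
lemma core_impossible {n1 n2 n3 n4 d1 d2 d3 : ℝ × ℝ}
    (h14 : cr2 n1 n4 ≠ 0) (h24 : cr2 n2 n4 ≠ 0) (h34 : cr2 n3 n4 ≠ 0)
    (h11 : 0 < dot2 n1 d1) (h22 : 0 < dot2 n2 d2) (h33 : 0 < dot2 n3 d3)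
    (h21 : dot2 n2 d1 ≤ 0) (h31 : dot2 n3 d1 ≤ 0) (h41 : dot2 n4 d1 ≤ 0)
    (h12 : dot2 n1 d2 ≤ 0) (h32 : dot2 n3 d2 ≤ 0) (h42 : dot2 n4 d2 ≤ 0)
    (h13 : dot2 n1 d3 ≤ 0) (h23 : dot2 n2 d3 ≤ 0) (h43 : dot2 n4 d3 ≤ 0)
    (hn4 : n4 ≠ 0) : False := by
  have hd12 : cr2 d1 d2 ≠ 0 :=
    dpair h11 h12 h22 h31 h32 h41 h42 h34
  have hd32 : cr2 d3 d2 ≠ 0 :=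
    dpair h33 h32 h22 h13 h12 h43 h42 h14
  have hd31 : cr2 d3 d1 ≠ 0 :=
    dpair h33 h31 h11 h23 h21 h43 h41 h24
  set α : ℝ := cr2 d3 d2 / cr2 d1 d2 with hα
  set β : ℝ := cr2 d1 d3 / cr2 d1 d2 with hβ
  have expand : ∀ v : ℝ × ℝ, dot2 v d3 = α * dot2 v d1 + β * dot2 v d2 := by
    intro v
    rw [hα, hβ]
    field_simp
    unfold dot2 cr2
    ring
  have hαneg : α < 0 := by
    rcases lt_or_ge α 0 with h | h
    · exact h
    exfalso
    rcases lt_or_ge β 0 with hb | hb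
    · -- α ≥ 0, β < 0 : use n1
      have e1 := expand n1
      have t1 : 0 ≤ α * dot2 n1 d1 := mul_nonneg h (le_of_lt h11)
      have t2 : 0 ≤ β * dot2 n1 d2 := by nlinarith
      have hα0 : α * dot2 n1 d1 = 0 := by linarith
      have : α = 0 := by
        rcases mul_eq_zero.1 hα0 with h' | h'
        · exact h'
        · linarith
      rw [hα] at this
      exact hd32 (by
        rcases div_eq_zero_iff.1 this with h' | h'
        · exact h'
        · exact absurd h' hd12)
    · -- α ≥ 0, β ≥ 0 : use n3
      have e3 := expand n3
      have t1 : α * dot2 n3 d1 ≤ 0 := mul_nonpos_of_nonneg_of_nonpos h h31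
      have t2 : β * dot2 n3 d2 ≤ 0 := mul_nonpos_of_nonneg_of_nonpos hb h32
      linarith
  have hβneg : β < 0 := by
    rcases lt_or_ge β 0 with h | h
    · exact h
    exfalso
    -- β ≥ 0, α < 0 : use n2
    have e2 := expand n2
    have t1 : 0 ≤ α * dot2 n2 d1 := by nlinarith
    have t2 : 0 ≤ β * dot2 n2 d2 := mul_nonneg h (le_of_lt h22)
    have hβ0 : β * dot2 n2 d2 = 0 := by linarith
    have : β = 0 := by
      rcases mul_eq_zero.1 hβ0 with h' | h'
      · exact h'
      · linarith
    rw [hβ] at this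
    exact hd31 (by
      rcases div_eq_zero_iff.1 this with h' | h'
      · unfold cr2 at h' ⊢; linarith
      · exact absurd h' hd12)
  -- now use n4
  have e4 := expand n4
  have t1 : 0 ≤ α * dot2 n4 d1 := by nlinarith
  have t2 : 0 ≤ β * dot2 n4 d2 := by nlinarith
  have hz1 : dot2 n4 d1 = 0 := by
    have hα0 : α * dot2 n4 d1 = 0 := by linarith
    rcases mul_eq_zero.1 hα0 with h' | h'
    · exact absurd h' (ne_of_lt hαneg)
    · exact h'
  have hz2 : dot2 n4 d2 = 0 := by
    have hβ0 : β * dot2 n4 d2 = 0 := by linarith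
    rcases mul_eq_zero.1 hβ0 with h' | h'
    · exact absurd h' (ne_of_lt hβneg)
    · exact h'
  exact hn4 (perp_two_zero hd12 hz1 hz2)

/-! ### edges and lines -/

lemma dot2_comm (u v : ℝ × ℝ) : dot2 u v = dot2 v u := by unfold dot2; ring

lemma dot2_self_pos {n : ℝ × ℝ} (hn : n ≠ 0) : 0 < dot2 n n := by
  have h : n.1 ≠ 0 ∨ n.2 ≠ 0 := by
    by_contra hc; push_neg at hc; exact hn (Prod.ext hc.1 hc.2)
  unfold dot2
  rcases h with h | h
  · nlinarith [mul_self_pos.2 h, mul_self_nonneg n.2]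
  · nlinarith [mul_self_pos.2 h, mul_self_nonneg n.1]

lemma fL_base_ne {L : Finset Line2} {x : ℝ × ℝ} (hx : x ∉ linesUnion L)
    {ℓ : Line2} (hℓ : ℓ ∈ L) : fL ℓ x ≠ 0 :=
  fun h => hx (mem_linesUnion.2 ⟨ℓ, hℓ, h⟩)

lemma two_lines_eq {L : Finset Line2} (hL : IsSimpleArrangement L)
    {ℓ m : Line2} (hℓ : ℓ ∈ L) (hm : m ∈ L) {x y : ℝ × ℝ} (hxy : x ≠ y)
    (hxl : x ∈ ℓ.carrier) (hyl : y ∈ ℓ.carrier)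
    (hxm : x ∈ m.carrier) (hym : y ∈ m.carrier) : ℓ = m := by
  by_contra hne
  apply hL.1 ℓ hℓ m hm hne
  have hd1 : dot2 (nvec ℓ) (x - y) = 0 := by
    simp only [Line2.carrier, mem_setOf_eq] at hxl hyl
    simp only [dot2, nvec, Prod.fst_sub, Prod.snd_sub]
    linarith
  have hd2 : dot2 (nvec m) (x - y) = 0 := by
    simp only [Line2.carrier, mem_setOf_eq] at hxm hym
    simp only [dot2, nvec, Prod.fst_sub, Prod.snd_sub]
    linarith
  have hcr := perp_perp (sub_ne_zero.2 hxy) hd1 hd2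
  unfold cr2 nvec at hcr
  unfold Line2.Parallel
  dsimp at hcr
  linarith

lemma seg_in_carrier {ℓ : Line2} {u v : ℝ × ℝ} (hu : u ∈ ℓ.carrier) (hv : v ∈ ℓ.carrier) :
    segment ℝ u v ⊆ ℓ.carrier := by
  rintro p ⟨a, b, ha, hb, hab, rfl⟩
  rw [mem_carrier_iff] at hu hv ⊢
  rw [fL_combo ℓ u v a b hab, hu, hv]
  ring

lemma seg_sub_line {L : Finset Line2} {x y : ℝ × ℝ} (hxy : x ≠ y)
    (h : segment ℝ x y ⊆ linesUnion L) : ∃ ℓ ∈ L, segment ℝ x y ⊆ ℓ.carrier := by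
  by_contra hc
  push_neg at hc
  have hsub : ∀ ℓ ∈ L,
      Set.Subsingleton {t : ℝ | t ∈ Icc (0:ℝ) 1 ∧ x + t • (y - x) ∈ ℓ.carrier} := by
    intro ℓ hℓ t1 ht1 t2 ht2
    by_contra hne
    have hD1 : fL ℓ x + t1 * dot2 (nvec ℓ) (y - x) = 0 := by
      have := (mem_carrier_iff ℓ _).1 ht1.2
      rwa [fL_add_smul] at this
    have hD2 : fL ℓ x + t2 * dot2 (nvec ℓ) (y - x) = 0 := by
      have := (mem_carrier_iff ℓ _).1 ht2.2
      rwa [fL_add_smul] at this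
    have hdot : dot2 (nvec ℓ) (y - x) = 0 := by
      have hmul : (t1 - t2) * dot2 (nvec ℓ) (y - x) = 0 := by linarith
      rcases mul_eq_zero.1 hmul with h' | h'
      · exact absurd (by linarith : t1 = t2) hne
      · exact h'
    have hfx : fL ℓ x = 0 := by
      rw [hdot] at hD1; linarith
    apply hc ℓ hℓ
    rw [segment_eq_image']
    rintro p ⟨t, ht, rfl⟩
    rw [mem_carrier_iff, fL_add_smul, hdot, hfx]
    ring
  have hcov : (Icc (0:ℝ) 1) ⊆
      ⋃ ℓ ∈ L, {t : ℝ | t ∈ Icc (0:ℝ) 1 ∧ x + t • (y - x) ∈ ℓ.carrier} := by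
    intro t ht
    have hmem : x + t • (y - x) ∈ segment ℝ x y := by
      rw [segment_eq_image']; exact ⟨t, ht, rfl⟩
    have h2 := h hmem
    simp only [linesUnion, mem_iUnion, exists_prop] at h2
    obtain ⟨ℓ, hℓ, hcar⟩ := h2
    exact mem_iUnion₂.2 ⟨ℓ, hℓ, ht, hcar⟩
  have hfin : (Icc (0:ℝ) 1).Finite :=
    Set.Finite.subset (Set.Finite.biUnion L.finite_toSet
      (fun ℓ hℓ => (hsub ℓ hℓ).finite)) hcov
  exact (Set.Icc_infinite (by norm_num : (0:ℝ) < 1)) hfin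

lemma frontier_lines {L : Finset Line2} {x₀ : ℝ × ℝ} (hx₀ : x₀ ∉ linesUnion L) :
    frontier (closure (cellSet L x₀)) ⊆ linesUnion L := by
  intro pt hpt
  by_contra hnot
  have hcl : pt ∈ closure (cellSet L x₀) := by
    have h1 := hpt.1
    rwa [closure_closure] at h1
  have hge := closure_cellSet_subset L x₀ hcl
  have hmem : pt ∈ cellSet L x₀ := by
    intro ℓ hℓ
    refine lt_of_le_of_ne (hge ℓ hℓ) ?_
    intro h
    rcases mul_eq_zero.1 h.symm with h' | h'
    · exact fL_base_ne hx₀ hℓ h'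
    · exact hnot (mem_linesUnion.2 ⟨ℓ, hℓ, h'⟩)
  have : pt ∈ interior (closure (cellSet L x₀)) :=
    interior_maximal subset_closure (cellSet_open L x₀) hmem
  exact hpt.2 this

lemma carrier_mem_frontier {L : Finset Line2} {x₀ : ℝ × ℝ} (hx₀ : x₀ ∉ linesUnion L)
    {ℓ : Line2} (hℓ : ℓ ∈ L) {pt : ℝ × ℝ}
    (hpt : pt ∈ closure (cellSet L x₀)) (hon : pt ∈ ℓ.carrier) :
    pt ∈ frontier (closure (cellSet L x₀)) := by
  constructor
  · rwa [closure_closure]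
  intro hint
  rw [mem_interior_iff_mem_nhds, Metric.mem_nhds_iff] at hint
  obtain ⟨ε, hε, hball⟩ := hint
  set n : ℝ × ℝ := nvec ℓ with hn
  have hnn : 0 < dot2 n n := dot2_self_pos (nvec_ne_zero ℓ)
  set δ : ℝ := ε / (2 * (‖n‖ + 1)) with hδ
  have hδpos : 0 < δ := by positivity
  have hmem : ∀ σ : ℝ, |σ| = δ → pt + σ • n ∈ closure (cellSet L x₀) := by
    intro σ hσ
    apply hball
    rw [Metric.mem_ball, dist_eq_norm]
    have h1 : pt + σ • n - pt = σ • n := by abel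
    rw [h1, norm_smul, Real.norm_eq_abs, hσ]
    have hn0 : (0:ℝ) ≤ ‖n‖ := norm_nonneg n
    rw [hδ, div_mul_eq_mul_div, div_lt_iff₀ (by positivity)]
    nlinarith
  have hfpt : fL ℓ pt = 0 := (mem_carrier_iff ℓ pt).1 hon
  have h1 := closure_cellSet_subset L x₀ (hmem δ (abs_of_pos hδpos)) ℓ hℓ
  have h2 := closure_cellSet_subset L x₀
    (hmem (-δ) (by rw [abs_neg, abs_of_pos hδpos])) ℓ hℓ
  have e1 : fL ℓ (pt + δ • n) = δ * dot2 n n := by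
    rw [fL_add_smul, hfpt, ← hn]; ring
  have e2 : fL ℓ (pt + (-δ) • n) = -δ * dot2 n n := by
    rw [fL_add_smul, hfpt, ← hn]; ring
  rw [e1] at h1
  rw [e2] at h2
  have hs := fL_base_ne hx₀ hℓ
  have hz : fL ℓ x₀ * (δ * dot2 n n) = 0 := by nlinarith
  rcases mul_eq_zero.1 hz with h' | h'
  · exact hs h'
  · nlinarith

/-! ### uniqueness of the edge on a line, and sign agreement -/

lemma frontier_sub_closure {S : Set (ℝ × ℝ)} : frontier (closure S) ⊆ closure S := by
  intro z hz
  have := hz.1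
  rwa [closure_closure] at this

lemma edge_unique {L : Finset Line2} (hL : IsSimpleArrangement L) {x₀ : ℝ × ℝ}
    (hx₀ : x₀ ∉ linesUnion L) {e1 e2 : Set (ℝ × ℝ)} {ℓ : Line2} (hℓ : ℓ ∈ L)
    (he1 : IsEdge (closure (cellSet L x₀)) e1) (he2 : IsEdge (closure (cellSet L x₀)) e2)
    (h1 : e1 ⊆ ℓ.carrier) (h2 : e2 ⊆ ℓ.carrier) : e1 = e2 := by
  obtain ⟨x1, y1, hxy1, he1e, hf1, hmax1⟩ := he1
  obtain ⟨x2, y2, hxy2, he2e, hf2, hmax2⟩ := he2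
  set S := closure (cellSet L x₀) with hS
  have hfS : frontier S ⊆ S := frontier_sub_closure
  have hx1e : x1 ∈ e1 := by rw [he1e]; exact left_mem_segment ℝ x1 y1
  have hy1e : y1 ∈ e1 := by rw [he1e]; exact right_mem_segment ℝ x1 y1
  have hx2e : x2 ∈ e2 := by rw [he2e]; exact left_mem_segment ℝ x2 y2
  have hy2e : y2 ∈ e2 := by rw [he2e]; exact right_mem_segment ℝ x2 y2
  have hx1S : x1 ∈ S := hfS (hf1 hx1e)
  have hy1S : y1 ∈ S := hfS (hf1 hy1e)
  have hx2S : x2 ∈ S := hfS (hf2 hx2e)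
  have hy2S : y2 ∈ S := hfS (hf2 hy2e)
  have hx1c : x1 ∈ ℓ.carrier := h1 hx1e
  have hy1c : y1 ∈ ℓ.carrier := h1 hy1e
  have hx2c : x2 ∈ ℓ.carrier := h2 hx2e
  have hy2c : y2 ∈ ℓ.carrier := h2 hy2e
  set w : ℝ × ℝ := y1 - x1 with hw
  have hwne : w ≠ 0 := sub_ne_zero.2 (Ne.symm hxy1)
  have hdw : ∀ z : ℝ × ℝ, z ∈ ℓ.carrier → dot2 (z - x1) (nvec ℓ) = 0 := by
    intro z hz
    rw [mem_carrier_iff] at hz hx1c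
    simp only [dot2, nvec, Prod.fst_sub, Prod.snd_sub]
    unfold fL at hz hx1c
    linarith
  have hdww : dot2 w (nvec ℓ) = 0 := hdw y1 hy1c
  have hparam : ∀ z : ℝ × ℝ, z ∈ ℓ.carrier → ∃ t : ℝ, z = x1 + t • w := by
    intro z hz
    have hcr : cr2 w (z - x1) = 0 :=
      perp_perp (nvec_ne_zero ℓ) hdww (hdw z hz)
    obtain ⟨t, ht⟩ := cr2_zero_iff hwne hcr
    exact ⟨t, by rw [← ht]; abel⟩
  obtain ⟨t2, ht2⟩ := hparam x2 hx2c
  obtain ⟨t3, ht3⟩ := hparam y2 hy2c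
  set g : ℝ → ℝ × ℝ := fun t => x1 + t • w with hg
  have hg0 : g 0 = x1 := by simp [hg]
  have hg1 : g 1 = y1 := by simp [hg, hw]
  have hgt2 : g t2 = x2 := ht2.symm
  have hgt3 : g t3 = y2 := ht3.symm
  set a : ℝ := min (min 0 1) (min t2 t3) with ha
  set b : ℝ := max (max 0 1) (max t2 t3) with hb
  have ha0 : a ≤ 0 := le_trans (min_le_left _ _) (min_le_left _ _)
  have hb1 : 1 ≤ b := le_trans (le_max_right 0 1) (le_max_left _ _)
  have hat2 : a ≤ t2 := le_trans (min_le_right _ _) (min_le_left _ _)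
  have hat3 : a ≤ t3 := le_trans (min_le_right _ _) (min_le_right _ _)
  have hbt2 : t2 ≤ b := le_trans (le_max_left _ _) (le_max_right _ _)
  have hbt3 : t3 ≤ b := le_trans (le_max_right _ _) (le_max_right _ _)
  have hab : a < b := lt_of_le_of_lt ha0 (lt_of_lt_of_le one_pos hb1)
  have ha4 : a = 0 ∨ a = 1 ∨ a = t2 ∨ a = t3 := by
    rw [ha]
    rcases min_choice (min (0:ℝ) 1) (min t2 t3) with h | h <;> rw [h]
    · rcases min_choice (0:ℝ) 1 with h' | h' <;> rw [h'] <;> tauto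
    · rcases min_choice t2 t3 with h' | h' <;> rw [h'] <;> tauto
  have hb4 : b = 0 ∨ b = 1 ∨ b = t2 ∨ b = t3 := by
    rw [hb]
    rcases max_choice (max (0:ℝ) 1) (max t2 t3) with h | h <;> rw [h]
    · rcases max_choice (0:ℝ) 1 with h' | h' <;> rw [h'] <;> tauto
    · rcases max_choice t2 t3 with h' | h' <;> rw [h'] <;> tauto
  have hgS : ∀ t : ℝ, t = 0 ∨ t = 1 ∨ t = t2 ∨ t = t3 → g t ∈ S := by
    rintro t (rfl | rfl | rfl | rfl)
    · rw [hg0]; exact hx1S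
    · rw [hg1]; exact hy1S
    · rw [hgt2]; exact hx2S
    · rw [hgt3]; exact hy2S
  have hgaS : g a ∈ S := hgS a ha4
  have hgbS : g b ∈ S := hgS b hb4
  have hgc : ∀ t : ℝ, g t ∈ ℓ.carrier := by
    intro t
    rw [mem_carrier_iff, hg]
    rw [fL_add_smul]
    rw [(mem_carrier_iff ℓ x1).1 hx1c]
    rw [dot2_comm] at hdww
    rw [hdww]
    ring
  -- the big segment is contained in the frontier
  have hseg_sub : segment ℝ (g a) (g b) ⊆ frontier S := by
    intro p hp
    have hpS : p ∈ S := ((cellSet_convex L x₀).closure.segment_subset hgaS hgbS) hp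
    have hpc : p ∈ ℓ.carrier := seg_in_carrier (hgc a) (hgc b) hp
    exact carrier_mem_frontier hx₀ hℓ hpS hpc
  -- parametrized points lie in the big segment
  have hcombo : ∀ c1 c2 s t : ℝ, c1 + c2 = 1 →
      c1 • g s + c2 • g t = g (c1 * s + c2 * t) := by
    intro c1 c2 s t hsum
    have h1 : (c1 • g s + c2 • g t).1 = (g (c1 * s + c2 * t)).1 := by
      simp only [hg, Prod.fst_add, Prod.smul_fst, Prod.snd_add, Prod.smul_snd, smul_eq_mul]
      linear_combination x1.1 * hsum
    have h2 : (c1 • g s + c2 • g t).2 = (g (c1 * s + c2 * t)).2 := by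
      simp only [hg, Prod.fst_add, Prod.smul_fst, Prod.snd_add, Prod.smul_snd, smul_eq_mul]
      linear_combination x1.2 * hsum
    exact Prod.ext h1 h2
  have hgmem : ∀ r : ℝ, a ≤ r → r ≤ b → g r ∈ segment ℝ (g a) (g b) := by
    intro r har hrb
    set θ : ℝ := (r - a) / (b - a) with hθ
    have hba : 0 < b - a := by linarith
    have hθ0 : 0 ≤ θ := div_nonneg (by linarith) hba.le
    have hθ1 : θ ≤ 1 := by
      rw [hθ, div_le_one hba]; linarith
    refine ⟨1 - θ, θ, by linarith, hθ0, by ring, ?_⟩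
    rw [hcombo (1 - θ) θ a b (by ring)]
    congr 1
    rw [hθ]
    field_simp
    ring
  have hsub1 : e1 ⊆ segment ℝ (g a) (g b) := by
    rw [he1e]
    rintro p ⟨c1, c2, hc1, hc2, hsum, rfl⟩
    rw [← hg0, ← hg1, hcombo c1 c2 0 1 hsum]
    exact hgmem _ (by nlinarith) (by nlinarith)
  have hsub2 : e2 ⊆ segment ℝ (g a) (g b) := by
    rw [he2e]
    rintro p ⟨c1, c2, hc1, hc2, hsum, rfl⟩
    rw [← hgt2, ← hgt3, hcombo c1 c2 t2 t3 hsum]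
    exact hgmem _ (by nlinarith) (by nlinarith)
  obtain ⟨u, v, huv⟩ : ∃ u v : ℝ × ℝ, segment ℝ (g a) (g b) = segment ℝ u v :=
    ⟨g a, g b, rfl⟩
  rw [huv] at hsub1 hsub2 hseg_sub
  have heq1 := hmax1 u v hsub1 hseg_sub
  have heq2 := hmax2 u v hsub2 hseg_sub
  rw [← heq1, heq2]

lemma sign_agree {L : Finset Line2} (hL : IsSimpleArrangement L) {x₀ xC : ℝ × ℝ}
    (hx₀ : x₀ ∉ linesUnion L) (hxC : xC ∉ linesUnion L)
    {x y : ℝ × ℝ} (hxy : x ≠ y) {ℓ : Line2} (hℓ : ℓ ∈ L)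
    (hseg : segment ℝ x y ⊆ ℓ.carrier)
    (hP : segment ℝ x y ⊆ closure (cellSet L x₀))
    (hC : segment ℝ x y ⊆ closure (cellSet L xC))
    {m : Line2} (hm : m ∈ L) (hmℓ : m ≠ ℓ) :
    0 < fL m x₀ * fL m xC := by
  set q : ℝ × ℝ := (1/2 : ℝ) • x + (1/2 : ℝ) • y with hq
  have hqseg : q ∈ segment ℝ x y := ⟨1/2, 1/2, by norm_num, by norm_num, by norm_num, rfl⟩
  have hfq : fL m q = 1/2 * fL m x + 1/2 * fL m y :=
    fL_combo m x y (1/2) (1/2) (by norm_num)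
  have hxseg : x ∈ segment ℝ x y := left_mem_segment ℝ x y
  have hyseg : y ∈ segment ℝ x y := right_mem_segment ℝ x y
  have hsP := fL_base_ne hx₀ hm
  have hsC := fL_base_ne hxC hm
  have hfq0 : fL m q ≠ 0 := by
    intro h0
    have hx1 := closure_cellSet_subset L x₀ (hP hxseg) m hm
    have hy1 := closure_cellSet_subset L x₀ (hP hyseg) m hm
    have hxy0 : fL m y = - fL m x := by
      rw [hfq] at h0; linarith
    have h5 : fL m x₀ * fL m y = -(fL m x₀ * fL m x) := by rw [hxy0]; ring
    have hfx : fL m x = 0 := by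
      have hz : fL m x₀ * fL m x = 0 := by linarith
      rcases mul_eq_zero.1 hz with h' | h'
      · exact absurd h' hsP
      · exact h'
    have hfy : fL m y = 0 := by rw [hxy0, hfx]; ring
    exact hmℓ (two_lines_eq hL hm hℓ hxy
      ((mem_carrier_iff m x).2 hfx) ((mem_carrier_iff m y).2 hfy)
      (hseg hxseg) (hseg hyseg))
  have hqP := closure_cellSet_subset L x₀ (hP hqseg) m hm
  have hqC := closure_cellSet_subset L xC (hC hqseg) m hm
  have h1 : 0 < fL m x₀ * fL m q :=
    lt_of_le_of_ne hqP (fun h => (mul_ne_zero hsP hfq0) h.symm)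
  have h2 : 0 < fL m xC * fL m q :=
    lt_of_le_of_ne hqC (fun h => (mul_ne_zero hsC hfq0) h.symm)
  nlinarith [mul_pos h1 h2, mul_self_pos.2 hfq0]

/-! ### assembling the proof -/

lemma dot2_smul_left (t : ℝ) (u v : ℝ × ℝ) : dot2 (t • u) v = t * dot2 u v := by
  simp [dot2, Prod.smul_fst, Prod.smul_snd, smul_eq_mul]; ring

lemma dot2_neg_left (u v : ℝ × ℝ) : dot2 (-u) v = -dot2 u v := by
  simp [dot2]; ring

lemma cr2_neg_neg (u v : ℝ × ℝ) : cr2 (-u) (-v) = cr2 u v := by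
  simp [cr2]

lemma cr2_smul_smul (s t : ℝ) (u v : ℝ × ℝ) :
    cr2 (s • u) (t • v) = s * t * cr2 u v := by
  simp [cr2, Prod.smul_fst, Prod.smul_snd, smul_eq_mul]; ring

lemma cr2_nvec_ne {L : Finset Line2} (hL : IsSimpleArrangement L)
    {ℓ m : Line2} (hℓ : ℓ ∈ L) (hm : m ∈ L) (hne : ℓ ≠ m) :
    cr2 (nvec ℓ) (nvec m) ≠ 0 := by
  intro h
  apply hL.1 ℓ hℓ m hm hne
  unfold cr2 nvec at h
  unfold Line2.Parallel
  dsimp at h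
  linarith

/-- Let `P` be a bounded convex cell of a simple arrangement `L` of at least 4
lines, each line of `L` supporting an edge of `P` (so `L` is the arrangement of
the `≥ 4` lines supporting the edges of the convex polygon `P`, which hence has
at least 4 edges).  Then at most 2 edges of `P` are critical. -/
theorem stmt17 (L : Finset Line2) (hL : IsSimpleArrangement L) (hn : 4 ≤ L.card)
    (P : Set (ℝ × ℝ)) (hP : IsCell L P) (hPconv : Convex ℝ P)
    (hPb : Bornology.IsBounded P)
    (hsupp : ∀ ℓ ∈ L, ∃ e : Set (ℝ × ℝ), IsEdge (closure P) e ∧ e ⊆ ℓ.carrier) :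
    {e : Set (ℝ × ℝ) | CriticalEdge L P e}.ncard ≤ 2 := by
  classical
  obtain ⟨x₀, hx₀, hPeq⟩ := hP
  have hPcell : P = cellSet L x₀ := by rw [hPeq]; exact cell_eq hx₀
  have hPb' : Bornology.IsBounded (cellSet L x₀) := by rwa [hPcell] at hPb
  by_contra hcard
  push_neg at hcard
  have h3 : 3 ≤ {e : Set (ℝ × ℝ) | CriticalEdge L P e}.ncard := hcard
  obtain ⟨T, hTsub, hT3⟩ := Set.exists_subset_card_eq h3
  obtain ⟨e1, e2, e3, h12, h13, h23, hTeq⟩ := Set.ncard_eq_three.1 hT3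
  have hc1 : CriticalEdge L P e1 := hTsub (by rw [hTeq]; simp)
  have hc2 : CriticalEdge L P e2 := hTsub (by rw [hTeq]; simp)
  have hc3 : CriticalEdge L P e3 := hTsub (by rw [hTeq]; simp)
  -- key extraction for a critical edge
  have key : ∀ e : Set (ℝ × ℝ), CriticalEdge L P e → ∃ ℓ, ℓ ∈ L ∧ e ⊆ ℓ.carrier ∧
      ∃ d : ℝ × ℝ, d ≠ 0 ∧ ∀ m ∈ L, m ≠ ℓ → 0 ≤ fL m x₀ * dot2 (nvec m) d := by
    rintro e ⟨hedge, C, ⟨xC, hxC, hCeq⟩, hCub, hCcl⟩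
    have hCcell : C = cellSet L xC := by rw [hCeq]; exact cell_eq hxC
    rw [hPcell] at hedge
    rw [hCcell] at hCub hCcl
    obtain ⟨x, y, hxy, heseg, hefr, hemax⟩ := hedge
    have hsegfr : segment ℝ x y ⊆ frontier (closure (cellSet L x₀)) := by
      rw [← heseg]; exact hefr
    have hsegP : segment ℝ x y ⊆ closure (cellSet L x₀) :=
      fun p hp => frontier_sub_closure (hsegfr hp)
    have hsegC : segment ℝ x y ⊆ closure (cellSet L xC) := by
      rw [← heseg]; exact hCcl
    obtain ⟨ℓ, hℓ, hsegl⟩ := seg_sub_line hxy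
      (fun p hp => frontier_lines hx₀ (hsegfr hp))
    refine ⟨ℓ, hℓ, by rw [heseg]; exact hsegl, ?_⟩
    obtain ⟨d, hd0, hd⟩ := unbounded_dir hCub
    refine ⟨d, hd0, fun m hm hmℓ => ?_⟩
    have hsg : 0 < fL m x₀ * fL m xC :=
      sign_agree hL hx₀ hxC hxy hℓ hsegl hsegP hsegC hm hmℓ
    have hdm := hd m hm
    nlinarith [mul_nonneg hsg.le hdm, mul_self_pos.2 (fL_base_ne hxC hm)]
  obtain ⟨ℓ1, hℓ1, hsub1, d1, hd1, hkey1⟩ := key e1 hc1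
  obtain ⟨ℓ2, hℓ2, hsub2, d2, hd2, hkey2⟩ := key e2 hc2
  obtain ⟨ℓ3, hℓ3, hsub3, d3, hd3, hkey3⟩ := key e3 hc3
  -- edges of the cell on the same line coincide, so the three lines are distinct
  have hedge1 : IsEdge (closure (cellSet L x₀)) e1 := by
    have := hc1.1; rwa [hPcell] at this
  have hedge2 : IsEdge (closure (cellSet L x₀)) e2 := by
    have := hc2.1; rwa [hPcell] at this
  have hedge3 : IsEdge (closure (cellSet L x₀)) e3 := by
    have := hc3.1; rwa [hPcell] at this
  have hl12 : ℓ1 ≠ ℓ2 := by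
    intro h
    exact h12 (edge_unique hL hx₀ hℓ1 hedge1 hedge2 hsub1 (by rw [h]; exact hsub2))
  have hl13 : ℓ1 ≠ ℓ3 := by
    intro h
    exact h13 (edge_unique hL hx₀ hℓ1 hedge1 hedge3 hsub1 (by rw [h]; exact hsub3))
  have hl23 : ℓ2 ≠ ℓ3 := by
    intro h
    exact h23 (edge_unique hL hx₀ hℓ2 hedge2 hedge3 hsub2 (by rw [h]; exact hsub3))
  -- a fourth line
  obtain ⟨ℓ4, hℓ4, hne4⟩ : ∃ ℓ4 ∈ L, ℓ4 ∉ ({ℓ1, ℓ2, ℓ3} : Finset Line2) := by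
    by_contra h
    push_neg at h
    have hsub : L ⊆ ({ℓ1, ℓ2, ℓ3} : Finset Line2) := h
    have hle := Finset.card_le_card hsub
    have c1 := Finset.card_insert_le ℓ1 ({ℓ2, ℓ3} : Finset Line2)
    have c2 := Finset.card_insert_le ℓ2 ({ℓ3} : Finset Line2)
    have c3 : ({ℓ3} : Finset Line2).card = 1 := Finset.card_singleton _
    omega
  have h41 : ℓ1 ≠ ℓ4 := by intro h; exact hne4 (by rw [← h]; simp)
  have h42 : ℓ2 ≠ ℓ4 := by intro h; exact hne4 (by rw [← h]; simp)
  have h43 : ℓ3 ≠ ℓ4 := by intro h; exact hne4 (by rw [← h]; simp)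
  -- the scaled inward normals, negated to fit the core lemma
  set v : Line2 → ℝ × ℝ := fun m => fL m x₀ • nvec m with hv
  have hvdot : ∀ (m : Line2) (d : ℝ × ℝ), dot2 (-(v m)) d = -(fL m x₀ * dot2 (nvec m) d) := by
    intro m d
    rw [hv]
    rw [dot2_neg_left, dot2_smul_left]
  -- strictness against the own line
  have hstrict : ∀ (ℓ : Line2), ℓ ∈ L → ∀ (d : ℝ × ℝ), d ≠ 0 →
      (∀ m ∈ L, m ≠ ℓ → 0 ≤ fL m x₀ * dot2 (nvec m) d) →
      0 < dot2 (-(v ℓ)) d := by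
    intro ℓ hℓ d hd0 hkey
    obtain ⟨m, hm, hlt⟩ := bounded_no_dir hx₀ hPb' hd0
    by_cases hmℓ : m = ℓ
    · subst hmℓ
      rw [hvdot]
      linarith
    · exact absurd hlt (not_lt.2 (hkey m hm hmℓ))
  have h11 : 0 < dot2 (-(v ℓ1)) d1 := hstrict ℓ1 hℓ1 d1 hd1 hkey1
  have h22 : 0 < dot2 (-(v ℓ2)) d2 := hstrict ℓ2 hℓ2 d2 hd2 hkey2
  have h33 : 0 < dot2 (-(v ℓ3)) d3 := hstrict ℓ3 hℓ3 d3 hd3 hkey3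
  have hoff : ∀ (ℓ : Line2) (d : ℝ × ℝ),
      (∀ m ∈ L, m ≠ ℓ → 0 ≤ fL m x₀ * dot2 (nvec m) d) →
      ∀ m ∈ L, m ≠ ℓ → dot2 (-(v m)) d ≤ 0 := by
    intro ℓ d hkey m hm hmℓ
    rw [hvdot]
    linarith [hkey m hm hmℓ]
  -- cross products nonzero
  have hcr : ∀ (p q : Line2), p ∈ L → q ∈ L → p ≠ q → cr2 (-(v p)) (-(v q)) ≠ 0 := by
    intro p q hp hq hpq
    rw [cr2_neg_neg, hv]
    dsimp only
    rw [cr2_smul_smul]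
    exact mul_ne_zero (mul_ne_zero (fL_base_ne hx₀ hp) (fL_base_ne hx₀ hq))
      (cr2_nvec_ne hL hp hq hpq)
  have hn4 : -(v ℓ4) ≠ 0 := by
    rw [hv]
    dsimp only
    rw [← neg_smul]
    exact smul_ne_zero (neg_ne_zero.2 (fL_base_ne hx₀ hℓ4)) (nvec_ne_zero ℓ4)
  exact core_impossible
    (hcr ℓ1 ℓ4 hℓ1 hℓ4 h41) (hcr ℓ2 ℓ4 hℓ2 hℓ4 h42) (hcr ℓ3 ℓ4 hℓ3 hℓ4 h43)
    h11 h22 h33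
    (hoff ℓ1 d1 hkey1 ℓ2 hℓ2 hl12.symm) (hoff ℓ1 d1 hkey1 ℓ3 hℓ3 hl13.symm)
    (hoff ℓ1 d1 hkey1 ℓ4 hℓ4 (Ne.symm h41))
    (hoff ℓ2 d2 hkey2 ℓ1 hℓ1 hl12) (hoff ℓ2 d2 hkey2 ℓ3 hℓ3 hl23.symm)
    (hoff ℓ2 d2 hkey2 ℓ4 hℓ4 (Ne.symm h42))
    (hoff ℓ3 d3 hkey3 ℓ1 hℓ1 hl13) (hoff ℓ3 d3 hkey3 ℓ2 hℓ2 hl23)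
    (hoff ℓ3 d3 hkey3 ℓ4 hℓ4 (Ne.symm h43))
    hn4
end
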